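/- arXiv:1910.04021 — 9 statements merged into one kernel-verified Lean document; each statement's English description precedes it below -/
import Mathlib

section
/- For every u ∈ [0,V), the set I_u = {ρ ∈ [0,R] : f(ρ) = φ_u(ρ)} is nonempty and compact, its minimum ρ̌_u and maximum ρ̂_u satisfy 0 < ρ̌_u < ρ̂_u < R, and f(ρ) > φ_u(ρ) holds if and only if ρ ∈ (ρ̌_u, ρ̂_u). -/
open Set

/-- For a strictly concave function, at an interior point of a segment the value
exceeds the min of the endpoint values. -/
lemma strictConcave_min_lt {s : Set ℝ} {g : ℝ → ℝ} (hg : StrictConcaveOn ℝ s g)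
    {a b x : ℝ} (ha : a ∈ s) (hb : b ∈ s) (h1 : a < x) (h2 : x < b) :
    min (g a) (g b) < g x := by
  have hab : a < b := h1.trans h2
  have hba : 0 < b - a := by linarith
  set t := (b - x) / (b - a) with hht
  set t' := (x - a) / (b - a) with hht'
  have ht : 0 < t := div_pos (by linarith) hba
  have ht' : 0 < t' := div_pos (by linarith) hba
  have hts : t + t' = 1 := by
    rw [hht, hht', ← add_div, div_eq_one_iff_eq hba.ne']
    ring
  have hx : t • a + t' • b = x := by
    rw [smul_eq_mul, smul_eq_mul, hht, hht']
    field_simp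
    ring
  have hlt := hg.2 ha hb (ne_of_lt hab) ht ht' hts
  rw [hx] at hlt
  simp only [smul_eq_mul] at hlt
  have heqa : t * g a + t' * g a = g a := by rw [← add_mul, hts, one_mul]
  have heqb : t * g b + t' * g b = g b := by rw [← add_mul, hts, one_mul]
  rcases le_total (g a) (g b) with h | h
  · rw [min_eq_left h]
    have hp : t' * g a ≤ t' * g b := mul_le_mul_of_nonneg_left h ht'.le
    linarith
  · rw [min_eq_right h]
    have hp : t * g b ≤ t * g a := mul_le_mul_of_nonneg_left h ht.le
    linarith

theorem stmt_3
    (R β B α V : ℝ) (f v f' f'' v' : ℝ → ℝ)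
    (hR : 0 < R) (hβ : 0 < β) (hB : 0 < B) (hα : α ∈ Set.Ioo (0:ℝ) 1)
    (hf0 : f 0 = 0) (hfR : f R = 0)
    (hfv : ∀ ρ ∈ Set.Icc (0:ℝ) R, f ρ = ρ * v ρ)
    (hfd1 : ∀ ρ ∈ Set.Icc (0:ℝ) R, HasDerivAt f (f' ρ) ρ)
    (hfd2 : ∀ ρ ∈ Set.Icc (0:ℝ) R, HasDerivAt f' (f'' ρ) ρ)
    (hfc : ContinuousOn f'' (Set.Icc (0:ℝ) R))
    (hconc : ∀ ρ ∈ Set.Icc (0:ℝ) R, -B ≤ f'' ρ ∧ f'' ρ ≤ -β)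
    (hvd : ∀ ρ ∈ Set.Icc (0:ℝ) R, HasDerivAt v (v' ρ) ρ)
    (hv'neg : ∀ ρ ∈ Set.Ioo (0:ℝ) R, v' ρ < 0)
    (hvnn : ∀ ρ ∈ Set.Icc (0:ℝ) R, 0 ≤ v ρ)
    (hV : V = v 0)
    (rt : ℝ → ℝ)
    (hrt : ∀ u ∈ Set.Icc (0:ℝ) V, rt u ∈ Set.Icc (0:ℝ) (α * R) ∧
      HasDerivAt (fun x => α * f (x / α)) u (rt u))
    :
    ∀ u ∈ Set.Ico (0:ℝ) V,
      ({ρ : ℝ | ρ ∈ Set.Icc (0:ℝ) R ∧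
          f ρ = α * f (rt u / α) + u * (ρ - rt u)}).Nonempty ∧
      IsCompact {ρ : ℝ | ρ ∈ Set.Icc (0:ℝ) R ∧
          f ρ = α * f (rt u / α) + u * (ρ - rt u)} ∧
      ∃ rc rh : ℝ,
        IsLeast {ρ : ℝ | ρ ∈ Set.Icc (0:ℝ) R ∧
            f ρ = α * f (rt u / α) + u * (ρ - rt u)} rc ∧
        IsGreatest {ρ : ℝ | ρ ∈ Set.Icc (0:ℝ) R ∧
            f ρ = α * f (rt u / α) + u * (ρ - rt u)} rh ∧
        0 < rc ∧ rc < rh ∧ rh < R ∧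
        ∀ ρ ∈ Set.Icc (0:ℝ) R,
          (α * f (rt u / α) + u * (ρ - rt u) < f ρ ↔ ρ ∈ Set.Ioo rc rh) := by
  intro u hu
  obtain ⟨hu0, huV⟩ := hu
  obtain ⟨hα0, hα1⟩ := hα
  have h0mem : (0:ℝ) ∈ Icc 0 R := ⟨le_rfl, hR.le⟩
  have hRmem : R ∈ Icc (0:ℝ) R := ⟨hR.le, le_rfl⟩
  -- continuity of f and f'
  have hfc1 : ContinuousOn f (Icc 0 R) :=
    fun x hx => ((hfd1 x hx).continuousAt).continuousWithinAt
  have hf'c1 : ContinuousOn f' (Icc 0 R) :=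
    fun x hx => ((hfd2 x hx).continuousAt).continuousWithinAt
  -- f' is strictly antitone on [0,R]
  have hanti : StrictAntiOn f' (Icc 0 R) := by
    apply strictAntiOn_of_deriv_neg (convex_Icc 0 R) hf'c1
    intro x hx
    rw [interior_Icc] at hx
    rw [(hfd2 x (Ioo_subset_Icc_self hx)).deriv]
    linarith [(hconc x (Ioo_subset_Icc_self hx)).2]
  -- f' 0 = v 0
  have hf'0 : f' 0 = v 0 := by
    have hud : UniqueDiffWithinAt ℝ (Icc (0:ℝ) R) 0 := (uniqueDiffOn_Icc hR) 0 h0mem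
    have h1 : HasDerivWithinAt f (f' 0) (Icc 0 R) 0 := (hfd1 0 h0mem).hasDerivWithinAt
    have h2' : HasDerivAt (fun ρ => ρ * v ρ) (1 * v 0 + 0 * v' 0) 0 :=
      (hasDerivAt_id 0).mul (hvd 0 h0mem)
    have h2 : HasDerivWithinAt f (1 * v 0 + 0 * v' 0) (Icc 0 R) 0 :=
      (h2'.hasDerivWithinAt).congr (fun y hy => hfv y hy) (hfv 0 h0mem)
    have e1 := h1.derivWithin hud
    have e2 := h2.derivWithin hud
    rw [e1] at e2
    rw [e2]; ring
  -- MVT : some c in (0,R) with f' c = 0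
  obtain ⟨c, hc, hslopec⟩ := exists_hasDerivAt_eq_slope f f' hR hfc1
    (fun x hx => hfd1 x (Ioo_subset_Icc_self hx))
  have hf'c0 : f' c = 0 := by rw [hslopec, hfR, hf0]; ring
  have hcmem : c ∈ Icc (0:ℝ) R := Ioo_subset_Icc_self hc
  have hf'Rneg : f' R < 0 := by
    have := hanti hcmem hRmem hc.2
    linarith
  have hVf'0 : V = f' 0 := by rw [hV, hf'0]
  -- the tangency point y = rt u / α
  have huIcc : u ∈ Icc 0 V := ⟨hu0, huV.le⟩
  obtain ⟨hrtmem, hrtd⟩ := hrt u huIcc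
  set y := rt u / α with hy
  have hyIcc : y ∈ Icc (0:ℝ) R := by
    constructor
    · exact div_nonneg hrtmem.1 hα0.le
    · rw [hy, div_le_iff₀ hα0]; linarith [hrtmem.2]
  have hyd : HasDerivAt (fun x => α * f (x / α)) (α * (f' y * (1/α))) (rt u) := by
    have h1 : HasDerivAt (fun x : ℝ => x / α) (1/α) (rt u) := by
      simpa using (hasDerivAt_id (rt u)).div_const α
    exact ((hfd1 y hyIcc).comp (rt u) h1).const_mul α
  have hf'y : f' y = u := by
    have h := hyd.unique hrtd
    field_simp at h
    linarith
  have hy0 : 0 < y := by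
    rcases lt_or_eq_of_le hyIcc.1 with h | h
    · exact h
    · exfalso; rw [← h] at hf'y; rw [hVf'0, hf'y] at huV; linarith
  have hyR : y < R := by
    rcases lt_or_eq_of_le hyIcc.2 with h | h
    · exact h
    · exfalso; rw [h] at hf'y; linarith
  have hrty : rt u = α * y := by rw [hy]; field_simp
  have hrt0 : 0 < rt u := by rw [hrty]; positivity
  have hrtR : rt u < R := by rw [hrty]; nlinarith
  have hrtIcc : rt u ∈ Icc (0:ℝ) R := ⟨hrt0.le, hrtR.le⟩
  -- the gap function g
  set g : ℝ → ℝ := fun ρ => f ρ - (α * f y + u * (ρ - rt u)) with hgdef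
  have hgval : ∀ ρ, g ρ = f ρ - (α * f y + u * (ρ - rt u)) := fun ρ => rfl
  have hiff : ∀ ρ, (f ρ = α * f y + u * (ρ - rt u)) ↔ g ρ = 0 := by
    intro ρ; rw [hgval]; constructor <;> intro h <;> linarith
  have hgd1 : ∀ ρ ∈ Icc (0:ℝ) R, HasDerivAt g (f' ρ - u) ρ := by
    intro ρ hρ
    have h2 : HasDerivAt (fun x : ℝ => α * f y + u * (x - rt u)) u ρ := by
      simpa using (((hasDerivAt_id ρ).sub_const (rt u)).const_mul u).const_add (α * f y)
    exact (hfd1 ρ hρ).sub h2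
  have hgc : ContinuousOn g (Icc 0 R) :=
    fun x hx => ((hgd1 x hx).continuousAt).continuousWithinAt
  have hgsc : StrictConcaveOn ℝ (Icc 0 R) g := by
    apply strictConcaveOn_of_deriv2_neg (convex_Icc 0 R) hgc
    intro x hx
    rw [interior_Icc] at hx
    have hxI : x ∈ Icc (0:ℝ) R := Ioo_subset_Icc_self hx
    have hev : deriv g =ᶠ[nhds x] fun ρ => f' ρ - u := by
      filter_upwards [Ioo_mem_nhds hx.1 hx.2] with z hz
      exact (hgd1 z (Ioo_subset_Icc_self hz)).deriv
    have h2 : HasDerivAt (fun ρ => f' ρ - u) (f'' x) x := (hfd2 x hxI).sub_const u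
    have hit : deriv^[2] g x = f'' x := by
      simp only [Function.iterate_succ, Function.iterate_zero, Function.comp_apply, id_eq]
      rw [hev.deriv_eq, h2.deriv]
    rw [hit]
    linarith [(hconc x hxI).2]
  -- key sign facts
  have hgrt : 0 < g (rt u) := by
    have hne : y ≠ (0:ℝ) := hy0.ne'
    have h1α : (0:ℝ) < 1 - α := by linarith
    have habs : α + (1 - α) = 1 := by ring
    have hlt := hgsc.2 hyIcc h0mem hne hα0 h1α habs
    simp only [smul_eq_mul, mul_zero, add_zero] at hlt
    -- hlt : α * g y + (1 - α) * g 0 < g (α * y)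
    have e1 : g y = (1 - α) * (f y - u * y) := by rw [hgval, hrty]; ring
    have e2 : g 0 = -α * (f y - u * y) := by rw [hgval, hf0, hrty]; ring
    rw [e1, e2] at hlt
    rw [hrty]
    nlinarith
  have hfyuy : u * y < f y := by
    obtain ⟨c', hc', hslope'⟩ := exists_hasDerivAt_eq_slope f f' hy0
      (hfc1.mono (Icc_subset_Icc le_rfl hyIcc.2))
      (fun x hx => hfd1 x ⟨hx.1.le, hx.2.le.trans hyIcc.2⟩)
    have hc'mem : c' ∈ Icc (0:ℝ) R := ⟨hc'.1.le, hc'.2.le.trans hyIcc.2⟩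
    have hgt : f' y < f' c' := hanti hc'mem hyIcc hc'.2
    rw [hslope', hf0] at hgt
    rw [hf'y] at hgt
    have : u * y < (f y - 0) / (y - 0) * y := by
      apply mul_lt_mul_of_pos_right hgt hy0
    calc u * y < (f y - 0) / (y - 0) * y := this
      _ = f y := by rw [sub_zero, sub_zero, div_mul_cancel₀ _ hy0.ne']
  have hg0 : g 0 < 0 := by
    rw [hgval, hf0, hrty]
    nlinarith
  have hgR : g R < 0 := by
    rw [hgval, hfR, hrty]
    nlinarith
  -- two zeros by IVT
  obtain ⟨z1, hz1mem, hz1⟩ : ∃ z1 ∈ Ioo (0:ℝ) (rt u), g z1 = 0 := by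
    have hsub : Icc (0:ℝ) (rt u) ⊆ Icc (0:ℝ) R := Icc_subset_Icc le_rfl hrtR.le
    have := intermediate_value_Ioo hrt0.le (hgc.mono hsub)
    obtain ⟨z, hz, hzv⟩ := this (show (0:ℝ) ∈ Ioo (g 0) (g (rt u)) from ⟨hg0, hgrt⟩)
    exact ⟨z, hz, hzv⟩
  obtain ⟨z2, hz2mem, hz2⟩ : ∃ z2 ∈ Ioo (rt u) R, g z2 = 0 := by
    have hsub : Icc (rt u) R ⊆ Icc (0:ℝ) R := Icc_subset_Icc hrt0.le le_rfl
    have := intermediate_value_Ioo' hrtR.le (hgc.mono hsub)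
    obtain ⟨z, hz, hzv⟩ := this (show (0:ℝ) ∈ Ioo (g R) (g (rt u)) from ⟨hgR, hgrt⟩)
    exact ⟨z, hz, hzv⟩
  have hz1Icc : z1 ∈ Icc (0:ℝ) R := ⟨hz1mem.1.le, hz1mem.2.le.trans hrtR.le⟩
  have hz2Icc : z2 ∈ Icc (0:ℝ) R := ⟨hrt0.le.trans hz2mem.1.le, hz2mem.2.le⟩
  -- set S
  set S := {ρ : ℝ | ρ ∈ Icc (0:ℝ) R ∧ f ρ = α * f y + u * (ρ - rt u)} with hS
  have hSmem : ∀ ρ, ρ ∈ S ↔ ρ ∈ Icc (0:ℝ) R ∧ g ρ = 0 := by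
    intro ρ; rw [hS]; simp only [mem_setOf_eq, hiff]
  have hz1S : z1 ∈ S := (hSmem z1).2 ⟨hz1Icc, hz1⟩
  have hz2S : z2 ∈ S := (hSmem z2).2 ⟨hz2Icc, hz2⟩
  have hne : S.Nonempty := ⟨z1, hz1S⟩
  have hSeq : S = Icc (0:ℝ) R ∩ g ⁻¹' {0} := by
    ext ρ; rw [hSmem]; simp
  have hclosed : IsClosed S := by
    rw [hSeq]
    exact hgc.preimage_isClosed_of_isClosed isClosed_Icc isClosed_singleton
  have hcomp : IsCompact S := isCompact_Icc.of_isClosed_subset hclosed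
    (fun ρ hρ => ((hSmem ρ).1 hρ).1)
  obtain ⟨rc, hrc⟩ := hcomp.exists_isLeast hne
  obtain ⟨rh, hrh⟩ := hcomp.exists_isGreatest hne
  have hrcIcc : rc ∈ Icc (0:ℝ) R := ((hSmem rc).1 hrc.1).1
  have hrhIcc : rh ∈ Icc (0:ℝ) R := ((hSmem rh).1 hrh.1).1
  have hgrc : g rc = 0 := ((hSmem rc).1 hrc.1).2
  have hgrh : g rh = 0 := ((hSmem rh).1 hrh.1).2
  have hrcz1 : rc ≤ z1 := hrc.2 hz1S
  have hrhz2 : z2 ≤ rh := hrh.2 hz2S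
  have hrc_lt_rt : rc < rt u := lt_of_le_of_lt hrcz1 hz1mem.2
  have hrt_lt_rh : rt u < rh := lt_of_lt_of_le hz2mem.1 hrhz2
  have hrcpos : 0 < rc := by
    rcases lt_or_eq_of_le hrcIcc.1 with h | h
    · exact h
    · exfalso; rw [← h] at hgrc; linarith
  have hrhR : rh < R := by
    rcases lt_or_eq_of_le hrhIcc.2 with h | h
    · exact h
    · exfalso; rw [h] at hgrh; linarith
  have hrcrh : rc < rh := hrc_lt_rt.trans hrt_lt_rh
  refine ⟨hne, hcomp, rc, rh, hrc, hrh, hrcpos, hrcrh, hrhR, ?_⟩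
  intro ρ hρ
  have hkey : (α * f y + u * (ρ - rt u) < f ρ) ↔ 0 < g ρ := by
    rw [hgval]; constructor <;> intro h <;> linarith
  rw [hkey]
  constructor
  · intro hgρ
    constructor
    · by_contra h
      push_neg at h
      rcases lt_or_eq_of_le h with h' | h'
      · have := strictConcave_min_lt hgsc hρ hrtIcc h' hrc_lt_rt
        rw [hgrc] at this
        rcases le_total (g ρ) (g (rt u)) with hm | hm
        · rw [min_eq_left hm] at this; linarith
        · rw [min_eq_right hm] at this; linarith
      · rw [← h'] at hgrc; linarith
    · by_contra h
      push_neg at h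
      rcases lt_or_eq_of_le h with h' | h'
      · have := strictConcave_min_lt hgsc hrtIcc hρ hrt_lt_rh h'
        rw [hgrh] at this
        rcases le_total (g (rt u)) (g ρ) with hm | hm
        · rw [min_eq_left hm] at this; linarith
        · rw [min_eq_right hm] at this; linarith
      · rw [h'] at hgrh; linarith
  · intro hmem
    have := strictConcave_min_lt hgsc hrcIcc hrhIcc hmem.1 hmem.2
    rw [hgrc, hgrh] at this
    simpa using this
end

section
/- For every u ∈ [0,V), the strict ordering ρ̌_u < ρ̃_u < ρ̃_u/α < ρ̂_u < ρ*_u holds. -/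
set_option maxHeartbeats 2000000 in
theorem stmt_5
    (R β B α V : ℝ) (f v f' f'' v' : ℝ → ℝ)
    (hR : 0 < R) (hβ : 0 < β) (hB : 0 < B) (hα : α ∈ Set.Ioo (0:ℝ) 1)
    (hf0 : f 0 = 0) (hfR : f R = 0)
    (hfv : ∀ ρ ∈ Set.Icc (0:ℝ) R, f ρ = ρ * v ρ)
    (hfd1 : ∀ ρ ∈ Set.Icc (0:ℝ) R, HasDerivAt f (f' ρ) ρ)
    (hfd2 : ∀ ρ ∈ Set.Icc (0:ℝ) R, HasDerivAt f' (f'' ρ) ρ)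
    (hfc : ContinuousOn f'' (Set.Icc (0:ℝ) R))
    (hconc : ∀ ρ ∈ Set.Icc (0:ℝ) R, -B ≤ f'' ρ ∧ f'' ρ ≤ -β)
    (hvd : ∀ ρ ∈ Set.Icc (0:ℝ) R, HasDerivAt v (v' ρ) ρ)
    (hv'neg : ∀ ρ ∈ Set.Ioo (0:ℝ) R, v' ρ < 0)
    (hvnn : ∀ ρ ∈ Set.Icc (0:ℝ) R, 0 ≤ v ρ)
    (hV : V = v 0)
    (rt : ℝ → ℝ)
    (hrt : ∀ u ∈ Set.Icc (0:ℝ) V, rt u ∈ Set.Icc (0:ℝ) (α * R) ∧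
      HasDerivAt (fun x => α * f (x / α)) u (rt u))
    (rc rh : ℝ → ℝ)
    (hrc : ∀ u ∈ Set.Icc (0:ℝ) V, IsLeast
      {ρ : ℝ | ρ ∈ Set.Icc (0:ℝ) R ∧ f ρ = α * f (rt u / α) + u * (ρ - rt u)} (rc u))
    (hrh : ∀ u ∈ Set.Icc (0:ℝ) V, IsGreatest
      {ρ : ℝ | ρ ∈ Set.Icc (0:ℝ) R ∧ f ρ = α * f (rt u / α) + u * (ρ - rt u)} (rh u))
    (rs : ℝ → ℝ)
    (hrs : ∀ u ∈ Set.Icc (0:ℝ) V, rs u ∈ Set.Icc (0:ℝ) R ∧ v (rs u) = u)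
    :
    ∀ u ∈ Set.Ico (0:ℝ) V,
      rc u < rt u ∧ rt u < rt u / α ∧ rt u / α < rh u ∧ rh u < rs u := by
  obtain ⟨hα0, hα1⟩ := hα
  intro u hu
  obtain ⟨hu0, huV⟩ := hu
  have huIcc : u ∈ Set.Icc (0:ℝ) V := ⟨hu0, huV.le⟩
  have hcontf : ContinuousOn f (Set.Icc 0 R) := fun x hx =>
    (hfd1 x hx).continuousAt.continuousWithinAt
  have hcontf' : ContinuousOn f' (Set.Icc 0 R) := fun x hx =>
    (hfd2 x hx).continuousAt.continuousWithinAt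
  have hcontv : ContinuousOn v (Set.Icc 0 R) := fun x hx =>
    (hvd x hx).continuousAt.continuousWithinAt
  have hf'anti : StrictAntiOn f' (Set.Icc 0 R) := by
    apply strictAntiOn_of_deriv_neg (convex_Icc 0 R) hcontf'
    intro x hx
    rw [interior_Icc] at hx
    have hx' : x ∈ Set.Icc (0:ℝ) R := ⟨hx.1.le, hx.2.le⟩
    rw [(hfd2 x hx').deriv]
    linarith [(hconc x hx').2]
  have hvanti : StrictAntiOn v (Set.Icc 0 R) := by
    apply strictAntiOn_of_deriv_neg (convex_Icc 0 R) hcontv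
    intro x hx
    rw [interior_Icc] at hx
    have hx' : x ∈ Set.Icc (0:ℝ) R := ⟨hx.1.le, hx.2.le⟩
    rw [(hvd x hx').deriv]
    exact hv'neg x hx
  have h0mem : (0:ℝ) ∈ Set.Icc (0:ℝ) R := ⟨le_refl _, hR.le⟩
  -- f' 0 = V
  have hf'0 : f' 0 = V := by
    have h1 : HasDerivWithinAt f (f' 0) (Set.Icc 0 R) 0 :=
      (hfd1 0 h0mem).hasDerivWithinAt
    have h2 : HasDerivWithinAt (fun x => x * v x) (1 * v 0 + 0 * v' 0) (Set.Icc 0 R) 0 :=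
      ((hasDerivAt_id (0:ℝ)).mul (hvd 0 h0mem)).hasDerivWithinAt
    have h3 : HasDerivWithinAt f (1 * v 0 + 0 * v' 0) (Set.Icc 0 R) 0 :=
      h2.congr (fun y hy => hfv y hy) (hfv 0 h0mem)
    have hud : UniqueDiffWithinAt ℝ (Set.Icc (0:ℝ) R) 0 := (uniqueDiffOn_Icc hR) 0 h0mem
    have e1 := h1.derivWithin hud
    have e2 := h3.derivWithin hud
    rw [hV]
    rw [e1] at e2
    rw [e2]; ring
  obtain ⟨hrtmem, hrtderiv⟩ := hrt u huIcc
  set t := rt u / α with ht_def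
  have hrteq : rt u = α * t := by
    rw [ht_def, mul_div_cancel₀ _ (ne_of_gt hα0)]
  have htmem : t ∈ Set.Icc (0:ℝ) R := by
    constructor
    · exact div_nonneg hrtmem.1 hα0.le
    · rw [ht_def, div_le_iff₀ hα0]
      linarith [hrtmem.2]
  -- u = f' t
  have hut : u = f' t := by
    have hcompinner : HasDerivAt (fun x : ℝ => x / α) (1 / α) (rt u) := by
      simpa using (hasDerivAt_id (rt u)).div_const α
    have hcomp : HasDerivAt (fun x => f (x / α)) (f' t * (1 / α)) (rt u) :=
      HasDerivAt.comp (rt u) (hfd1 t htmem) hcompinner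
    have hcomp2 : HasDerivAt (fun x => α * f (x / α)) (α * (f' t * (1 / α))) (rt u) :=
      hcomp.const_mul α
    have : α * (f' t * (1 / α)) = f' t := by field_simp
    rw [this] at hcomp2
    exact hrtderiv.unique hcomp2
  -- t > 0
  have ht0 : 0 < t := by
    rcases lt_or_eq_of_le htmem.1 with h | h
    · exact h
    · exfalso; rw [← h] at hut; rw [← hut] at hf'0; linarith
  have hrtpos : 0 < rt u := by rw [hrteq]; positivity
  have hrtltt : rt u < t := by
    rw [hrteq]; nlinarith
  have hrtleR : rt u ≤ R := hrtltt.le.trans htmem.2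
  -- MVT on [0, rt u]
  obtain ⟨c1, hc1mem, hc1⟩ := exists_hasDerivAt_eq_slope f f' hrtpos
    (hcontf.mono (Set.Icc_subset_Icc le_rfl hrtleR))
    (fun x hx => hfd1 x ⟨hx.1.le, hx.2.le.trans hrtleR⟩)
  -- MVT on [rt u, t]
  obtain ⟨c2, hc2mem, hc2⟩ := exists_hasDerivAt_eq_slope f f' hrtltt
    (hcontf.mono (Set.Icc_subset_Icc hrtmem.1 htmem.2))
    (fun x hx => hfd1 x ⟨hrtmem.1.trans hx.1.le, hx.2.le.trans htmem.2⟩)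
  have hc1mem' : c1 ∈ Set.Icc (0:ℝ) R := ⟨hc1mem.1.le, (hc1mem.2.le.trans hrtleR)⟩
  have hc2mem' : c2 ∈ Set.Icc (0:ℝ) R :=
    ⟨hrtmem.1.trans hc2mem.1.le, hc2mem.2.le.trans htmem.2⟩
  have hB1 : f' c2 < f' c1 := hf'anti hc1mem' hc2mem' (hc1mem.2.trans hc2mem.1)
  have hB2 : u < f' c2 := by rw [hut]; exact hf'anti hc2mem' htmem hc2mem.2
  -- turn slopes into equations
  have e1 : f (rt u) = f' c1 * rt u := by
    rw [hf0, sub_zero, sub_zero] at hc1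
    field_simp at hc1
    linarith
  have e2 : f t = f' c1 * rt u + f' c2 * (t - rt u) := by
    have h := hc2
    rw [eq_div_iff (by linarith : t - rt u ≠ 0)] at h
    linarith
  -- key inequalities
  have hft : u * t < f t := by
    have k1 : 0 < (f' c1 - u) * rt u :=
      mul_pos (by linarith) hrtpos
    have k2 : 0 < (f' c2 - u) * (t - rt u) :=
      mul_pos (by linarith) (by linarith)
    nlinarith
  have hfrt : α * f t < f (rt u) := by
    have key : 0 < (1 - α) * rt u * (f' c1 - f' c2) :=
      mul_pos (mul_pos (by linarith) hrtpos) (by linarith)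
    have e2' : α * f t = α * (f' c1 * rt u) + α * (f' c2 * (t - rt u)) := by
      rw [e2]; ring
    have hsub : α * (f' c2 * (t - rt u)) = (1 - α) * rt u * f' c2 := by
      rw [hrteq]; ring
    nlinarith [e1, e2', hsub, key]
  have hftpos : 0 < f t := by nlinarith
  -- the affine comparison function
  have hcontG : ContinuousOn (fun ρ => f ρ - (α * f t + u * (ρ - rt u))) (Set.Icc 0 R) :=
    hcontf.sub (Continuous.continuousOn
      (continuous_const.add (continuous_const.mul (continuous_id.sub continuous_const))))
  have hG0 : f 0 - (α * f t + u * (0 - rt u)) < 0 := by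
    rw [hf0, hrteq]
    have k : 0 < α * (f t - u * t) := mul_pos hα0 (by linarith)
    nlinarith [k]
  have hGrt : 0 < f (rt u) - (α * f t + u * (rt u - rt u)) := by
    have : u * (rt u - rt u) = 0 := by ring
    rw [this]; linarith
  have hGt : 0 < f t - (α * f t + u * (t - rt u)) := by
    rw [hrteq]
    have k : 0 < (1 - α) * (f t - u * t) := mul_pos (by linarith) (by linarith)
    nlinarith [k]
  have hGR : f R - (α * f t + u * (R - rt u)) < 0 := by
    rw [hfR]
    have k1 : 0 ≤ u * (R - rt u) := mul_nonneg hu0 (by linarith)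
    have k2 : 0 < α * f t := mul_pos hα0 hftpos
    linarith
  -- zero in [0, rt u)
  obtain ⟨z1, hz1mem, hz1⟩ :
      ∃ z1 ∈ Set.Icc (0:ℝ) (rt u), f z1 - (α * f t + u * (z1 - rt u)) = 0 := by
    have h := intermediate_value_Icc hrtpos.le
      (hcontG.mono (Set.Icc_subset_Icc le_rfl hrtleR))
    have h0 : (0:ℝ) ∈ Set.Icc (f 0 - (α * f t + u * (0 - rt u)))
        (f (rt u) - (α * f t + u * (rt u - rt u))) := ⟨hG0.le, hGrt.le⟩
    obtain ⟨z, hz, hz0⟩ := h h0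
    exact ⟨z, hz, hz0⟩
  -- zero in (t, R]
  obtain ⟨z2, hz2mem, hz2⟩ :
      ∃ z2 ∈ Set.Icc t R, f z2 - (α * f t + u * (z2 - rt u)) = 0 := by
    have h := intermediate_value_Icc' htmem.2
      (hcontG.mono (Set.Icc_subset_Icc htmem.1 le_rfl))
    have h0 : (0:ℝ) ∈ Set.Icc (f R - (α * f t + u * (R - rt u)))
        (f t - (α * f t + u * (t - rt u))) := ⟨hGR.le, hGt.le⟩
    obtain ⟨z, hz, hz0⟩ := h h0
    exact ⟨z, hz, hz0⟩
  have hz1set : z1 ∈ {ρ : ℝ | ρ ∈ Set.Icc (0:ℝ) R ∧ f ρ = α * f t + u * (ρ - rt u)} :=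
    ⟨⟨hz1mem.1, hz1mem.2.trans hrtleR⟩, by linarith⟩
  have hz2set : z2 ∈ {ρ : ℝ | ρ ∈ Set.Icc (0:ℝ) R ∧ f ρ = α * f t + u * (ρ - rt u)} :=
    ⟨⟨htmem.1.trans hz2mem.1, hz2mem.2⟩, by linarith⟩
  have hrcle : rc u ≤ z1 := (hrc u huIcc).2 hz1set
  have hrhge : z2 ≤ rh u := (hrh u huIcc).2 hz2set
  have hz1lt : z1 < rt u := by
    rcases lt_or_eq_of_le hz1mem.2 with h | h
    · exact h
    · exfalso; rw [h] at hz1; linarith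
  have hz2gt : t < z2 := by
    rcases lt_or_eq_of_le hz2mem.1 with h | h
    · exact h
    · exfalso; rw [← h] at hz2; linarith
  have goal1 : rc u < rt u := lt_of_le_of_lt hrcle hz1lt
  have goal3 : t < rh u := lt_of_lt_of_le hz2gt hrhge
  -- rh u < rs u
  obtain ⟨hrhmem, hrheq⟩ := (hrh u huIcc).1
  have hrh0 : 0 < rh u := ht0.trans goal3
  have hvrh : u < v (rh u) := by
    have hfrh : f (rh u) = rh u * v (rh u) := hfv _ hrhmem
    rw [← ht_def] at hrheq
    have hlt : u * rh u < rh u * v (rh u) := by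
      rw [← hfrh, hrheq, hrteq]
      have k : 0 < α * (f t - u * t) := mul_pos hα0 (by linarith)
      nlinarith [k]
    exact lt_of_mul_lt_mul_right (by linarith : u * rh u < v (rh u) * rh u) hrh0.le
  obtain ⟨hrsmem, hrseq⟩ := hrs u huIcc
  have goal4 : rh u < rs u := by
    by_contra h
    push_neg at h
    rcases lt_or_eq_of_le h with h' | h'
    · have := hvanti hrsmem hrhmem h'
      rw [hrseq] at this
      linarith
    · rw [← h', hrseq] at hvrh; linarith
  exact ⟨goal1, hrtltt, goal3, goal4⟩
end

section
/- The map u ↦ ρ̌_u is strictly decreasing on [0,V]; moreover it is differentiable at every u ∈ [0,V) with −1/β ≤ ρ̌'(u) < 0, and consequently u ↦ ρ̌_u is Lipschitz continuous on [0,V] with Lipschitz constant 1/β. -/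
open Set

lemma aux_min_at_nonneg {a b x : ℝ} {g g' : ℝ → ℝ}
    (hg : ∀ y ∈ Set.Icc a b, HasDerivAt g (g' y) y)
    (hx : x ∈ Set.Icc a b) (hgx : g x = 0)
    (hneg : ∀ y ∈ Set.Icc a b, y ≤ x → g' y ≤ 0)
    (hpos : ∀ y ∈ Set.Icc a b, x ≤ y → 0 ≤ g' y) :
    ∀ y ∈ Set.Icc a b, 0 ≤ g y := by
  intro y hy
  rcases le_total y x with h | h
  · have hsub : Set.Icc a x ⊆ Set.Icc a b := Set.Icc_subset_Icc le_rfl hx.2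
    have hanti : AntitoneOn g (Set.Icc a x) := by
      apply antitoneOn_of_deriv_nonpos (convex_Icc a x)
      · exact fun z hz => (hg z (hsub hz)).continuousAt.continuousWithinAt
      · intro z hz
        rw [interior_Icc] at hz
        exact (hg z (hsub (Set.mem_Icc_of_Ioo hz))).differentiableAt.differentiableWithinAt
      · intro z hz
        rw [interior_Icc] at hz
        rw [(hg z (hsub (Set.mem_Icc_of_Ioo hz))).deriv]
        exact hneg z (hsub (Set.mem_Icc_of_Ioo hz)) hz.2.le
    have h2 := hanti ⟨hy.1, h⟩ ⟨le_trans hy.1 h, le_rfl⟩ h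
    rw [hgx] at h2; exact h2
  · have hsub : Set.Icc x b ⊆ Set.Icc a b := Set.Icc_subset_Icc hx.1 le_rfl
    have hmono : MonotoneOn g (Set.Icc x b) := by
      apply monotoneOn_of_deriv_nonneg (convex_Icc x b)
      · exact fun z hz => (hg z (hsub hz)).continuousAt.continuousWithinAt
      · intro z hz
        rw [interior_Icc] at hz
        exact (hg z (hsub (Set.mem_Icc_of_Ioo hz))).differentiableAt.differentiableWithinAt
      · intro z hz
        rw [interior_Icc] at hz
        rw [(hg z (hsub (Set.mem_Icc_of_Ioo hz))).deriv]
        exact hpos z (hsub (Set.mem_Icc_of_Ioo hz)) hz.1.le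
    have h2 := hmono ⟨le_rfl, hx.2⟩ ⟨h, hy.2⟩ h
    rw [hgx] at h2; exact h2

/-- slope bounds for f' from bounds on f''. -/
lemma aux_slope {R β B : ℝ} {f' f'' : ℝ → ℝ}
    (hfd2 : ∀ ρ ∈ Set.Icc (0:ℝ) R, HasDerivAt f' (f'' ρ) ρ)
    (hconc : ∀ ρ ∈ Set.Icc (0:ℝ) R, -B ≤ f'' ρ ∧ f'' ρ ≤ -β) :
    ∀ x ∈ Set.Icc (0:ℝ) R, ∀ y ∈ Set.Icc (0:ℝ) R, x ≤ y →
      β * (y - x) ≤ f' x - f' y ∧ f' x - f' y ≤ B * (y - x) := by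
  have h1 : AntitoneOn (fun ρ => f' ρ + β * ρ) (Set.Icc (0:ℝ) R) := by
    apply antitoneOn_of_deriv_nonpos (convex_Icc 0 R)
    · exact fun z hz => (((hfd2 z hz).add ((hasDerivAt_id z).const_mul β)).continuousAt).continuousWithinAt
    · intro z hz
      rw [interior_Icc] at hz
      have hz' := Set.mem_Icc_of_Ioo hz
      exact ((hfd2 z hz').add ((hasDerivAt_id z).const_mul β)).differentiableAt.differentiableWithinAt
    · intro z hz
      rw [interior_Icc] at hz
      have hz' := Set.mem_Icc_of_Ioo hz
      have hd : HasDerivAt (fun ρ => f' ρ + β * ρ) (f'' z + β * 1) z :=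
        (hfd2 z hz').add ((hasDerivAt_id z).const_mul β)
      rw [hd.deriv]
      have := (hconc z hz').2
      linarith
  have h2 : MonotoneOn (fun ρ => f' ρ + B * ρ) (Set.Icc (0:ℝ) R) := by
    apply monotoneOn_of_deriv_nonneg (convex_Icc 0 R)
    · exact fun z hz => (((hfd2 z hz).add ((hasDerivAt_id z).const_mul B)).continuousAt).continuousWithinAt
    · intro z hz
      rw [interior_Icc] at hz
      have hz' := Set.mem_Icc_of_Ioo hz
      exact ((hfd2 z hz').add ((hasDerivAt_id z).const_mul B)).differentiableAt.differentiableWithinAt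
    · intro z hz
      rw [interior_Icc] at hz
      have hz' := Set.mem_Icc_of_Ioo hz
      have hd : HasDerivAt (fun ρ => f' ρ + B * ρ) (f'' z + B * 1) z :=
        (hfd2 z hz').add ((hasDerivAt_id z).const_mul B)
      rw [hd.deriv]
      have := (hconc z hz').1
      linarith
  intro x hx y hy hxy
  have e1 := h1 hx hy hxy
  have e2 := h2 hx hy hxy
  simp only at e1 e2
  constructor <;> linarith

/-- quadratic upper tangent bound. -/
lemma aux_tangent_hi {R β B : ℝ} {f f' f'' : ℝ → ℝ}
    (hfd1 : ∀ ρ ∈ Set.Icc (0:ℝ) R, HasDerivAt f (f' ρ) ρ)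
    (hfd2 : ∀ ρ ∈ Set.Icc (0:ℝ) R, HasDerivAt f' (f'' ρ) ρ)
    (hconc : ∀ ρ ∈ Set.Icc (0:ℝ) R, -B ≤ f'' ρ ∧ f'' ρ ≤ -β) :
    ∀ x ∈ Set.Icc (0:ℝ) R, ∀ y ∈ Set.Icc (0:ℝ) R,
      f y ≤ f x + f' x * (y - x) - β / 2 * (y - x) ^ 2 := by
  have hsl := aux_slope hfd2 hconc
  intro x hx y hy
  have key : ∀ y ∈ Set.Icc (0:ℝ) R,
      0 ≤ f x + f' x * (y - x) - β / 2 * (y - x) ^ 2 - f y := by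
    apply aux_min_at_nonneg (g' := fun y => f' x - β * (y - x) - f' y) ?_ hx (by ring)
    · intro z hz hzx
      have := (hsl z hz x hx hzx).1
      linarith
    · intro z hz hxz
      have := (hsl x hx z hz hxz).1
      linarith
    · intro z hz
      have hd1 : HasDerivAt (fun y => f x + f' x * (y - x)) (f' x * 1) z :=
        (((hasDerivAt_id z).sub_const x).const_mul (f' x)).const_add (f x)
      have hd2 : HasDerivAt (fun y : ℝ => β / 2 * (y - x) ^ 2) (β / 2 * (2 * (z - x) ^ 1 * 1)) z :=
        (((hasDerivAt_id z).sub_const x).pow 2).const_mul (β / 2)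
      have := (hd1.sub hd2).sub (hfd1 z hz)
      convert this using 1
      all_goals try rfl
      all_goals try funext w
      all_goals beta_reduce
      all_goals ring
  have := key y hy
  linarith

/-- quadratic lower tangent bound. -/
lemma aux_tangent_lo {R β B : ℝ} {f f' f'' : ℝ → ℝ}
    (hfd1 : ∀ ρ ∈ Set.Icc (0:ℝ) R, HasDerivAt f (f' ρ) ρ)
    (hfd2 : ∀ ρ ∈ Set.Icc (0:ℝ) R, HasDerivAt f' (f'' ρ) ρ)
    (hconc : ∀ ρ ∈ Set.Icc (0:ℝ) R, -B ≤ f'' ρ ∧ f'' ρ ≤ -β) :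
    ∀ x ∈ Set.Icc (0:ℝ) R, ∀ y ∈ Set.Icc (0:ℝ) R,
      f x + f' x * (y - x) - B / 2 * (y - x) ^ 2 ≤ f y := by
  have hsl := aux_slope hfd2 hconc
  intro x hx y hy
  have key : ∀ y ∈ Set.Icc (0:ℝ) R,
      0 ≤ f y - f x - f' x * (y - x) + B / 2 * (y - x) ^ 2 := by
    apply aux_min_at_nonneg (g' := fun y => f' y - f' x + B * (y - x)) ?_ hx (by ring)
    · intro z hz hzx
      have := (hsl z hz x hx hzx).2
      linarith
    · intro z hz hxz
      have := (hsl x hx z hz hxz).2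
      linarith
    · intro z hz
      have hd1 : HasDerivAt (fun y => f x + f' x * (y - x)) (f' x * 1) z :=
        (((hasDerivAt_id z).sub_const x).const_mul (f' x)).const_add (f x)
      have hd2 : HasDerivAt (fun y : ℝ => B / 2 * (y - x) ^ 2) (B / 2 * (2 * (z - x) ^ 1 * 1)) z :=
        (((hasDerivAt_id z).sub_const x).pow 2).const_mul (B / 2)
      have := ((hfd1 z hz).sub hd1).add hd2
      convert this using 1
      all_goals try rfl
      all_goals try funext w
      all_goals beta_reduce
      all_goals try simp only [Pi.add_apply, Pi.sub_apply]
      all_goals ring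
  have := key y hy
  linarith

set_option maxHeartbeats 3200000 in
theorem stmt_6
    (R β B α V : ℝ) (f v f' f'' v' : ℝ → ℝ)
    (hR : 0 < R) (hβ : 0 < β) (hB : 0 < B) (hα : α ∈ Set.Ioo (0:ℝ) 1)
    (hf0 : f 0 = 0) (hfR : f R = 0)
    (hfv : ∀ ρ ∈ Set.Icc (0:ℝ) R, f ρ = ρ * v ρ)
    (hfd1 : ∀ ρ ∈ Set.Icc (0:ℝ) R, HasDerivAt f (f' ρ) ρ)
    (hfd2 : ∀ ρ ∈ Set.Icc (0:ℝ) R, HasDerivAt f' (f'' ρ) ρ)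
    (hfc : ContinuousOn f'' (Set.Icc (0:ℝ) R))
    (hconc : ∀ ρ ∈ Set.Icc (0:ℝ) R, -B ≤ f'' ρ ∧ f'' ρ ≤ -β)
    (hvd : ∀ ρ ∈ Set.Icc (0:ℝ) R, HasDerivAt v (v' ρ) ρ)
    (hv'neg : ∀ ρ ∈ Set.Ioo (0:ℝ) R, v' ρ < 0)
    (hvnn : ∀ ρ ∈ Set.Icc (0:ℝ) R, 0 ≤ v ρ)
    (hV : V = v 0)
    (rt : ℝ → ℝ)
    (hrt : ∀ u ∈ Set.Icc (0:ℝ) V, rt u ∈ Set.Icc (0:ℝ) (α * R) ∧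
      HasDerivAt (fun x => α * f (x / α)) u (rt u))
    (rc rh : ℝ → ℝ)
    (hrc : ∀ u ∈ Set.Icc (0:ℝ) V, IsLeast
      {ρ : ℝ | ρ ∈ Set.Icc (0:ℝ) R ∧ f ρ = α * f (rt u / α) + u * (ρ - rt u)} (rc u))
    (hrh : ∀ u ∈ Set.Icc (0:ℝ) V, IsGreatest
      {ρ : ℝ | ρ ∈ Set.Icc (0:ℝ) R ∧ f ρ = α * f (rt u / α) + u * (ρ - rt u)} (rh u))
    :
    StrictAntiOn rc (Set.Icc (0:ℝ) V) ∧
    (∀ u ∈ Set.Ico (0:ℝ) V, ∃ d : ℝ,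
      HasDerivWithinAt rc d (Set.Icc (0:ℝ) V) u ∧ -(1 / β) ≤ d ∧ d < 0) ∧
    ∀ u₁ ∈ Set.Icc (0:ℝ) V, ∀ u₂ ∈ Set.Icc (0:ℝ) V,
      |rc u₁ - rc u₂| ≤ (1 / β) * |u₁ - u₂| := by
  obtain ⟨hα0, hα1⟩ := hα
  have h0R : (0:ℝ) ∈ Set.Icc (0:ℝ) R := ⟨le_rfl, hR.le⟩
  have hRR : R ∈ Set.Icc (0:ℝ) R := ⟨hR.le, le_rfl⟩
  have hsl := aux_slope hfd2 hconc
  have htu := aux_tangent_hi hfd1 hfd2 hconc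
  have htl := aux_tangent_lo hfd1 hfd2 hconc
  have hfcont : ContinuousOn f (Set.Icc (0:ℝ) R) :=
    fun x hx => (hfd1 x hx).continuousAt.continuousWithinAt
  -- q u = rt u / α
  set q : ℝ → ℝ := fun u => rt u / α with hqdef
  have hq : ∀ u, rt u = α * q u := by
    intro u; simp only [hqdef]; field_simp
  have hrtnn : ∀ u ∈ Set.Icc (0:ℝ) V, 0 ≤ rt u := fun u hu => (hrt u hu).1.1
  have hqmem : ∀ u ∈ Set.Icc (0:ℝ) V, q u ∈ Set.Icc (0:ℝ) R := by
    intro u hu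
    have h := (hrt u hu).1
    constructor
    · exact div_nonneg h.1 hα0.le
    · rw [hqdef]; rw [div_le_iff₀ hα0]
      calc rt u ≤ α * R := h.2
      _ = R * α := by ring
  have hqnn : ∀ u ∈ Set.Icc (0:ℝ) V, 0 ≤ q u := fun u hu => (hqmem u hu).1
  have hrtleq : ∀ u ∈ Set.Icc (0:ℝ) V, rt u ≤ q u := by
    intro u hu
    have := hqnn u hu
    rw [hq u]; nlinarith
  have hrtmemR : ∀ u ∈ Set.Icc (0:ℝ) V, rt u ∈ Set.Icc (0:ℝ) R := by
    intro u hu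
    exact ⟨hrtnn u hu, le_trans (hrtleq u hu) (hqmem u hu).2⟩
  -- tangency point equation
  have hrteq : ∀ u ∈ Set.Icc (0:ℝ) V, f' (q u) = u := by
    intro u hu
    have hd : HasDerivAt (fun x : ℝ => x / α) (1 / α) (rt u) := by
      simpa using (hasDerivAt_id (rt u)).div_const α
    have h1 : HasDerivAt (fun x : ℝ => f (x / α)) (f' (q u) * (1 / α)) (rt u) :=
      HasDerivAt.comp (rt u) (hfd1 _ (hqmem u hu)) hd
    have h2 : HasDerivAt (fun x : ℝ => α * f (x / α)) (α * (f' (q u) * (1 / α))) (rt u) :=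
      h1.const_mul α
    have h3 := h2.unique (hrt u hu).2
    rw [show α * (f' (q u) * (1 / α)) = f' (q u) from by field_simp] at h3
    exact h3
  -- f' 0 = V
  have hf'0 : f' 0 = V := by
    have hud : UniqueDiffWithinAt ℝ (Set.Icc (0:ℝ) R) 0 := (uniqueDiffOn_Icc hR) 0 h0R
    have h1 : HasDerivWithinAt f (f' 0) (Set.Icc (0:ℝ) R) 0 := (hfd1 0 h0R).hasDerivWithinAt
    have h2 : HasDerivWithinAt (fun ρ => ρ * v ρ) (1 * v 0 + 0 * v' 0) (Set.Icc (0:ℝ) R) 0 := by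
      have := (hasDerivAt_id (0:ℝ)).mul (hvd 0 h0R)
      exact this.hasDerivWithinAt.congr_deriv (by simp)
    have h3 : HasDerivWithinAt f (1 * v 0 + 0 * v' 0) (Set.Icc (0:ℝ) R) 0 :=
      h2.congr (fun x hx => hfv x hx) (hfv 0 h0R)
    have h4 := hud.eq_deriv _ h1 h3
    rw [h4, hV]; ring
  -- V > 0
  have hVpos : 0 < V := by
    obtain ⟨ξ, hξ, hslope⟩ := exists_hasDerivAt_eq_slope f f' hR hfcont
      (fun x hx => hfd1 x ⟨hx.1.le, hx.2.le⟩)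
    rw [hfR, hf0] at hslope
    have hξ0 : f' ξ = 0 := by rw [hslope]; ring
    have := (hsl 0 h0R ξ ⟨hξ.1.le, hξ.2.le⟩ hξ.1.le).1
    rw [← hf'0]
    nlinarith [hξ.1]
  -- ψ = value at 0 of the tangent line
  set ψ : ℝ → ℝ := fun u => α * f (q u) - u * rt u with hψd
  have hSiff : ∀ u x : ℝ, (f x = α * f (rt u / α) + u * (x - rt u)) ↔ f x = ψ u + u * x := by
    intro u x
    have : α * f (rt u / α) + u * (x - rt u) = ψ u + u * x := by
      simp only [hψd, hqdef]; ring
    rw [this]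
  have hrcmem : ∀ u ∈ Set.Icc (0:ℝ) V, rc u ∈ Set.Icc (0:ℝ) R :=
    fun u hu => (hrc u hu).1.1
  have hrceq : ∀ u ∈ Set.Icc (0:ℝ) V, f (rc u) = ψ u + u * rc u :=
    fun u hu => (hSiff u (rc u)).1 (hrc u hu).1.2
  have hrclb : ∀ u ∈ Set.Icc (0:ℝ) V, ∀ x ∈ Set.Icc (0:ℝ) R, f x = ψ u + u * x → rc u ≤ x :=
    fun u hu x hx hfx => (hrc u hu).2 ⟨hx, (hSiff u x).2 hfx⟩
  -- lower bound for ψ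
  have hψlb : ∀ u ∈ Set.Icc (0:ℝ) V, β * α / 2 * (q u) ^ 2 ≤ ψ u := by
    intro u hu
    have h := htu (q u) (hqmem u hu) 0 h0R
    rw [hf0, hrteq u hu] at h
    have h' : β / 2 * (q u) ^ 2 ≤ f (q u) - u * q u := by nlinarith [h]
    have h2 := mul_le_mul_of_nonneg_left h' hα0.le
    simp only [hψd]
    rw [hq u]
    nlinarith [h2]
  have hψnn : ∀ u ∈ Set.Icc (0:ℝ) V, 0 ≤ ψ u := by
    intro u hu
    have := hψlb u hu
    have h0 : 0 ≤ β * α / 2 * (q u) ^ 2 := by positivity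
    exact le_trans h0 this
  -- envelope inequality
  have henv : ∀ u ∈ Set.Icc (0:ℝ) V, ∀ w ∈ Set.Icc (0:ℝ) V,
      ψ w ≤ ψ u - (w - u) * rt w - β * α / 2 * (q w - q u) ^ 2 := by
    intro u hu w hw
    have h := htu (q u) (hqmem u hu) (q w) (hqmem w hw)
    rw [hrteq u hu] at h
    simp only [hψd]
    rw [hq u, hq w]
    nlinarith [mul_le_mul_of_nonneg_left h hα0.le]
  -- strict concavity gain : α f(q u) + c ≤ f (rt u)
  have hconcgain : ∀ u ∈ Set.Icc (0:ℝ) V,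
      α * f (q u) + β / 2 * α * (1 - α) * (q u) ^ 2 ≤ f (rt u) := by
    intro u hu
    have h1 := htu (rt u) (hrtmemR u hu) (q u) (hqmem u hu)
    have h2 := htu (rt u) (hrtmemR u hu) 0 h0R
    rw [hf0] at h2
    rw [hq u] at h1 h2 ⊢
    nlinarith [mul_le_mul_of_nonneg_left h1 hα0.le,
      mul_le_mul_of_nonneg_left h2 (by linarith : (0:ℝ) ≤ 1 - α)]
  have hψrt : ∀ u : ℝ, ψ u + u * rt u = α * f (q u) := by
    intro u; simp only [hψd]; ring
  -- rc u ≤ rt u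
  have hrcle : ∀ u ∈ Set.Icc (0:ℝ) V, rc u ≤ rt u := by
    intro u hu
    set g : ℝ → ℝ := fun ρ => f ρ - (ψ u + u * ρ) with hgd
    have hgc : ContinuousOn g (Set.Icc 0 (rt u)) :=
      (hfcont.mono (Set.Icc_subset_Icc le_rfl (hrtmemR u hu).2)).sub
        ((continuous_const.add (continuous_const.mul continuous_id)).continuousOn)
    have hg0 : g 0 ≤ 0 := by
      simp only [hgd, hf0]
      have := hψnn u hu
      linarith
    have hgrt : 0 ≤ g (rt u) := by
      simp only [hgd, hψd]
      have := hconcgain u hu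
      have h0 : 0 ≤ β / 2 * α * (1 - α) * (q u) ^ 2 :=
        mul_nonneg (mul_nonneg (mul_nonneg (by linarith) hα0.le) (by linarith)) (sq_nonneg _)
      linarith
    obtain ⟨x, hx, hgx⟩ := intermediate_value_Icc (hrtnn u hu) hgc ⟨hg0, hgrt⟩
    have hxR : x ∈ Set.Icc (0:ℝ) R := ⟨hx.1, le_trans hx.2 (hrtmemR u hu).2⟩
    have hfx : f x = ψ u + u * x := by
      simp only [hgd] at hgx
      linarith
    exact le_trans (hrclb u hu x hxR hfx) hx.2
  clear hψd hqdef
  clear_value ψ q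
  -- rt is antitone and Lipschitz
  have hrtcore : ∀ u ∈ Set.Icc (0:ℝ) V, ∀ w ∈ Set.Icc (0:ℝ) V, u ≤ w →
      rt w ≤ rt u ∧ β * (rt u - rt w) ≤ α * (w - u) := by
    intro u hu w hw huw
    rcases le_total (q u) (q w) with h | h
    · have h1 := (hsl (q u) (hqmem u hu) (q w) (hqmem w hw) h).1
      rw [hrteq u hu, hrteq w hw] at h1
      have hqe : q u = q w := le_antisymm h (by nlinarith)
      have he : rt u = rt w := by rw [hq u, hq w, hqe]
      rw [he]
      constructor
      · exact le_rfl
      · nlinarith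
    · have h1 := (hsl (q w) (hqmem w hw) (q u) (hqmem u hu) h).1
      rw [hrteq u hu, hrteq w hw] at h1
      constructor
      · rw [hq u, hq w]; nlinarith
      · rw [hq u, hq w]; nlinarith [mul_le_mul_of_nonneg_left h1 hα0.le]
  have hrtabs : ∀ u ∈ Set.Icc (0:ℝ) V, ∀ w ∈ Set.Icc (0:ℝ) V,
      |rt u - rt w| ≤ α / β * |u - w| := by
    intro u hu w hw
    rcases le_total u w with h | h
    · obtain ⟨h1, h2⟩ := hrtcore u hu w hw h
      have e1 : |rt u - rt w| = rt u - rt w := abs_of_nonneg (by linarith)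
      have e2 : |u - w| = w - u := by rw [abs_sub_comm]; exact abs_of_nonneg (by linarith)
      rw [e1, e2, div_mul_eq_mul_div, le_div_iff₀ hβ]
      nlinarith
    · obtain ⟨h1, h2⟩ := hrtcore w hw u hu h
      have e1 : |rt u - rt w| = rt w - rt u := by
        rw [abs_sub_comm]; exact abs_of_nonneg (by linarith)
      have e2 : |u - w| = u - w := abs_of_nonneg (by linarith)
      rw [e1, e2, div_mul_eq_mul_div, le_div_iff₀ hβ]
      nlinarith
  -- positivity of rt on [0, V)
  have hrtpos : ∀ u ∈ Set.Ico (0:ℝ) V, 0 < rt u := by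
    intro u hu
    have hu' : u ∈ Set.Icc (0:ℝ) V := ⟨hu.1, hu.2.le⟩
    rcases (hrtnn u hu').lt_or_eq with h | h
    · exact h
    · exfalso
      have hq0 : q u = 0 := by
        have := hq u
        rw [← h] at this
        field_simp at this
        rcases mul_eq_zero.1 (by linarith : α * q u = 0) with h' | h'
        · exact absurd h' (ne_of_gt hα0)
        · exact h'
      have h1 : f' 0 = u := hq0 ▸ (hrteq u hu')
      exact absurd (h1.symm.trans hf'0) (ne_of_lt hu.2)
  have hqpos : ∀ u ∈ Set.Ico (0:ℝ) V, 0 < q u :=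
    fun u hu => lt_of_lt_of_le (hrtpos u hu) (hrtleq u ⟨hu.1, hu.2.le⟩)
  -- rc u < rt u strictly on [0, V)
  have hcltrt : ∀ u ∈ Set.Ico (0:ℝ) V, rc u < rt u := by
    intro u hu
    have hu' : u ∈ Set.Icc (0:ℝ) V := ⟨hu.1, hu.2.le⟩
    rcases (hrcle u hu').lt_or_eq with h | h
    · exact h
    · exfalso
      have h1 := hrceq u hu'
      rw [h] at h1
      have h2 := hconcgain u hu'
      have h3 : 0 < β / 2 * α * (1 - α) * (q u) ^ 2 := by
        have := hqpos u hu
        have h4 : (0:ℝ) < 1 - α := by linarith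
        positivity
      have h5 := hψrt u
      linarith
  -- key positivity: f'(rc u) - u ≥ β (q u - rc u)
  have hm : ∀ u ∈ Set.Icc (0:ℝ) V, β * (q u - rc u) ≤ f' (rc u) - u := by
    intro u hu
    have hle : rc u ≤ q u := le_trans (hrcle u hu) (hrtleq u hu)
    have h := (hsl (rc u) (hrcmem u hu) (q u) (hqmem u hu) hle).1
    rw [hrteq u hu] at h
    exact h
  -- value at V
  have hVmem : V ∈ Set.Icc (0:ℝ) V := ⟨hVpos.le, le_rfl⟩
  have hqV : q V = 0 := by
    by_contra h
    have hpos : 0 < q V := (hqnn V hVmem).lt_of_ne (Ne.symm h)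
    have h1 := (hsl 0 h0R (q V) (hqmem V hVmem) (hqnn V hVmem)).1
    rw [hrteq V hVmem, hf'0] at h1
    nlinarith
  have hrtV : rt V = 0 := by rw [hq V, hqV]; ring
  have hrcV : rc V = 0 := by
    have e := hψrt V
    rw [hrtV, hqV, hf0] at e
    have hψV : ψ V = 0 := by linarith
    have h1 : f 0 = ψ V + V * 0 := by rw [hf0, hψV]; ring
    have h2 := hrclb V hVmem 0 h0R h1
    exact le_antisymm h2 (hrcmem V hVmem).1
  -- rc is antitone
  have hmono : ∀ u ∈ Set.Icc (0:ℝ) V, ∀ w ∈ Set.Icc (0:ℝ) V, u ≤ w → rc w ≤ rc u := by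
    intro u hu w hw huw
    rcases le_total (rt w) (rc u) with h | h
    · exact le_trans (hrcle w hw) h
    · -- IVT for g_w on [0, rc u]
      set g : ℝ → ℝ := fun ρ => f ρ - (ψ w + w * ρ) with hgd
      have hgc : ContinuousOn g (Set.Icc 0 (rc u)) :=
        (hfcont.mono (Set.Icc_subset_Icc le_rfl (hrcmem u hu).2)).sub
          ((continuous_const.add (continuous_const.mul continuous_id)).continuousOn)
      have hg0 : g 0 ≤ 0 := by
        simp only [hgd, hf0]
        have := hψnn w hw
        linarith
      have hgrc : 0 ≤ g (rc u) := by
        simp only [hgd]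
        have h1 := hrceq u hu
        have h2 := henv u hu w hw   -- ψ w ≤ ψ u - (w-u) rt w - sq
        have hsq : 0 ≤ β * α / 2 * (q w - q u) ^ 2 := by positivity
        nlinarith
      obtain ⟨x, hx, hgx⟩ := intermediate_value_Icc (hrcmem u hu).1 hgc ⟨hg0, hgrc⟩
      have hxR : x ∈ Set.Icc (0:ℝ) R := ⟨hx.1, le_trans hx.2 (hrcmem u hu).2⟩
      have hfx : f x = ψ w + w * x := by
        simp only [hgd] at hgx
        linarith
      exact le_trans (hrclb w hw x hxR hfx) hx.2
  -- crude Lipschitz bound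
  have hlip2 : ∀ u ∈ Set.Icc (0:ℝ) V, ∀ w ∈ Set.Icc (0:ℝ) V, u ≤ w →
      β * (rc u - rc w) ≤ 2 * (w - u) := by
    intro u hu w hw huw
    have hmono' := hmono u hu w hw huw
    have hT := htu (rc u) (hrcmem u hu) (rc w) (hrcmem w hw)
    rw [hrceq u hu, hrceq w hw] at hT
    have hE := henv w hw u hu   -- ψ u ≤ ψ w - (u - w) rt u - sq
    have hsq : 0 ≤ β * α / 2 * (q u - q w) ^ 2 := by positivity
    have hm' := hm u hu
    have ha : rc u ≤ rt u := hrcle u hu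
    have haq : rt u ≤ q u := hrtleq u hu
    have hkey1 : (f' (rc u) - u) * (rc u - rc w) + β / 2 * (rc u - rc w) ^ 2 ≤
        (w - u) * (rt u - rc u) + (w - u) * (rc u - rc w) := by linarith [hT, hE, hsq]
    by_contra hcon
    push_neg at hcon  -- 2 (w - u) < β (rc u - rc w)
    have hδpos : 0 < rc u - rc w := by
      by_contra h'
      push_neg at h'
      have h2 : 0 ≤ β * (rc w - rc u) := mul_nonneg hβ.le (by linarith)
      linarith
    have ha2 : 0 ≤ rt u - rc u := by linarith
    have P1 := mul_lt_mul_of_pos_right hcon hδpos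
    have P2 := mul_le_mul_of_nonneg_right hcon.le ha2
    have P3 := mul_le_mul_of_nonneg_right hm' hδpos.le
    have P4 : β * (rt u - rc u) ≤ β * (q u - rc u) := by
      have := mul_le_mul_of_nonneg_left haq hβ.le
      linarith
    have P4b := mul_le_mul_of_nonneg_right P4 hδpos.le
    have P5 : 0 ≤ β * (rt u - rc u) * (rc u - rc w) := mul_nonneg (mul_nonneg hβ.le ha2) hδpos.le
    linarith [hkey1, P1, P2, P3, P4b, P5]
  -- two-sided crude Lipschitz bound
  have hlipabs : ∀ u ∈ Set.Icc (0:ℝ) V, ∀ w ∈ Set.Icc (0:ℝ) V,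
      |rc w - rc u| ≤ 2 / β * |w - u| := by
    intro u hu w hw
    rcases le_total u w with h | h
    · have h1 := hmono u hu w hw h
      have h2 := hlip2 u hu w hw h
      have e1 : |rc w - rc u| = rc u - rc w := by
        rw [abs_sub_comm]; exact abs_of_nonneg (by linarith)
      have e2 : |w - u| = w - u := abs_of_nonneg (by linarith)
      rw [e1, e2, div_mul_eq_mul_div, le_div_iff₀ hβ]
      linarith
    · have h1 := hmono w hw u hu h
      have h2 := hlip2 w hw u hu h
      have e1 : |rc w - rc u| = rc w - rc u := abs_of_nonneg (by linarith)
      have e2 : |w - u| = u - w := by rw [abs_sub_comm]; exact abs_of_nonneg (by linarith)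
      rw [e1, e2, div_mul_eq_mul_div, le_div_iff₀ hβ]
      linarith
  -- the derivative
  have hderiv : ∀ u ∈ Set.Ico (0:ℝ) V,
      HasDerivWithinAt rc ((rc u - rt u) / (f' (rc u) - u)) (Set.Icc (0:ℝ) V) u ∧
      -(1 / β) ≤ (rc u - rt u) / (f' (rc u) - u) ∧ (rc u - rt u) / (f' (rc u) - u) < 0 := by
    intro u hu
    have hu' : u ∈ Set.Icc (0:ℝ) V := ⟨hu.1, hu.2.le⟩
    have hclt := hcltrt u hu
    have hmlb := hm u hu'
    have hqle := hrtleq u hu'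
    have hmpos : 0 < f' (rc u) - u := by
      have hp : 0 < β * (q u - rc u) := mul_pos hβ (by linarith)
      linarith
    have hdneg : (rc u - rt u) / (f' (rc u) - u) < 0 :=
      div_neg_of_neg_of_pos (by linarith) hmpos
    have hdlb : -(1 / β) ≤ (rc u - rt u) / (f' (rc u) - u) := by
      have h3 : (rt u - rc u) / (f' (rc u) - u) ≤ 1 / β := by
        rw [div_le_div_iff₀ hmpos hβ]
        have hp := mul_le_mul_of_nonneg_left (show rt u - rc u ≤ q u - rc u by linarith) hβ.le
        linarith
      have h4 : (rc u - rt u) / (f' (rc u) - u) = -((rt u - rc u) / (f' (rc u) - u)) := by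
        ring
      rw [h4]
      linarith
    refine ⟨?_, hdlb, hdneg⟩
    have hCpos : 0 < (2 / β + α / β + 2 * B / β ^ 2) / (f' (rc u) - u) := by
      apply div_pos ?_ hmpos
      positivity
    set C := (2 / β + α / β + 2 * B / β ^ 2) / (f' (rc u) - u) with hCd
    set d := (rc u - rt u) / (f' (rc u) - u) with hdd
    have hkey : ∀ w ∈ Set.Icc (0:ℝ) V,
        |rc w - rc u - (w - u) * d| ≤ C * (w - u) ^ 2 := by
      intro w hw
      have hΔ : |rc w - rc u| ≤ 2 / β * |w - u| := hlipabs u hu' w hw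
      have hE2a := htu (rc u) (hrcmem u hu') (rc w) (hrcmem w hw)
      have hE2b := htl (rc u) (hrcmem u hu') (rc w) (hrcmem w hw)
      have hE2 : |f (rc w) - f (rc u) - f' (rc u) * (rc w - rc u)| ≤
          B / 2 * (rc w - rc u) ^ 2 := by
        have p1 : 0 ≤ β / 2 * (rc w - rc u) ^ 2 := by positivity
        have p2 : 0 ≤ B / 2 * (rc w - rc u) ^ 2 := by positivity
        rw [abs_le]
        constructor
        · linarith [hE2b]
        · linarith [hE2a, p1, p2]
      have hE1a := henv u hu' w hw
      have hE1b := henv w hw u hu'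
      have hsq1 : 0 ≤ β * α / 2 * (q w - q u) ^ 2 := by positivity
      have hsq2 : 0 ≤ β * α / 2 * (q u - q w) ^ 2 := by positivity
      have hE1low : 0 ≤ ψ w - ψ u + (w - u) * rt u := by linarith [hE1b, hsq2]
      have hE1hi : ψ w - ψ u + (w - u) * rt u ≤ (w - u) * (rt u - rt w) := by
        linarith [hE1a, hsq1]
      have hE1 : |ψ w - ψ u + (w - u) * rt u| ≤ α / β * (w - u) ^ 2 := by
        rw [abs_of_nonneg hE1low]
        refine le_trans hE1hi ?_
        have h5 : (w - u) * (rt u - rt w) ≤ |w - u| * |rt u - rt w| := by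
          calc (w - u) * (rt u - rt w) ≤ |(w - u) * (rt u - rt w)| := le_abs_self _
          _ = |w - u| * |rt u - rt w| := abs_mul _ _
        have h6 := hrtabs u hu' w hw
        rw [abs_sub_comm u w] at h6
        have h7 : |w - u| * |rt u - rt w| ≤ |w - u| * (α / β * |w - u|) :=
          mul_le_mul_of_nonneg_left h6 (abs_nonneg _)
        have h8 : |w - u| * (α / β * |w - u|) = α / β * (w - u) ^ 2 := by
          rw [show |w - u| * (α / β * |w - u|) = α / β * (|w - u| * |w - u|) from by ring,
            abs_mul_abs_self]
          ring
        linarith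
      have hiw := hrceq w hw
      have hiu := hrceq u hu'
      have hmain : (f' (rc u) - u) * (rc w - rc u - (w - u) * d) =
          (w - u) * (rc w - rc u) + (ψ w - ψ u + (w - u) * rt u) -
            (f (rc w) - f (rc u) - f' (rc u) * (rc w - rc u)) := by
        rw [hdd, hiw, hiu]
        field_simp
        ring
      have habs : |(f' (rc u) - u) * (rc w - rc u - (w - u) * d)| ≤
          (2 / β + α / β + 2 * B / β ^ 2) * (w - u) ^ 2 := by
        rw [hmain]
        have t1 : |(w - u) * (rc w - rc u)| ≤ 2 / β * (w - u) ^ 2 := by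
          rw [abs_mul]
          have := mul_le_mul_of_nonneg_left hΔ (abs_nonneg (w - u))
          calc |w - u| * |rc w - rc u| ≤ |w - u| * (2 / β * |w - u|) := this
          _ = 2 / β * (|w - u| * |w - u|) := by ring
          _ = 2 / β * (w - u) ^ 2 := by rw [abs_mul_abs_self]; ring
        have t3 : |f (rc w) - f (rc u) - f' (rc u) * (rc w - rc u)| ≤
            2 * B / β ^ 2 * (w - u) ^ 2 := by
          refine le_trans hE2 ?_
          have hsq3 : (rc w - rc u) ^ 2 ≤ (2 / β * |w - u|) ^ 2 := by
            rw [← sq_abs (rc w - rc u)]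
            apply pow_le_pow_left₀ (abs_nonneg _) hΔ
          have hsq4 : (2 / β * |w - u|) ^ 2 = 4 / β ^ 2 * (w - u) ^ 2 := by
            rw [mul_pow, sq_abs]
            ring
          have h9 := mul_le_mul_of_nonneg_left hsq3 (show (0:ℝ) ≤ B / 2 by positivity)
          have h10 : B / 2 * (2 / β * |w - u|) ^ 2 = 2 * B / β ^ 2 * (w - u) ^ 2 := by
            rw [mul_pow, sq_abs]
            field_simp
          linarith [h9, h10]
        have tri : |(w - u) * (rc w - rc u) + (ψ w - ψ u + (w - u) * rt u) -
            (f (rc w) - f (rc u) - f' (rc u) * (rc w - rc u))| ≤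
            |(w - u) * (rc w - rc u)| + |ψ w - ψ u + (w - u) * rt u| +
            |f (rc w) - f (rc u) - f' (rc u) * (rc w - rc u)| := by
          calc _ ≤ |(w - u) * (rc w - rc u) + (ψ w - ψ u + (w - u) * rt u)| +
              |f (rc w) - f (rc u) - f' (rc u) * (rc w - rc u)| := abs_sub _ _
          _ ≤ _ := by gcongr; exact abs_add_le _ _
        linarith [tri, t1, t3, hE1]
      rw [abs_mul, abs_of_pos hmpos] at habs
      rw [hCd, div_mul_eq_mul_div, le_div_iff₀ hmpos]
      linarith
    rw [hasDerivWithinAt_iff_isLittleO, Asymptotics.isLittleO_iff]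
    intro ε hε
    have hev : ∀ᶠ w in nhdsWithin u (Set.Icc (0:ℝ) V), |w - u| < ε / C :=
      Filter.Eventually.filter_mono nhdsWithin_le_nhds
        (eventually_abs_sub_lt u (div_pos hε hCpos))
    filter_upwards [hev, self_mem_nhdsWithin] with w hw1 hw2
    have h1 := hkey w hw2
    have h2 : C * |w - u| ≤ ε := by
      have h3 := mul_le_mul_of_nonneg_left hw1.le hCpos.le
      calc C * |w - u| ≤ C * (ε / C) := h3
      _ = ε := by field_simp
    simp only [smul_eq_mul, Real.norm_eq_abs]
    calc |rc w - rc u - (w - u) * d| ≤ C * (w - u) ^ 2 := h1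
    _ = (C * |w - u|) * |w - u| := by
        rw [show (C * |w - u|) * |w - u| = C * (|w - u| * |w - u|) from by ring,
          abs_mul_abs_self]
        ring
    _ ≤ ε * |w - u| := mul_le_mul_of_nonneg_right h2 (abs_nonneg _)
  -- continuity of rc
  have hcont : ContinuousOn rc (Set.Icc (0:ℝ) V) := by
    have hK : (0:ℝ) ≤ 2 / β := by positivity
    apply LipschitzOnWith.continuousOn (K := Real.toNNReal (2 / β))
    apply LipschitzOnWith.of_dist_le_mul
    intro x hx y hy
    rw [Real.dist_eq, Real.dist_eq, Real.coe_toNNReal _ hK]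
    exact hlipabs y hy x hx
  refine ⟨?_, ?_, ?_⟩
  · -- strictly antitone
    apply strictAntiOn_of_deriv_neg (convex_Icc 0 V) hcont
    intro x hx
    rw [interior_Icc] at hx
    have hx' : x ∈ Set.Ico (0:ℝ) V := ⟨hx.1.le, hx.2⟩
    have hda : HasDerivAt rc ((rc x - rt x) / (f' (rc x) - x)) x :=
      (hderiv x hx').1.hasDerivAt (Icc_mem_nhds hx.1 hx.2)
    rw [hda.deriv]
    exact (hderiv x hx').2.2
  · intro u hu
    exact ⟨_, (hderiv u hu).1, (hderiv u hu).2.1, (hderiv u hu).2.2⟩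
  · -- Lipschitz with constant 1/β
    have main : ∀ u₁ ∈ Set.Icc (0:ℝ) V, ∀ u₂ ∈ Set.Icc (0:ℝ) V, u₁ ≤ u₂ →
        |rc u₁ - rc u₂| ≤ 1 / β * |u₁ - u₂| := by
      intro u₁ h1 u₂ h2 h12
      rcases lt_or_eq_of_le h2.2 with hlt | heq
      · -- u₂ < V : mean value inequality on [0, V)
        have hs : ∀ x ∈ Set.Ico (0:ℝ) V, HasDerivWithinAt rc
            ((rc x - rt x) / (f' (rc x) - x)) (Set.Ico (0:ℝ) V) x :=
          fun x hx => ((hderiv x hx).1).mono Set.Ico_subset_Icc_self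
        have hbound : ∀ x ∈ Set.Ico (0:ℝ) V,
            ‖(rc x - rt x) / (f' (rc x) - x)‖ ≤ 1 / β := by
          intro x hx
          rw [Real.norm_eq_abs, abs_le]
          have hb1 := (hderiv x hx).2.1
          have hb2 := (hderiv x hx).2.2
          have hb3 : (0:ℝ) ≤ 1 / β := by positivity
          exact ⟨by linarith, by linarith⟩
        have hmvt := (convex_Ico (0:ℝ) V).norm_image_sub_le_of_norm_hasDerivWithin_le hs hbound
          (show u₁ ∈ Set.Ico (0:ℝ) V from ⟨h1.1, lt_of_le_of_lt h12 hlt⟩)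
          (show u₂ ∈ Set.Ico (0:ℝ) V from ⟨h2.1, hlt⟩)
        rw [Real.norm_eq_abs, Real.norm_eq_abs] at hmvt
        rw [abs_sub_comm (rc u₁) (rc u₂), abs_sub_comm u₁ u₂]
        exact hmvt
      · -- u₂ = V
        rw [heq, hrcV]
        have h3 := (hsl 0 h0R (q u₁) (hqmem u₁ h1) (hqnn u₁ h1)).1
        rw [hrteq u₁ h1, hf'0] at h3
        have h4 : rc u₁ ≤ q u₁ := le_trans (hrcle u₁ h1) (hrtleq u₁ h1)
        have h5 : 0 ≤ rc u₁ := (hrcmem u₁ h1).1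
        have e1 : |rc u₁ - 0| = rc u₁ := by rw [sub_zero]; exact abs_of_nonneg h5
        have e2 : |u₁ - V| = V - u₁ := by
          rw [abs_sub_comm]; exact abs_of_nonneg (by linarith [h1.2])
        rw [e1, e2, show (1:ℝ) / β * (V - u₁) = (V - u₁) / β from by ring, le_div_iff₀ hβ]
        have h6 := mul_le_mul_of_nonneg_left h4 hβ.le
        linarith
    intro u₁ h1 u₂ h2
    rcases le_total u₁ u₂ with h | h
    · exact main u₁ h1 u₂ h2 h
    · rw [abs_sub_comm (rc u₁) (rc u₂), abs_sub_comm u₁ u₂]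
      exact main u₂ h2 u₁ h1 h
end

section
/- The map u ↦ ρ̂_u is strictly decreasing on [0,V]; moreover it is differentiable at every u ∈ [0,V) with −∞ < ρ̂'(u) ≤ −1/B. -/
set_option maxHeartbeats 4000000 in
theorem stmt_7
    (R β B α V : ℝ) (f v f' f'' v' : ℝ → ℝ)
    (hR : 0 < R) (hβ : 0 < β) (hB : 0 < B) (hα : α ∈ Set.Ioo (0:ℝ) 1)
    (hf0 : f 0 = 0) (hfR : f R = 0)
    (hfv : ∀ ρ ∈ Set.Icc (0:ℝ) R, f ρ = ρ * v ρ)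
    (hfd1 : ∀ ρ ∈ Set.Icc (0:ℝ) R, HasDerivAt f (f' ρ) ρ)
    (hfd2 : ∀ ρ ∈ Set.Icc (0:ℝ) R, HasDerivAt f' (f'' ρ) ρ)
    (hfc : ContinuousOn f'' (Set.Icc (0:ℝ) R))
    (hconc : ∀ ρ ∈ Set.Icc (0:ℝ) R, -B ≤ f'' ρ ∧ f'' ρ ≤ -β)
    (hvd : ∀ ρ ∈ Set.Icc (0:ℝ) R, HasDerivAt v (v' ρ) ρ)
    (hv'neg : ∀ ρ ∈ Set.Ioo (0:ℝ) R, v' ρ < 0)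
    (hvnn : ∀ ρ ∈ Set.Icc (0:ℝ) R, 0 ≤ v ρ)
    (hV : V = v 0)
    (rt : ℝ → ℝ)
    (hrt : ∀ u ∈ Set.Icc (0:ℝ) V, rt u ∈ Set.Icc (0:ℝ) (α * R) ∧
      HasDerivAt (fun x => α * f (x / α)) u (rt u))
    (rc rh : ℝ → ℝ)
    (hrc : ∀ u ∈ Set.Icc (0:ℝ) V, IsLeast
      {ρ : ℝ | ρ ∈ Set.Icc (0:ℝ) R ∧ f ρ = α * f (rt u / α) + u * (ρ - rt u)} (rc u))
    (hrh : ∀ u ∈ Set.Icc (0:ℝ) V, IsGreatest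
      {ρ : ℝ | ρ ∈ Set.Icc (0:ℝ) R ∧ f ρ = α * f (rt u / α) + u * (ρ - rt u)} (rh u))
    :
    StrictAntiOn rh (Set.Icc (0:ℝ) V) ∧
    ∀ u ∈ Set.Ico (0:ℝ) V, ∃ d : ℝ,
      HasDerivWithinAt rh d (Set.Icc (0:ℝ) V) u ∧ d ≤ -(1 / B) := by
  obtain ⟨hα0, hα1⟩ := hα
  have hfcont : ContinuousOn f (Set.Icc 0 R) :=
    fun x hx => (hfd1 x hx).continuousAt.continuousWithinAt
  have hf'cont : ContinuousOn f' (Set.Icc 0 R) :=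
    fun x hx => (hfd2 x hx).continuousAt.continuousWithinAt
  have hanti : StrictAntiOn f' (Set.Icc 0 R) := by
    apply strictAntiOn_of_deriv_neg (convex_Icc 0 R) hf'cont
    intro x hx
    rw [interior_Icc] at hx
    rw [(hfd2 x (Set.mem_Icc_of_Ioo hx)).deriv]
    linarith [(hconc x (Set.mem_Icc_of_Ioo hx)).2]
  have hlip : ∀ x ∈ Set.Icc (0:ℝ) R, ∀ y ∈ Set.Icc (0:ℝ) R, x ≤ y →
      β * (y - x) ≤ f' x - f' y ∧ f' x - f' y ≤ B * (y - x) := by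
    intro x hx y hy hxy
    rcases eq_or_lt_of_le hxy with rfl | hlt
    · constructor <;> simp
    · obtain ⟨c, hc, hcs⟩ := exists_hasDerivAt_eq_slope f' f'' hlt
        (hf'cont.mono (Set.Icc_subset_Icc hx.1 hy.2))
        (fun z hz => hfd2 z ⟨le_trans hx.1 hz.1.le, le_trans hz.2.le hy.2⟩)
      have hcI : c ∈ Set.Icc (0:ℝ) R := ⟨le_trans hx.1 hc.1.le, le_trans hc.2.le hy.2⟩
      have h1 := (hconc c hcI).1
      have h2 := (hconc c hcI).2
      rw [eq_div_iff (sub_ne_zero.mpr hlt.ne')] at hcs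
      constructor <;> nlinarith
  have hMVT : ∀ x ∈ Set.Icc (0:ℝ) R, ∀ y ∈ Set.Icc (0:ℝ) R, x < y →
      ∃ c ∈ Set.Ioo x y, f y - f x = f' c * (y - x) := by
    intro x hx y hy hlt
    obtain ⟨c, hc, hcs⟩ := exists_hasDerivAt_eq_slope f f' hlt
      (hfcont.mono (Set.Icc_subset_Icc hx.1 hy.2))
      (fun z hz => hfd1 z ⟨le_trans hx.1 hz.1.le, le_trans hz.2.le hy.2⟩)
    rw [eq_div_iff (sub_ne_zero.mpr hlt.ne')] at hcs
    exact ⟨c, hc, hcs.symm⟩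
  have hconcav' : ∀ a ∈ Set.Icc (0:ℝ) R, ∀ b ∈ Set.Icc (0:ℝ) R, a ≠ b →
      f a < f b + f' b * (a - b) := by
    intro a ha b hb hab
    rcases lt_or_gt_of_ne hab with h | h
    · obtain ⟨c, hc, hcs⟩ := hMVT a ha b hb h
      have := hanti ⟨le_trans ha.1 hc.1.le, le_trans hc.2.le hb.2⟩ hb hc.2
      nlinarith
    · obtain ⟨c, hc, hcs⟩ := hMVT b hb a ha h
      have := hanti hb ⟨le_trans hb.1 hc.1.le, le_trans hc.2.le ha.2⟩ hc.1
      nlinarith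
  have hconcav : ∀ a ∈ Set.Icc (0:ℝ) R, ∀ b ∈ Set.Icc (0:ℝ) R,
      f a ≤ f b + f' b * (a - b) := by
    intro a ha b hb
    rcases eq_or_ne a b with rfl | hab
    · simp
    · exact (hconcav' a ha b hb hab).le
  -- f' 0 = V
  have h0I : (0:ℝ) ∈ Set.Icc (0:ℝ) R := ⟨le_rfl, hR.le⟩
  have hf'0 : f' 0 = V := by
    have hprod : HasDerivAt (fun ρ => ρ * v ρ) (1 * v 0 + 0 * v' 0) 0 :=
      (hasDerivAt_id 0).mul (hvd 0 h0I)
    have h1 : HasDerivWithinAt f (1 * v 0 + 0 * v' 0) (Set.Icc 0 R) 0 :=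
      (hprod.hasDerivWithinAt).congr hfv (hfv 0 h0I)
    have h1' : HasDerivWithinAt f (v 0) (Set.Icc 0 R) 0 := by simpa using h1
    have h2 : HasDerivWithinAt f (f' 0) (Set.Icc 0 R) 0 := (hfd1 0 h0I).hasDerivWithinAt
    have hu : UniqueDiffWithinAt ℝ (Set.Icc (0:ℝ) R) 0 := (uniqueDiffOn_Icc hR) 0 h0I
    rw [hV]
    exact hu.eq_deriv _ h2 h1'
  -- per-u facts
  have hsI : ∀ u ∈ Set.Icc (0:ℝ) V, rt u / α ∈ Set.Icc (0:ℝ) R := by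
    intro u hu
    obtain ⟨h1, h2⟩ := (hrt u hu).1
    constructor
    · positivity
    · rw [div_le_iff₀ hα0]; linarith
  have hrta : ∀ u : ℝ, α * (rt u / α) = rt u := by
    intro u; field_simp
  have hf's : ∀ u ∈ Set.Icc (0:ℝ) V, f' (rt u / α) = u := by
    intro u hu
    have hcomp : HasDerivAt (fun x => α * f (x / α)) (α * (f' (rt u / α) * (1 / α))) (rt u) := by
      have hdiv : HasDerivAt (fun x : ℝ => x / α) (1 / α) (rt u) := by
        simpa using (hasDerivAt_id (rt u)).div_const α
      exact ((hfd1 (rt u / α) (hsI u hu)).comp (rt u) hdiv).const_mul α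
    have := (hrt u hu).2.unique hcomp
    field_simp at this
    linarith
  -- opaque tangency point
  set S : ℝ → ℝ := fun u => rt u / α with hSdef
  have hS2 : ∀ u : ℝ, rt u / α = S u := fun _ => rfl
  have hrta : ∀ u : ℝ, rt u = α * S u := by
    intro u; rw [← hS2]; field_simp
  have hSI : ∀ u ∈ Set.Icc (0:ℝ) V, S u ∈ Set.Icc (0:ℝ) R := by
    intro u hu; rw [← hS2]; exact hsI u hu
  have hf'S : ∀ u ∈ Set.Icc (0:ℝ) V, f' (S u) = u := by
    intro u hu; rw [← hS2]; exact hf's u hu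
  -- the affine gap function
  set g : ℝ → ℝ → ℝ := fun w ρ => f ρ - (α * f (S w) + w * (ρ - α * S w)) with hgdef
  have hgcont : ∀ u : ℝ, ContinuousOn (g u) (Set.Icc 0 R) := by
    intro u
    apply hfcont.sub
    exact (continuous_const.add (continuous_const.mul (continuous_id.sub continuous_const))).continuousOn
  have hgmem : ∀ u ∈ Set.Icc (0:ℝ) V, ∀ ρ0 ∈ Set.Icc (0:ℝ) R, g u ρ0 = 0 → ρ0 ≤ rh u := by
    intro u hu ρ0 h1 h2
    refine (hrh u hu).2 ⟨h1, ?_⟩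
    rw [hS2, hrta u]
    simp only [hgdef] at h2; linarith
  have hgmem' : ∀ u ∈ Set.Icc (0:ℝ) V, ∀ ρ0 ∈ Set.Icc (0:ℝ) R, g u ρ0 = 0 → rc u ≤ ρ0 := by
    intro u hu ρ0 h1 h2
    refine (hrc u hu).2 ⟨h1, ?_⟩
    rw [hS2, hrta u]
    simp only [hgdef] at h2; linarith
  have hrhI : ∀ u ∈ Set.Icc (0:ℝ) V, rh u ∈ Set.Icc (0:ℝ) R := fun u hu => (hrh u hu).1.1
  have hrcI : ∀ u ∈ Set.Icc (0:ℝ) V, rc u ∈ Set.Icc (0:ℝ) R := fun u hu => (hrc u hu).1.1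
  have hgrh : ∀ u ∈ Set.Icc (0:ℝ) V, g u (rh u) = 0 := by
    intro u hu
    have h := (hrh u hu).1.2
    rw [hS2, hrta u] at h
    simp only [hgdef]; linarith
  have hgrc : ∀ u ∈ Set.Icc (0:ℝ) V, g u (rc u) = 0 := by
    intro u hu
    have h := (hrc u hu).1.2
    rw [hS2, hrta u] at h
    simp only [hgdef]; linarith
  have hL0 : ∀ u ∈ Set.Icc (0:ℝ) V, 0 ≤ f (S u) - u * S u := by
    intro u hu
    have := hconcav 0 h0I (S u) (hSI u hu)
    rw [hf0, hf'S u hu] at this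
    linarith
  have hg0 : ∀ u ∈ Set.Icc (0:ℝ) V, g u 0 ≤ 0 := by
    intro u hu
    have h1 := hL0 u hu
    simp only [hgdef]
    rw [hf0]
    nlinarith [mul_nonneg hα0.le h1]
  have hgR : ∀ u ∈ Set.Icc (0:ℝ) V, g u R ≤ 0 := by
    intro u hu
    have h1 := hL0 u hu
    simp only [hgdef]
    rw [hfR]
    nlinarith [mul_nonneg hα0.le h1, mul_nonneg hu.1 hR.le]
  -- F: any point with nonneg gap is ≤ rh u (resp. ≥ rc u)
  have hF : ∀ u ∈ Set.Icc (0:ℝ) V, ∀ ρ0 ∈ Set.Icc (0:ℝ) R, 0 ≤ g u ρ0 → ρ0 ≤ rh u := by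
    intro u hu ρ0 h0 hpos
    have hsub : Set.Icc ρ0 R ⊆ Set.Icc (0:ℝ) R := Set.Icc_subset_Icc h0.1 le_rfl
    have hiv := intermediate_value_Icc' h0.2 ((hgcont u).mono hsub)
    obtain ⟨t, htI, ht⟩ := hiv (⟨hgR u hu, hpos⟩ : (0:ℝ) ∈ Set.Icc (g u R) (g u ρ0))
    have := hgmem u hu t (hsub htI) ht
    linarith [htI.1]
  have hF' : ∀ u ∈ Set.Icc (0:ℝ) V, ∀ ρ0 ∈ Set.Icc (0:ℝ) R, 0 ≤ g u ρ0 → rc u ≤ ρ0 := by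
    intro u hu ρ0 h0 hpos
    have hsub : Set.Icc 0 ρ0 ⊆ Set.Icc (0:ℝ) R := Set.Icc_subset_Icc le_rfl h0.2
    have hiv := intermediate_value_Icc h0.1 ((hgcont u).mono hsub)
    obtain ⟨t, htI, ht⟩ := hiv (⟨hg0 u hu, hpos⟩ : (0:ℝ) ∈ Set.Icc (g u 0) (g u ρ0))
    have := hgmem' u hu t (hsub htI) ht
    linarith [htI.2]
  have hgs : ∀ u : ℝ, g u (S u) = (1 - α) * (f (S u) - u * S u) := by
    intro u
    simp only [hgdef]
    ring
  -- MVT for g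
  have hMVTg : ∀ u : ℝ, ∀ x ∈ Set.Icc (0:ℝ) R, ∀ y ∈ Set.Icc (0:ℝ) R, x < y →
      ∃ c ∈ Set.Ioo x y, g u y - g u x = (f' c - u) * (y - x) := by
    intro u x hx y hy hlt
    obtain ⟨c, hc, hcs⟩ := hMVT x hx y hy hlt
    refine ⟨c, hc, ?_⟩
    simp only [hgdef]
    nlinarith [hcs]
  -- g nonneg between rc and rh
  have hmid : ∀ u ∈ Set.Icc (0:ℝ) V, ∀ ρ0, rc u ≤ ρ0 → ρ0 ≤ rh u → 0 ≤ g u ρ0 := by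
    intro u hu ρ0 hl hr
    by_contra hneg
    push_neg at hneg
    have hne1 : ρ0 ≠ rc u := fun h => by rw [h, hgrc u hu] at hneg; linarith
    have hne2 : ρ0 ≠ rh u := fun h => by rw [h, hgrh u hu] at hneg; linarith
    have hl' : rc u < ρ0 := lt_of_le_of_ne hl (Ne.symm hne1)
    have hr' : ρ0 < rh u := lt_of_le_of_ne hr hne2
    have hρ0I : ρ0 ∈ Set.Icc (0:ℝ) R := ⟨le_trans (hrcI u hu).1 hl, le_trans hr (hrhI u hu).2⟩
    obtain ⟨c1, hc1, hcs1⟩ := hMVTg u (rc u) (hrcI u hu) ρ0 hρ0I hl'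
    obtain ⟨c2, hc2, hcs2⟩ := hMVTg u ρ0 hρ0I (rh u) (hrhI u hu) hr'
    rw [hgrc u hu] at hcs1
    rw [hgrh u hu] at hcs2
    have hf1 : f' c1 < u := by nlinarith
    have hf2 : u < f' c2 := by nlinarith
    have hc1I : c1 ∈ Set.Icc (0:ℝ) R := ⟨le_trans (hrcI u hu).1 hc1.1.le, le_trans hc1.2.le hρ0I.2⟩
    have hc2I : c2 ∈ Set.Icc (0:ℝ) R := ⟨le_trans hρ0I.1 hc2.1.le, le_trans hc2.2.le (hrhI u hu).2⟩
    have := hanti hc1I hc2I (lt_trans hc1.2 hc2.1)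
    linarith
  -- S u ≤ rh u and rc u ≤ S u
  have hsrh : ∀ u ∈ Set.Icc (0:ℝ) V, S u ≤ rh u := by
    intro u hu
    apply hF u hu _ (hSI u hu)
    rw [hgs u]
    nlinarith [hL0 u hu]
  have hsrc : ∀ u ∈ Set.Icc (0:ℝ) V, rc u ≤ S u := by
    intro u hu
    apply hF' u hu _ (hSI u hu)
    rw [hgs u]
    nlinarith [hL0 u hu]
  -- Part 1: strict antitonicity
  have part1 : StrictAntiOn rh (Set.Icc (0:ℝ) V) := by
    intro u1 hu1 u2 hu2 h12
    have hs1 := hSI u1 hu1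
    have hs2 := hSI u2 hu2
    have hne : S u2 ≠ S u1 := by
      intro h
      have h' := hf'S u1 hu1
      rw [← h, hf'S u2 hu2] at h'
      exact h12.ne' h'
    have hρ1s : S u1 ≤ rh u1 := hsrh u1 hu1
    have hkey : g u2 (rh u1) < 0 := by
      have hcv := hconcav' (S u1) hs1 (S u2) hs2 (Ne.symm hne)
      rw [hf'S u2 hu2] at hcv
      have heq1 := hgrh u1 hu1
      simp only [hgdef] at heq1 ⊢
      nlinarith [mul_pos hα0 (sub_pos.mpr hcv),
        mul_nonneg (sub_pos.mpr h12).le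
          (sub_nonneg.mpr (le_trans (by nlinarith [hs1.1] : α * S u1 ≤ S u1) hρ1s))]
    by_contra hle
    push_neg at hle
    have hchain : rc u2 ≤ rh u1 := le_trans (hsrc u2 hu2) (le_trans ?_ hρ1s)
    · have := hmid u2 hu2 (rh u1) hchain hle
      linarith
    · -- S u2 ≤ S u1
      rcases lt_or_ge (S u2) (S u1) with h | h
      · exact h.le
      · rcases eq_or_lt_of_le h with h' | h'
        · exact h'.ge
        · have := hanti hs1 hs2 h'
          rw [hf'S u1 hu1, hf'S u2 hu2] at this
          linarith
  -- Taylor estimate for f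
  have hTaylor : ∀ a ∈ Set.Icc (0:ℝ) R, ∀ b ∈ Set.Icc (0:ℝ) R,
      |f b - f a - f' a * (b - a)| ≤ B * |b - a| * |b - a| := by
    intro a ha b hb
    rcases lt_trichotomy a b with h | h | h
    · obtain ⟨c, hc, hcs⟩ := hMVT a ha b hb h
      have hcI : c ∈ Set.Icc (0:ℝ) R := ⟨le_trans ha.1 hc.1.le, le_trans hc.2.le hb.2⟩
      have h1 := (hlip a ha c hcI hc.1.le).2
      have h2 := (hlip a ha c hcI hc.1.le).1
      have heq : f b - f a - f' a * (b - a) = (f' c - f' a) * (b - a) := by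
        rw [hcs]; ring
      rw [heq, abs_mul, abs_of_pos (sub_pos.mpr h)]
      have hab : |f' c - f' a| ≤ B * (b - a) := by
        rw [abs_le]
        constructor <;>
          nlinarith [mul_pos hB (sub_pos.mpr hc.2), mul_pos hB (sub_pos.mpr h),
            mul_pos hβ (sub_pos.mpr hc.1)]
      exact mul_le_mul_of_nonneg_right hab (by linarith)
    · subst h; simp
    · obtain ⟨c, hc, hcs⟩ := hMVT b hb a ha h
      have hcI : c ∈ Set.Icc (0:ℝ) R := ⟨le_trans hb.1 hc.1.le, le_trans hc.2.le ha.2⟩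
      have h1 := (hlip c hcI a ha hc.2.le).2
      have h2 := (hlip c hcI a ha hc.2.le).1
      have heq : f b - f a - f' a * (b - a) = (f' a - f' c) * (a - b) := by
        nlinarith [hcs]
      rw [heq, abs_mul, abs_of_pos (sub_pos.mpr h)]
      have hab : |f' a - f' c| ≤ B * (a - b) := by
        rw [abs_le]
        constructor <;>
          nlinarith [mul_pos hB (sub_pos.mpr hc.1), mul_pos hB (sub_pos.mpr h),
            mul_pos hβ (sub_pos.mpr hc.2)]
      calc |f' a - f' c| * (a - b) ≤ (B * (a - b)) * (a - b) :=
            mul_le_mul_of_nonneg_right hab (by linarith)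
        _ = B * |b - a| * |b - a| := by rw [abs_of_neg (by linarith : b - a < 0)]; ring
  refine ⟨part1, ?_⟩
  -- Part 2 : differentiability
  intro u hu
  have huV : u ∈ Set.Icc (0:ℝ) V := ⟨hu.1, hu.2.le⟩
  have hVpos : 0 < V := lt_of_le_of_lt hu.1 hu.2
  have hsI' := hSI u huV
  have hs0 : 0 < S u := by
    rcases eq_or_lt_of_le hsI'.1 with h | h
    · exfalso
      have h' := hf'S u huV
      rw [← h, hf'0] at h'
      linarith [hu.2]
    · exact h
  have hsρ : S u < rh u := by
    have hLpos : 0 < f (S u) - u * S u := by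
      have := hconcav' 0 h0I (S u) hsI' (ne_of_lt hs0)
      rw [hf0, hf'S u huV] at this
      linarith
    rcases eq_or_lt_of_le (hsrh u huV) with h | h
    · exfalso
      have h1 := hgrh u huV
      rw [← h, hgs u] at h1
      nlinarith
    · exact h
  have hD : f' (rh u) < u := by
    have := hanti hsI' (hrhI u huV) hsρ
    rw [hf'S u huV] at this
    exact this
  obtain ⟨Dn, hDndef⟩ : ∃ x : ℝ, x = u - f' (rh u) := ⟨_, rfl⟩
  have hDn0 : 0 < Dn := by rw [hDndef]; linarith
  obtain ⟨d, hddef⟩ : ∃ x : ℝ, x = (rh u - α * S u) / (f' (rh u) - u) := ⟨_, rfl⟩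
  have hDne : f' (rh u) - u ≠ 0 := by linarith
  have hd2 : d * (f' (rh u) - u) = rh u - α * S u := by
    rw [hddef]; exact div_mul_cancel₀ _ hDne
  refine ⟨d, ?_, ?_⟩
  swap
  · -- d ≤ -(1/B)
    have h1 : u - f' (rh u) ≤ B * (rh u - S u) := by
      have := (hlip (S u) hsI' (rh u) (hrhI u huV) hsρ.le).2
      rw [hf'S u huV] at this
      linarith
    have h2 : B * (rh u - S u) ≤ B * (rh u - α * S u) := by
      nlinarith [mul_nonneg (mul_nonneg hB.le (by linarith : (0:ℝ) ≤ 1 - α)) hs0.le]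
    rw [hddef, div_le_iff_of_neg (by linarith : f' (rh u) - u < 0)]
    have hBB : -(1/B) * (f' (rh u) - u) * B = u - f' (rh u) := by field_simp; ring
    nlinarith [hB]
  -- derivative estimates
  obtain ⟨C1, hC1def⟩ : ∃ x : ℝ, x = 2 * R + V / β := ⟨_, rfl⟩
  have hC1 : 0 < C1 := by rw [hC1def]; positivity
  -- Lipschitz bound for S
  have hslip : ∀ w ∈ Set.Icc (0:ℝ) V, |S w - S u| ≤ |w - u| / β := by
    intro w hw
    have habs : 0 ≤ |w - u| / β := by positivity
    rw [abs_sub_le_iff]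
    constructor
    · rcases le_total (S w) (S u) with h | h
      · linarith
      · have := (hlip (S u) hsI' (S w) (hSI w hw) h).1
        rw [hf'S u huV, hf'S w hw] at this
        rw [le_div_iff₀ hβ]
        have : u - w ≤ |w - u| := by
          rw [abs_sub_comm]; exact le_abs_self _
        nlinarith [(hlip (S u) hsI' (S w) (hSI w hw) h).1, hf'S u huV, hf'S w hw]
    · rcases le_total (S u) (S w) with h | h
      · linarith
      · have h1 := (hlip (S w) (hSI w hw) (S u) hsI' h).1
        rw [hf'S u huV, hf'S w hw] at h1
        rw [le_div_iff₀ hβ]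
        have h2 : w - u ≤ |w - u| := le_abs_self _
        nlinarith

  -- expansion of the Legendre-type term
  have hLlip : ∀ w ∈ Set.Icc (0:ℝ) V,
      |f (S w) - w * S w - (f (S u) - u * S u) + S u * (w - u)| ≤ |w - u| * |S w - S u| := by
    intro w hw
    rcases lt_trichotomy (S u) (S w) with h | h | h
    · obtain ⟨c, hc, hcs⟩ := hMVT (S u) hsI' (S w) (hSI w hw) h
      have hcI : c ∈ Set.Icc (0:ℝ) R := ⟨le_trans hsI'.1 hc.1.le, le_trans hc.2.le (hSI w hw).2⟩
      have hu1 : f' c < f' (S u) := hanti hsI' hcI hc.1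
      have hu2 : f' (S w) < f' c := hanti hcI (hSI w hw) hc.2
      rw [hf'S u huV] at hu1
      rw [hf'S w hw] at hu2
      have heq : f (S w) - w * S w - (f (S u) - u * S u) + S u * (w - u)
          = (f' c - w) * (S w - S u) := by linear_combination hcs
      rw [heq, abs_mul]
      apply mul_le_mul_of_nonneg_right _ (abs_nonneg _)
      rw [abs_le]
      constructor
      · nlinarith [abs_nonneg (w - u)]
      · have : u - w ≤ |w - u| := by rw [abs_sub_comm]; exact le_abs_self _
        linarith
    · have huw : u = w := by rw [← hf'S u huV, ← hf'S w hw, h]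
      rw [← h, ← huw]
      simp
    · obtain ⟨c, hc, hcs⟩ := hMVT (S w) (hSI w hw) (S u) hsI' h
      have hcI : c ∈ Set.Icc (0:ℝ) R := ⟨le_trans (hSI w hw).1 hc.1.le, le_trans hc.2.le hsI'.2⟩
      have hu1 : f' c < f' (S w) := hanti (hSI w hw) hcI hc.1
      have hu2 : f' (S u) < f' c := hanti hcI hsI' hc.2
      rw [hf'S u huV] at hu2
      rw [hf'S w hw] at hu1
      have heq : f (S w) - w * S w - (f (S u) - u * S u) + S u * (w - u)
          = (f' c - w) * (S w - S u) := by linear_combination -hcs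
      rw [heq, abs_mul]
      apply mul_le_mul_of_nonneg_right _ (abs_nonneg _)
      rw [abs_le]
      constructor
      · have : -(|w - u|) ≤ u - w := by
          rw [abs_sub_comm]; exact neg_abs_le _
        linarith
      · linarith [abs_nonneg (w - u)]
  -- uniform bound on the change of g
  have hgdiff : ∀ w ∈ Set.Icc (0:ℝ) V, ∀ ρ0 ∈ Set.Icc (0:ℝ) R,
      |g w ρ0 - g u ρ0| ≤ C1 * |w - u| := by
    intro w hw ρ0 hρ0
    set E : ℝ := f (S w) - w * S w - (f (S u) - u * S u) + S u * (w - u) with hEdef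
    have hE : |E| ≤ |w - u| * |S w - S u| := hLlip w hw
    have hs := hslip w hw
    have heV : |w - u| ≤ V := by
      rw [abs_le]
      constructor
      · linarith [hw.1, huV.2]
      · linarith [hw.2, huV.1]
    have hE2 : |E| ≤ |w - u| * (V / β) := by
      refine le_trans hE (le_trans (mul_le_mul_of_nonneg_left hs (abs_nonneg _)) ?_)
      have hd : |w - u| / β ≤ V / β := by gcongr
      exact mul_le_mul_of_nonneg_left hd (abs_nonneg _)
    have heq : g w ρ0 - g u ρ0 = -(α * E) + α * S u * (w - u) + (u - w) * ρ0 := by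
      rw [hEdef]; simp only [hgdef]; ring
    have b1 : |(-(α * E))| ≤ |w - u| * (V / β) := by
      rw [abs_neg, abs_mul, abs_of_pos hα0]
      calc α * |E| ≤ 1 * |E| := mul_le_mul_of_nonneg_right hα1.le (abs_nonneg E)
        _ = |E| := one_mul _
        _ ≤ |w - u| * (V / β) := hE2
    have b2 : |α * S u * (w - u)| ≤ R * |w - u| := by
      rw [abs_mul, abs_of_nonneg (mul_nonneg hα0.le hs0.le)]
      apply mul_le_mul_of_nonneg_right _ (abs_nonneg _)
      nlinarith [hsI'.2, hs0.le]
    have b3 : |(u - w) * ρ0| ≤ R * |w - u| := by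
      rw [abs_mul, abs_of_nonneg hρ0.1, abs_sub_comm]
      calc |w - u| * ρ0 ≤ |w - u| * R := mul_le_mul_of_nonneg_left hρ0.2 (abs_nonneg _)
        _ = R * |w - u| := mul_comm _ _
    calc |g w ρ0 - g u ρ0| ≤ |(-(α * E))| + |α * S u * (w - u)| + |(u - w) * ρ0| := by
          rw [heq]; exact abs_add_three _ _ _
      _ ≤ C1 * |w - u| := by rw [hC1def]; linarith [b1, b2, b3]
  -- upper semicontinuity bound
  have hup : ∀ w ∈ Set.Icc (0:ℝ) V, rh w - rh u ≤ C1 * |w - u| / Dn := by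
    intro w hw
    rcases le_or_gt (rh w) (rh u) with h | h
    · have : 0 ≤ C1 * |w - u| / Dn :=
        div_nonneg (mul_nonneg hC1.le (abs_nonneg _)) hDn0.le
      linarith
    · obtain ⟨c, hc, hcs⟩ := hMVTg u (rh u) (hrhI u huV) (rh w) (hrhI w hw) h
      rw [hgrh u huV] at hcs
      have hcI : c ∈ Set.Icc (0:ℝ) R :=
        ⟨le_trans (hrhI u huV).1 hc.1.le, le_trans hc.2.le (hrhI w hw).2⟩
      have h2 : f' c < f' (rh u) := hanti (hrhI u huV) hcI hc.1
      have h4 := (hgdiff w hw (rh w) (hrhI w hw))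
      rw [hgrh w hw] at h4
      have h5 := (abs_le.mp h4).2
      rw [le_div_iff₀ hDn0]
      nlinarith [mul_pos (sub_pos.mpr h) (sub_pos.mpr h2)]
  -- lower bound (quantitative)
  obtain ⟨δ0, hδ0def⟩ : ∃ x : ℝ, x = min (S u * Dn / (3 * C1)) (Dn ^ 2 / (6 * B * C1)) := ⟨_, rfl⟩
  have hδ0 : 0 < δ0 := by
    rw [hδ0def]
    apply lt_min
    · exact div_pos (mul_pos hs0 hDn0) (by linarith)
    · exact div_pos (pow_pos hDn0 2) (by nlinarith)
  have hlow : ∀ w ∈ Set.Icc (0:ℝ) V, |w - u| ≤ δ0 →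
      rh u - rh w ≤ 3 * C1 * |w - u| / Dn := by
    intro w hw hδ
    rcases eq_or_lt_of_le (abs_nonneg (w - u)) with he | he
    · have hw0 : w - u = 0 := abs_eq_zero.mp he.symm
      have : w = u := by linarith
      rw [this]
      simp
    · obtain ⟨t, htdef⟩ : ∃ x : ℝ, x = 3 * C1 * |w - u| / Dn := ⟨_, rfl⟩
      have htDn : t * Dn = 3 * C1 * |w - u| := by
        rw [htdef]; field_simp
      have ht0 : 0 < t := by
        rw [htdef]; exact div_pos (mul_pos (mul_pos (by linarith) hC1) he) hDn0
      rw [hδ0def] at hδ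
      have hδ1 : |w - u| ≤ S u * Dn / (3 * C1) := le_trans hδ (min_le_left _ _)
      have hδ2 : |w - u| ≤ Dn ^ 2 / (6 * B * C1) := le_trans hδ (min_le_right _ _)
      have hts : t ≤ S u := by
        rw [le_div_iff₀ (by linarith : (0:ℝ) < 3 * C1)] at hδ1
        have h' : t * Dn ≤ S u * Dn := by linarith
        exact le_of_mul_le_mul_right h' hDn0
      have htB : B * t ≤ Dn / 2 := by
        rw [le_div_iff₀ (mul_pos (by linarith : (0:ℝ) < 6 * B) hC1)] at hδ2
        have h'' : B * (t * Dn) = B * (3 * C1 * |w - u|) := by rw [htDn]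
        have h' : (B * t) * Dn ≤ (Dn / 2) * Dn := by nlinarith [h'']
        exact le_of_mul_le_mul_right h' hDn0
      have hρtI : rh u - t ∈ Set.Icc (0:ℝ) R :=
        ⟨by linarith [hsρ, hs0], by linarith [(hrhI u huV).2, ht0]⟩
      obtain ⟨c, hc, hcs⟩ := hMVTg u (rh u - t) hρtI (rh u) (hrhI u huV) (by linarith)
      rw [hgrh u huV] at hcs
      have hcI : c ∈ Set.Icc (0:ℝ) R := ⟨le_trans hρtI.1 hc.1.le, le_trans hc.2.le (hrhI u huV).2⟩
      have h2 : f' c < f' (rh u - t) := hanti hρtI hcI hc.1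
      have h3 : f' (rh u - t) - f' (rh u) ≤ B * t := by
        have h'' := (hlip (rh u - t) hρtI (rh u) (hrhI u huV) (by linarith)).2
        nlinarith [h'']
      have hgt : C1 * |w - u| < g u (rh u - t) := by
        have hfc : f' c - u ≤ -(Dn / 2) := by
          rw [hDndef] at htB ⊢
          linarith
        have hg5 : g u (rh u - t) = (u - f' c) * t := by linear_combination -hcs
        have h5 : (Dn / 2) * t ≤ g u (rh u - t) := by
          rw [hg5]
          exact mul_le_mul_of_nonneg_right (by linarith) ht0.le
        nlinarith [mul_pos hC1 he]
      have h7 := (abs_le.mp (hgdiff w hw (rh u - t) hρtI)).1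
      have h8 : 0 ≤ g w (rh u - t) := by linarith
      have := hF w hw (rh u - t) hρtI h8
      rw [← htdef]
      linarith
  -- Lipschitz bound for rh near u
  obtain ⟨K, hKdef⟩ : ∃ x : ℝ, x = 3 * C1 / Dn := ⟨_, rfl⟩
  have hK0 : 0 < K := by rw [hKdef]; exact div_pos (by linarith) hDn0
  have hlipρ : ∀ w ∈ Set.Icc (0:ℝ) V, |w - u| ≤ δ0 → |rh w - rh u| ≤ K * |w - u| := by
    intro w hw hδ
    have h1 := hup w hw
    have h2 := hlow w hw hδ
    have he1 : 3 * C1 * |w - u| / Dn = K * |w - u| := by rw [hKdef]; ring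
    have he2 : K * |w - u| = 3 * (C1 * |w - u| / Dn) := by rw [hKdef]; ring
    have he3 : 0 ≤ C1 * |w - u| / Dn := div_nonneg (mul_nonneg hC1.le (abs_nonneg _)) hDn0.le
    rw [abs_le]
    constructor
    · rw [he1] at h2; linarith
    · linarith [he2]
  -- the main quadratic estimate
  obtain ⟨C2, hC2def⟩ : ∃ x : ℝ, x = (K + 1 / β + B * K ^ 2) / Dn := ⟨_, rfl⟩
  have hkey2 : ∀ w ∈ Set.Icc (0:ℝ) V, |w - u| ≤ δ0 →
      |rh w - rh u - d * (w - u)| ≤ C2 * |w - u| ^ 2 := by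
    intro w hw hδ
    rw [hC2def]
    have hΔ := hlipρ w hw hδ
    have hE2 : |f (S w) - w * S w - (f (S u) - u * S u) + S u * (w - u)|
        ≤ |w - u| * |w - u| / β := by
      refine le_trans (hLlip w hw) ?_
      have h' := hslip w hw
      calc |w - u| * |S w - S u| ≤ |w - u| * (|w - u| / β) :=
            mul_le_mul_of_nonneg_left h' (abs_nonneg _)
        _ = |w - u| * |w - u| / β := by ring
    have hE1 : |f (rh w) - f (rh u) - f' (rh u) * (rh w - rh u)|
        ≤ B * |rh w - rh u| * |rh w - rh u| := hTaylor (rh u) (hrhI u huV) (rh w) (hrhI w hw)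
    have hequ := hgrh u huV
    have heqw := hgrh w hw
    simp only [hgdef] at hequ heqw
    have hid : (f' (rh u) - u) * (rh w - rh u) =
        (rh u - α * S u) * (w - u) + (w - u) * (rh w - rh u)
        + α * (f (S w) - w * S w - (f (S u) - u * S u) + S u * (w - u))
        - (f (rh w) - f (rh u) - f' (rh u) * (rh w - rh u)) := by
      linear_combination heqw - hequ
    have hfin : rh w - rh u - d * (w - u) =
        ((w - u) * (rh w - rh u)
         + α * (f (S w) - w * S w - (f (S u) - u * S u) + S u * (w - u))
         - (f (rh w) - f (rh u) - f' (rh u) * (rh w - rh u))) / (f' (rh u) - u) := by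
      rw [eq_div_iff hDne]
      linear_combination hid - (w - u) * hd2
    have hDnabs : |f' (rh u) - u| = Dn := by
      rw [abs_of_neg (by linarith : f' (rh u) - u < 0), hDndef]; ring
    rw [hfin, abs_div, hDnabs]
    have b1 : |(w - u) * (rh w - rh u)| ≤ K * |w - u| ^ 2 := by
      rw [abs_mul]
      calc |w - u| * |rh w - rh u| ≤ |w - u| * (K * |w - u|) :=
            mul_le_mul_of_nonneg_left hΔ (abs_nonneg _)
        _ = K * |w - u| ^ 2 := by ring
    have b2 : |α * (f (S w) - w * S w - (f (S u) - u * S u) + S u * (w - u))|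
        ≤ (1 / β) * |w - u| ^ 2 := by
      rw [abs_mul, abs_of_pos hα0]
      calc α * |f (S w) - w * S w - (f (S u) - u * S u) + S u * (w - u)|
          ≤ 1 * |f (S w) - w * S w - (f (S u) - u * S u) + S u * (w - u)| :=
            mul_le_mul_of_nonneg_right hα1.le (abs_nonneg _)
        _ = |f (S w) - w * S w - (f (S u) - u * S u) + S u * (w - u)| := one_mul _
        _ ≤ |w - u| * |w - u| / β := hE2
        _ = (1 / β) * |w - u| ^ 2 := by ring
    have b3 : |f (rh w) - f (rh u) - f' (rh u) * (rh w - rh u)| ≤ (B * K ^ 2) * |w - u| ^ 2 := by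
      refine le_trans hE1 ?_
      have hsq : |rh w - rh u| * |rh w - rh u| ≤ (K * |w - u|) * (K * |w - u|) :=
        mul_le_mul hΔ hΔ (abs_nonneg _) (mul_nonneg hK0.le (abs_nonneg _))
      nlinarith [hB.le]
    have hnum : |(w - u) * (rh w - rh u)
        + α * (f (S w) - w * S w - (f (S u) - u * S u) + S u * (w - u))
        - (f (rh w) - f (rh u) - f' (rh u) * (rh w - rh u))|
        ≤ (K + 1 / β + B * K ^ 2) * |w - u| ^ 2 := by
      have habs := abs_add_three ((w - u) * (rh w - rh u))
        (α * (f (S w) - w * S w - (f (S u) - u * S u) + S u * (w - u)))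
        (-(f (rh w) - f (rh u) - f' (rh u) * (rh w - rh u)))
      rw [abs_neg] at habs
      calc |(w - u) * (rh w - rh u)
          + α * (f (S w) - w * S w - (f (S u) - u * S u) + S u * (w - u))
          - (f (rh w) - f (rh u) - f' (rh u) * (rh w - rh u))|
          ≤ |(w - u) * (rh w - rh u)|
            + |α * (f (S w) - w * S w - (f (S u) - u * S u) + S u * (w - u))|
            + |f (rh w) - f (rh u) - f' (rh u) * (rh w - rh u)| := by
            rw [sub_eq_add_neg]; exact habs
        _ ≤ (K + 1 / β + B * K ^ 2) * |w - u| ^ 2 := by linarith [b1, b2, b3]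
    calc _ ≤ ((K + 1 / β + B * K ^ 2) * |w - u| ^ 2) / Dn :=
          (div_le_div_iff_of_pos_right hDn0).mpr hnum
      _ = ((K + 1 / β + B * K ^ 2) / Dn) * |w - u| ^ 2 := by ring
  -- conclude differentiability
  have hC2 : 0 < C2 := by
    rw [hC2def]
    apply div_pos _ hDn0
    have h1 : 0 < 1 / β := by positivity
    have h2 : 0 < B * K ^ 2 := mul_pos hB (pow_pos hK0 2)
    linarith
  rw [hasDerivWithinAt_iff_isLittleO, Asymptotics.isLittleO_iff]
  intro c hc
  have hδc : 0 < min δ0 (c / C2) := lt_min hδ0 (div_pos hc hC2)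
  have hev1 : ∀ᶠ w in nhdsWithin u (Set.Icc (0:ℝ) V), |w - u| < min δ0 (c / C2) :=
    (eventually_abs_sub_lt u hδc).filter_mono nhdsWithin_le_nhds
  filter_upwards [hev1, self_mem_nhdsWithin] with w h1 h2
  rw [Real.norm_eq_abs, Real.norm_eq_abs, smul_eq_mul, mul_comm (w - u) d]
  have h3 := hkey2 w h2 (le_of_lt (lt_of_lt_of_le h1 (min_le_left _ _)))
  have h4 : |w - u| ≤ c / C2 := le_of_lt (lt_of_lt_of_le h1 (min_le_right _ _))
  rw [le_div_iff₀ hC2] at h4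
  nlinarith [abs_nonneg (w - u), mul_nonneg (sub_nonneg.mpr h4) (abs_nonneg (w - u))]
end

section
/- For u ∈ [0,V], the equality ρ̂_u = ρ̌_u holds if and only if u = V. -/
theorem stmt_10
    (R β B α V : ℝ) (f v f' f'' v' : ℝ → ℝ)
    (hR : 0 < R) (hβ : 0 < β) (hB : 0 < B) (hα : α ∈ Set.Ioo (0:ℝ) 1)
    (hf0 : f 0 = 0) (hfR : f R = 0)
    (hfv : ∀ ρ ∈ Set.Icc (0:ℝ) R, f ρ = ρ * v ρ)
    (hfd1 : ∀ ρ ∈ Set.Icc (0:ℝ) R, HasDerivAt f (f' ρ) ρ)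
    (hfd2 : ∀ ρ ∈ Set.Icc (0:ℝ) R, HasDerivAt f' (f'' ρ) ρ)
    (hfc : ContinuousOn f'' (Set.Icc (0:ℝ) R))
    (hconc : ∀ ρ ∈ Set.Icc (0:ℝ) R, -B ≤ f'' ρ ∧ f'' ρ ≤ -β)
    (hvd : ∀ ρ ∈ Set.Icc (0:ℝ) R, HasDerivAt v (v' ρ) ρ)
    (hv'neg : ∀ ρ ∈ Set.Ioo (0:ℝ) R, v' ρ < 0)
    (hvnn : ∀ ρ ∈ Set.Icc (0:ℝ) R, 0 ≤ v ρ)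
    (hV : V = v 0)
    (rt : ℝ → ℝ)
    (hrt : ∀ u ∈ Set.Icc (0:ℝ) V, rt u ∈ Set.Icc (0:ℝ) (α * R) ∧
      HasDerivAt (fun x => α * f (x / α)) u (rt u))
    (rc rh : ℝ → ℝ)
    (hrc : ∀ u ∈ Set.Icc (0:ℝ) V, IsLeast
      {ρ : ℝ | ρ ∈ Set.Icc (0:ℝ) R ∧ f ρ = α * f (rt u / α) + u * (ρ - rt u)} (rc u))
    (hrh : ∀ u ∈ Set.Icc (0:ℝ) V, IsGreatest
      {ρ : ℝ | ρ ∈ Set.Icc (0:ℝ) R ∧ f ρ = α * f (rt u / α) + u * (ρ - rt u)} (rh u))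
    :
    ∀ u ∈ Set.Icc (0:ℝ) V, (rh u = rc u ↔ u = V) := by
  obtain ⟨hα0, hα1⟩ := hα
  have h0mem : (0:ℝ) ∈ Set.Icc (0:ℝ) R := ⟨le_refl _, hR.le⟩
  have hfcont : ContinuousOn f (Set.Icc (0:ℝ) R) :=
    fun x hx => (hfd1 x hx).continuousAt.continuousWithinAt
  have hf'cont : ContinuousOn f' (Set.Icc (0:ℝ) R) :=
    fun x hx => (hfd2 x hx).continuousAt.continuousWithinAt
  have hanti : StrictAntiOn f' (Set.Icc (0:ℝ) R) := by
    apply strictAntiOn_of_deriv_neg (convex_Icc 0 R) hf'cont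
    intro x hx
    rw [interior_Icc] at hx
    rw [(hfd2 x (Set.Ioo_subset_Icc_self hx)).deriv]
    linarith [(hconc x (Set.Ioo_subset_Icc_self hx)).2]
  have hf'0 : f' 0 = V := by
    have h1 : HasDerivWithinAt f (f' 0) (Set.Icc (0:ℝ) R) 0 :=
      (hfd1 0 h0mem).hasDerivWithinAt
    have h2 : HasDerivWithinAt (fun ρ => ρ * v ρ) (1 * v 0 + 0 * v' 0) (Set.Icc (0:ℝ) R) 0 :=
      ((hasDerivAt_id (0:ℝ)).mul (hvd 0 h0mem)).hasDerivWithinAt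
    have h3 : HasDerivWithinAt f (1 * v 0 + 0 * v' 0) (Set.Icc (0:ℝ) R) 0 :=
      h2.congr (fun x hx => hfv x hx) (hfv 0 h0mem)
    have h4 := UniqueDiffWithinAt.eq_deriv _ ((uniqueDiffOn_Icc hR) 0 h0mem) h1 h3
    rw [hV, h4]; ring
  have hslope : ∀ a b, 0 ≤ a → a < b → b ≤ R →
      ∃ c, a < c ∧ c < b ∧ f b - f a = f' c * (b - a) := by
    intro a b ha hab hb
    obtain ⟨c, hc, hc'⟩ := exists_hasDerivAt_eq_slope f f' hab
      (hfcont.mono (Set.Icc_subset_Icc ha hb))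
      (fun x hx => hfd1 x ⟨le_trans ha hx.1.le, le_trans hx.2.le hb⟩)
    refine ⟨c, hc.1, hc.2, ?_⟩
    rw [hc']
    exact (div_mul_cancel₀ _ (sub_ne_zero.mpr hab.ne')).symm
  have hrtmem : ∀ u ∈ Set.Icc (0:ℝ) V, rt u / α ∈ Set.Icc (0:ℝ) R := by
    intro u hu
    obtain ⟨h1, h2⟩ := (hrt u hu).1
    constructor
    · positivity
    · rw [div_le_iff₀ hα0]; linarith
  have hkey : ∀ u ∈ Set.Icc (0:ℝ) V, f' (rt u / α) = u := by
    intro u hu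
    have hinner : HasDerivAt (fun x : ℝ => x / α) α⁻¹ (rt u) := by
      simpa using (hasDerivAt_id (rt u)).div_const α
    have hcomp := (hfd1 (rt u / α) (hrtmem u hu)).comp (rt u) hinner
    have h := hcomp.const_mul α
    have heq : α * (f' (rt u / α) * α⁻¹) = u := h.unique (hrt u hu).2
    field_simp at heq
    exact heq
  intro u hu
  constructor
  · -- rh u = rc u → u = V
    intro heq
    by_contra hne
    have huV : u < V := lt_of_le_of_ne hu.2 hne
    have hfx : f' (rt u / α) = u := hkey u hu
    have hxmem : rt u / α ∈ Set.Icc (0:ℝ) R := hrtmem u hu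
    have hx0 : 0 < rt u / α := by
      rcases lt_or_eq_of_le hxmem.1 with h | h
      · exact h
      · exfalso
        have : u = V := by rw [← hfx, ← h, hf'0]
        linarith
    have htx : rt u = α * (rt u / α) := by field_simp
    have ht0 : 0 < rt u := by rw [htx]; positivity
    have htltx : rt u < rt u / α := by nlinarith
    have htR : rt u < R := by nlinarith [(hrt u hu).1.2]
    -- Step 1: u * rt u < α * f (rt u / α)
    obtain ⟨c, hc0, hcx, hcs⟩ := hslope 0 (rt u / α) le_rfl hx0 hxmem.2
    have hfcgt : f' (rt u / α) < f' c :=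
      hanti ⟨hc0.le, hcx.le.trans hxmem.2⟩ hxmem hcx
    have hfxval : f (rt u / α) = f' c * (rt u / α) := by
      rw [hf0] at hcs; linarith [hcs]
    have hu'c : u < f' c := by rw [← hfx]; exact hfcgt
    have hstep1 : u * rt u < α * f (rt u / α) := by
      have h1 : α * (f' c * (rt u / α)) = f' c * rt u := by
        field_simp
      rw [hfxval, h1]
      exact mul_lt_mul_of_pos_right hu'c ht0
    -- Step 2: α * f (rt u / α) < f (rt u)
    obtain ⟨c₁, hc₁0, hc₁t, hcs₁⟩ := hslope 0 (rt u) le_rfl ht0 (le_trans htltx.le hxmem.2)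
    obtain ⟨c₂, hc₂t, hc₂x, hcs₂⟩ := hslope (rt u) (rt u / α) ht0.le htltx hxmem.2
    have hc₁c₂ : f' c₂ < f' c₁ :=
      hanti ⟨hc₁0.le, le_trans (hc₁t.trans hc₂t).le (hc₂x.le.trans hxmem.2)⟩
        ⟨le_trans hc₁0.le (hc₁t.trans hc₂t).le, hc₂x.le.trans hxmem.2⟩ (hc₁t.trans hc₂t)
    have e3 : f (rt u) = f' c₁ * rt u := by
      rw [hf0] at hcs₁; linarith
    have e4 : f (rt u / α) = f (rt u) + f' c₂ * (rt u / α - rt u) := by linarith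
    have hcoef : α * (rt u / α - rt u) = (1 - α) * rt u := by
      field_simp
    have hpos : 0 < (1 - α) * rt u := mul_pos (sub_pos.mpr hα1) ht0
    have e5 : α * f (rt u / α) = α * f (rt u) + f' c₂ * ((1 - α) * rt u) := by
      rw [e4, ← hcoef]; ring
    have e6 : (1 - α) * f (rt u) = f' c₁ * ((1 - α) * rt u) := by rw [e3]; ring
    have e7 : f' c₂ * ((1 - α) * rt u) < f' c₁ * ((1 - α) * rt u) :=
      mul_lt_mul_of_pos_right hc₁c₂ hpos
    have hstep2 : α * f (rt u / α) < f (rt u) := by linarith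
    -- the affine function and continuity
    have gcont : ContinuousOn (fun ρ => f ρ - (α * f (rt u / α) + u * (ρ - rt u)))
        (Set.Icc (0:ℝ) R) :=
      hfcont.sub (Continuous.continuousOn
        (continuous_const.add (continuous_const.mul (continuous_id.sub continuous_const))))
    have hg0 : f 0 - (α * f (rt u / α) + u * (0 - rt u)) < 0 := by
      rw [hf0]; linarith
    have hgt : 0 < f (rt u) - (α * f (rt u / α) + u * (rt u - rt u)) := by
      simp only [sub_self, mul_zero, add_zero]
      linarith
    have hgR : f R - (α * f (rt u / α) + u * (R - rt u)) < 0 := by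
      rw [hfR]
      nlinarith [hu.1, mul_nonneg hu.1 (sub_pos.mpr htR).le]
    -- IVT on [0, rt u]
    have hsub1 : Set.Icc (0:ℝ) (rt u) ⊆ Set.Icc (0:ℝ) R :=
      Set.Icc_subset_Icc le_rfl htR.le
    obtain ⟨a, haI, hga⟩ := intermediate_value_Icc ht0.le (gcont.mono hsub1)
      (Set.mem_Icc.mpr ⟨hg0.le, hgt.le⟩)
    have hga' : f a - (α * f (rt u / α) + u * (a - rt u)) = 0 := hga
    -- IVT on [rt u, R]
    have hsub2 : Set.Icc (rt u) R ⊆ Set.Icc (0:ℝ) R :=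
      Set.Icc_subset_Icc ht0.le le_rfl
    obtain ⟨b, hbI, hgb⟩ := intermediate_value_Icc' htR.le (gcont.mono hsub2)
      (Set.mem_Icc.mpr ⟨hgR.le, hgt.le⟩)
    have hgb' : f b - (α * f (rt u / α) + u * (b - rt u)) = 0 := hgb
    have halt : a < rt u := by
      rcases lt_or_eq_of_le haI.2 with h | h
      · exact h
      · exfalso; rw [h] at hga'; linarith
    have hbgt : rt u < b := by
      rcases lt_or_eq_of_le hbI.1 with h | h
      · exact h
      · exfalso; rw [← h] at hgb'; linarith
    have haS : rc u ≤ a := (hrc u hu).2 ⟨hsub1 haI, by linarith⟩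
    have hbS : b ≤ rh u := (hrh u hu).2 ⟨hsub2 hbI, by linarith⟩
    rw [heq] at hbS
    linarith
  · -- u = V → rh u = rc u
    intro heq
    subst heq
    have hrtV : rt u / α = 0 := by
      apply hanti.injOn (hrtmem u hu) h0mem
      rw [hkey u hu, hf'0]
    have hrt0 : rt u = 0 := by
      rcases div_eq_zero_iff.mp hrtV with h | h
      · exact h
      · exact absurd h (ne_of_gt hα0)
    have hmemzero : ∀ ρ ∈ {ρ : ℝ | ρ ∈ Set.Icc (0:ℝ) R ∧
        f ρ = α * f (rt u / α) + u * (ρ - rt u)}, ρ = 0 := by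
      rintro ρ ⟨hρI, hρf⟩
      rw [hrtV, hrt0, hf0] at hρf
      by_contra hne
      have hρ0 : 0 < ρ := lt_of_le_of_ne hρI.1 (Ne.symm hne)
      obtain ⟨c, hc0, hcρ, hcs⟩ := hslope 0 ρ le_rfl hρ0 hρI.2
      have hlt : f' c < u := by
        rw [← hf'0]
        exact hanti h0mem ⟨hc0.le, hcρ.le.trans hρI.2⟩ hc0
      rw [hf0] at hcs
      nlinarith [mul_lt_mul_of_pos_right hlt hρ0]
    rw [hmemzero _ (hrh u hu).1, hmemzero _ (hrc u hu).1]
end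

section
/- The maps ρ̌ : [0,V] → [0, ρ̌_0] and ρ̂ : [0,V] → [0, ρ̂_0] are continuous, strictly decreasing bijections; in particular they are invertible, and their inverse functions are strictly decreasing. -/
open Set

private lemma auxContinuity {h : ℝ → ℝ} {a b : ℝ} (hab : a ≤ b)
    (hm : StrictMonoOn h (Icc a b)) (hs : SurjOn h (Icc a b) (Icc (h a) (h b))) :
    ContinuousOn h (Icc a b) := by
  rcases eq_or_lt_of_le hab with rfl | hab'
  · intro x hx
    have hxa : x = a := le_antisymm hx.2 hx.1
    subst hxa
    rw [Icc_self]
    exact continuousWithinAt_singleton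
  intro x hx
  have hax : a ≤ x := hx.1
  have hxb : x ≤ b := hx.2
  have hR : x < b → ContinuousWithinAt h (Ici x) x := by
    intro hxb'
    refine hm.continuousWithinAt_right_of_exists_between
      (Icc_mem_nhdsGE_of_mem ⟨hax, hxb'⟩) ?_
    intro y hy
    have hxbmem : b ∈ Icc a b := ⟨hab, le_rfl⟩
    have h1 : h x < h b := hm hx hxbmem hxb'
    have h2 : h a ≤ h x := hm.monotoneOn ⟨le_rfl, hab⟩ hx hax
    have ht : min y (h b) ∈ Icc (h a) (h b) :=
      ⟨le_trans h2 (le_min (le_of_lt hy) h1.le), min_le_right _ _⟩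
    obtain ⟨c, hc, hct⟩ := hs ht
    exact ⟨c, hc, by rw [hct]; exact ⟨lt_min hy h1, min_le_left _ _⟩⟩
  have hL : a < x → ContinuousWithinAt h (Iic x) x := by
    intro hax'
    refine hm.continuousWithinAt_left_of_exists_between
      (Icc_mem_nhdsLE_of_mem ⟨hax', hxb⟩) ?_
    intro y hy
    have hamem : a ∈ Icc a b := ⟨le_rfl, hab⟩
    have h1 : h a < h x := hm hamem hx hax'
    have h2 : h x ≤ h b := hm.monotoneOn hx ⟨hab, le_rfl⟩ hxb
    have ht : max y (h a) ∈ Icc (h a) (h b) :=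
      ⟨le_max_right _ _, max_le (le_trans (le_of_lt hy) h2) (le_trans h1.le h2)⟩
    obtain ⟨c, hc, hct⟩ := hs ht
    exact ⟨c, hc, by rw [hct]; exact ⟨le_max_left _ _, max_lt hy h1⟩⟩
  rcases eq_or_lt_of_le hax with rfl | hax'
  · exact (hR hab').mono (fun y hy => hy.1)
  rcases eq_or_lt_of_le hxb with rfl | hxb'
  · exact (hL hax').mono (fun y hy => hy.2)
  · exact ((hL hax').union (hR hxb')).mono (fun y _ => le_total y x)
set_option maxHeartbeats 2000000 in
theorem stmt_11
    (R β B α V : ℝ) (f v f' f'' v' : ℝ → ℝ)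
    (hR : 0 < R) (hβ : 0 < β) (hB : 0 < B) (hα : α ∈ Set.Ioo (0:ℝ) 1)
    (hf0 : f 0 = 0) (hfR : f R = 0)
    (hfv : ∀ ρ ∈ Set.Icc (0:ℝ) R, f ρ = ρ * v ρ)
    (hfd1 : ∀ ρ ∈ Set.Icc (0:ℝ) R, HasDerivAt f (f' ρ) ρ)
    (hfd2 : ∀ ρ ∈ Set.Icc (0:ℝ) R, HasDerivAt f' (f'' ρ) ρ)
    (hfc : ContinuousOn f'' (Set.Icc (0:ℝ) R))
    (hconc : ∀ ρ ∈ Set.Icc (0:ℝ) R, -B ≤ f'' ρ ∧ f'' ρ ≤ -β)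
    (hvd : ∀ ρ ∈ Set.Icc (0:ℝ) R, HasDerivAt v (v' ρ) ρ)
    (hv'neg : ∀ ρ ∈ Set.Ioo (0:ℝ) R, v' ρ < 0)
    (hvnn : ∀ ρ ∈ Set.Icc (0:ℝ) R, 0 ≤ v ρ)
    (hV : V = v 0)
    (rt : ℝ → ℝ)
    (hrt : ∀ u ∈ Set.Icc (0:ℝ) V, rt u ∈ Set.Icc (0:ℝ) (α * R) ∧
      HasDerivAt (fun x => α * f (x / α)) u (rt u))
    (rc rh : ℝ → ℝ)
    (hrc : ∀ u ∈ Set.Icc (0:ℝ) V, IsLeast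
      {ρ : ℝ | ρ ∈ Set.Icc (0:ℝ) R ∧ f ρ = α * f (rt u / α) + u * (ρ - rt u)} (rc u))
    (hrh : ∀ u ∈ Set.Icc (0:ℝ) V, IsGreatest
      {ρ : ℝ | ρ ∈ Set.Icc (0:ℝ) R ∧ f ρ = α * f (rt u / α) + u * (ρ - rt u)} (rh u))
    :
    ContinuousOn rc (Set.Icc (0:ℝ) V) ∧ StrictAntiOn rc (Set.Icc (0:ℝ) V) ∧
    Set.BijOn rc (Set.Icc (0:ℝ) V) (Set.Icc (0:ℝ) (rc 0)) ∧
    ContinuousOn rh (Set.Icc (0:ℝ) V) ∧ StrictAntiOn rh (Set.Icc (0:ℝ) V) ∧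
    Set.BijOn rh (Set.Icc (0:ℝ) V) (Set.Icc (0:ℝ) (rh 0)) ∧
    (∃ g : ℝ → ℝ,
      (∀ x ∈ Set.Icc (0:ℝ) (rc 0), g x ∈ Set.Icc (0:ℝ) V ∧ rc (g x) = x) ∧
      (∀ u ∈ Set.Icc (0:ℝ) V, g (rc u) = u) ∧
      StrictAntiOn g (Set.Icc (0:ℝ) (rc 0))) ∧
    ∃ g : ℝ → ℝ,
      (∀ x ∈ Set.Icc (0:ℝ) (rh 0), g x ∈ Set.Icc (0:ℝ) V ∧ rh (g x) = x) ∧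
      (∀ u ∈ Set.Icc (0:ℝ) V, g (rh u) = u) ∧
      StrictAntiOn g (Set.Icc (0:ℝ) (rh 0)) := by
  obtain ⟨hα0, hα1⟩ := hα
  have h0R : (0:ℝ) ∈ Icc (0:ℝ) R := ⟨le_rfl, hR.le⟩
  have hRR : R ∈ Icc (0:ℝ) R := ⟨hR.le, le_rfl⟩
  have hfcont : ContinuousOn f (Icc 0 R) := fun x hx => (hfd1 x hx).continuousAt.continuousWithinAt
  have hf'cont : ContinuousOn f' (Icc 0 R) := fun x hx => (hfd2 x hx).continuousAt.continuousWithinAt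
  have hvcont : ContinuousOn v (Icc 0 R) := fun x hx => (hvd x hx).continuousAt.continuousWithinAt
  have hf'anti : StrictAntiOn f' (Icc 0 R) := by
    apply strictAntiOn_of_deriv_neg (convex_Icc 0 R) hf'cont
    intro x hx
    rw [interior_Icc] at hx
    rw [(hfd2 x (Ioo_subset_Icc_self hx)).deriv]
    linarith [(hconc x (Ioo_subset_Icc_self hx)).2]
  have hvanti : StrictAntiOn v (Icc 0 R) := by
    apply strictAntiOn_of_deriv_neg (convex_Icc 0 R) hvcont
    intro x hx
    rw [interior_Icc] at hx
    rw [(hvd x (Ioo_subset_Icc_self hx)).deriv]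
    exact hv'neg x hx
  have hV0 : 0 < V := by
    have h1 := hvanti h0R hRR hR
    have h2 := hvnn R hRR
    rw [hV]; linarith
  have h0V : (0:ℝ) ∈ Icc (0:ℝ) V := ⟨le_rfl, hV0.le⟩
  have hVV : V ∈ Icc (0:ℝ) V := ⟨hV0.le, le_rfl⟩
  have hf'inj : ∀ a ∈ Icc (0:ℝ) R, ∀ b ∈ Icc (0:ℝ) R, f' a = f' b → a = b := by
    intro a ha b hb hab
    rcases lt_trichotomy a b with h | h | h
    · exact absurd hab (by have := hf'anti ha hb h; intro e; rw [e] at this; exact lt_irrefl _ this)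
    · exact h
    · exact absurd hab (by have := hf'anti hb ha h; intro e; rw [e] at this; exact lt_irrefl _ this)
  have hf'0 : f' 0 = V := by
    have h1 : HasDerivWithinAt f (f' 0) (Icc 0 R) 0 := (hfd1 0 h0R).hasDerivWithinAt
    have h2 : HasDerivAt (fun x => x * v x) (1 * v 0 + 0 * v' 0) 0 :=
      (hasDerivAt_id 0).mul (hvd 0 h0R)
    have h2' : HasDerivWithinAt (fun x => x * v x) (v 0) (Icc 0 R) 0 := by
      simpa using h2.hasDerivWithinAt
    have h3 : HasDerivWithinAt f (v 0) (Icc 0 R) 0 :=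
      h2'.congr (fun y hy => hfv y hy) (hfv 0 h0R)
    have := (uniqueDiffOn_Icc hR 0 h0R).eq_deriv _ h1 h3
    rw [hV]; exact this
  obtain ⟨m, hm_def⟩ : ∃ m : ℝ → ℝ, ∀ u, m u = rt u / α := ⟨fun u => rt u / α, fun _ => rfl⟩
  obtain ⟨M, hM_def⟩ : ∃ M : ℝ → ℝ, ∀ u, M u = f (m u) - u * m u :=
    ⟨fun u => f (m u) - u * m u, fun _ => rfl⟩
  have hrteq : ∀ u, rt u = α * m u := by
    intro u; rw [hm_def]; field_simp
  have hmIcc : ∀ u ∈ Icc (0:ℝ) V, m u ∈ Icc (0:ℝ) R := by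
    intro u hu
    obtain ⟨⟨h1, h2⟩, _⟩ := hrt u hu
    rw [hm_def]
    exact ⟨div_nonneg h1 hα0.le, by rw [div_le_iff₀ hα0]; linarith [mul_comm α R]⟩
  have hf'm : ∀ u ∈ Icc (0:ℝ) V, f' (m u) = u := by
    intro u hu
    have h2 : HasDerivAt f (f' (rt u / α)) (rt u / α) :=
      hfd1 _ (by rw [← hm_def]; exact hmIcc u hu)
    have h1 : HasDerivAt (fun x : ℝ => x / α) ((1:ℝ) / α) (rt u) :=
      (hasDerivAt_id (rt u)).div_const α
    have h3 := HasDerivAt.comp (rt u) h2 h1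
    have h4 := h3.const_mul α
    have h5 : HasDerivAt (fun x => α * f (x / α)) (α * (f' (rt u / α) * (1 / α))) (rt u) := by
      exact h4
    have h6 := (hrt u hu).2.unique h5
    rw [hm_def]
    field_simp at h6
    linarith
  have hSet : ∀ u ∈ Icc (0:ℝ) V, ∀ ρ,
      (f ρ = α * f (rt u / α) + u * (ρ - rt u)) ↔ (f ρ - u * ρ = α * M u) := by
    intro u hu ρ
    rw [show rt u / α = m u from (hm_def u).symm, hrteq u, hM_def]
    constructor <;> intro h <;> linear_combination h
  have hrcS : ∀ u ∈ Icc (0:ℝ) V,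
      ((rc u ∈ Icc (0:ℝ) R ∧ f (rc u) - u * rc u = α * M u) ∧
        ∀ x ∈ Icc (0:ℝ) R, f x - u * x = α * M u → rc u ≤ x) := by
    intro u hu
    obtain ⟨⟨hmem, heq⟩, hlb⟩ := hrc u hu
    exact ⟨⟨hmem, (hSet u hu _).1 heq⟩, fun x hx hfx => hlb ⟨hx, (hSet u hu x).2 hfx⟩⟩
  have hrhS : ∀ u ∈ Icc (0:ℝ) V,
      ((rh u ∈ Icc (0:ℝ) R ∧ f (rh u) - u * rh u = α * M u) ∧
        ∀ x ∈ Icc (0:ℝ) R, f x - u * x = α * M u → x ≤ rh u) := by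
    intro u hu
    obtain ⟨⟨hmem, heq⟩, hub⟩ := hrh u hu
    exact ⟨⟨hmem, (hSet u hu _).1 heq⟩, fun x hx hfx => hub ⟨hx, (hSet u hu x).2 hfx⟩⟩
  have hMVT : ∀ a b : ℝ, 0 ≤ a → a < b → b ≤ R →
      ∃ c, a < c ∧ c < b ∧ f b - f a = f' c * (b - a) := by
    intro a b ha hab hbR
    have hsub : Icc a b ⊆ Icc 0 R := Icc_subset_Icc ha hbR
    obtain ⟨c, hc, heq⟩ := exists_hasDerivAt_eq_slope f f' hab (hfcont.mono hsub)
      (fun x hx => hfd1 x (hsub ⟨hx.1.le, hx.2.le⟩))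
    exact ⟨c, hc.1, hc.2, by rw [heq, div_mul_cancel₀ _ (sub_ne_zero.2 hab.ne')]⟩
  have hinc : ∀ u ∈ Icc (0:ℝ) V, ∀ a b : ℝ, 0 ≤ a → a < b → b ≤ m u →
      f a - u * a < f b - u * b := by
    intro u hu a b ha hab hbm
    have hmu := hmIcc u hu
    obtain ⟨c, hac, hcb, heq⟩ := hMVT a b ha hab (le_trans hbm hmu.2)
    have hcm : f' (m u) < f' c :=
      hf'anti ⟨by linarith, by linarith [hmu.2]⟩ hmu (by linarith)
    rw [hf'm u hu] at hcm
    nlinarith [heq, hcm, sub_pos.2 hab]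
  have hdec : ∀ u ∈ Icc (0:ℝ) V, ∀ a b : ℝ, m u ≤ a → a < b → b ≤ R →
      f b - u * b < f a - u * a := by
    intro u hu a b ha hab hbR
    have hmu := hmIcc u hu
    obtain ⟨c, hac, hcb, heq⟩ := hMVT a b (le_trans hmu.1 ha) hab hbR
    have hcm : f' c < f' (m u) :=
      hf'anti hmu ⟨by linarith [hmu.1], by linarith⟩ (by linarith)
    rw [hf'm u hu] at hcm
    nlinarith [heq, hcm, sub_pos.2 hab]
  have hMle : ∀ u ∈ Icc (0:ℝ) V, ∀ x ∈ Icc (0:ℝ) R, f x - u * x ≤ M u := by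
    intro u hu x hx
    rw [hM_def]
    rcases lt_trichotomy x (m u) with h | h | h
    · exact (hinc u hu x (m u) hx.1 h le_rfl).le
    · rw [h]
    · exact (hdec u hu (m u) x le_rfl h hx.2).le
  have hMnn : ∀ u ∈ Icc (0:ℝ) V, 0 ≤ M u := by
    intro u hu
    have := hMle u hu 0 h0R
    simpa [hf0] using this
  have hm_pos : ∀ u ∈ Icc (0:ℝ) V, u < V → 0 < m u := by
    intro u hu huV
    rcases (hmIcc u hu).1.eq_or_lt with h | h
    · exfalso; have h2 := hf'm u hu; rw [← h, hf'0] at h2; linarith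
    · exact h
  have hMpos : ∀ u ∈ Icc (0:ℝ) V, u < V → 0 < M u := by
    intro u hu huV
    have h := hinc u hu 0 (m u) le_rfl (hm_pos u hu huV) le_rfl
    rw [hM_def]
    simpa [hf0] using h
  have hChordCore : ∀ u ∈ Icc (0:ℝ) V, ∀ a x b : ℝ, 0 ≤ a → a < x → x < b → b ≤ R →
      f a - u * a = α * M u → f b - u * b = α * M u → α * M u < f x - u * x := by
    intro u hu a x b ha hax hxb hbR hea heb
    obtain ⟨c1, hc11, hc12, e1⟩ := hMVT a x ha hax (by linarith)
    obtain ⟨c2, hc21, hc22, e2⟩ := hMVT x b (by linarith) hxb hbR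
    have hcc : f' c2 < f' c1 :=
      hf'anti ⟨by linarith, by linarith⟩ ⟨by linarith, by linarith⟩ (by linarith)
    by_contra hle
    push_neg at hle
    have p1 : f' c1 ≤ u := by nlinarith [sub_pos.2 hax]
    have p2 : u ≤ f' c2 := by nlinarith [sub_pos.2 hxb]
    linarith
  have hMid : ∀ u ∈ Icc (0:ℝ) V, ∀ x, rc u < x → x < rh u → α * M u < f x - u * x := by
    intro u hu x h1 h2
    have ha := (hrcS u hu).1
    have hb := (hrhS u hu).1
    exact hChordCore u hu (rc u) x (rh u) ha.1.1 h1 h2 hb.1.2 ha.2 hb.2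
  have hOut : ∀ u ∈ Icc (0:ℝ) V, ∀ x, rc u ≤ x → x ≤ rh u → α * M u ≤ f x - u * x := by
    intro u hu x h1 h2
    rcases h1.eq_or_lt with h1' | h1'
    · rw [← h1']; exact le_of_eq ((hrcS u hu).1.2).symm
    rcases h2.eq_or_lt with h2' | h2'
    · rw [h2']; exact le_of_eq ((hrhS u hu).1.2).symm
    · exact (hMid u hu x h1' h2').le
  have hψcont : ∀ u : ℝ, ContinuousOn (fun ρ => f ρ - u * ρ) (Icc 0 R) :=
    fun u => hfcont.sub ((continuous_const.mul continuous_id).continuousOn)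
  have hIn : ∀ u ∈ Icc (0:ℝ) V, ∀ x ∈ Icc (0:ℝ) R, α * M u < f x - u * x →
      rc u < x ∧ x < rh u := by
    intro u hu x hx hgt
    have hαM : 0 ≤ α * M u := mul_nonneg hα0.le (hMnn u hu)
    constructor
    · have hsub : Icc (0:ℝ) x ⊆ Icc 0 R := Icc_subset_Icc le_rfl hx.2
      have hmem : α * M u ∈ Icc (f 0 - u * 0) (f x - u * x) := ⟨by simp [hf0]; exact hαM, hgt.le⟩
      obtain ⟨y, hy, hyeq⟩ := intermediate_value_Icc hx.1 ((hψcont u).mono hsub) hmem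
      have hrle : rc u ≤ y := (hrcS u hu).2 y (hsub hy) hyeq
      rcases (le_trans hrle hy.2).eq_or_lt with h | h
      · exfalso; have := (hrcS u hu).1.2; rw [h] at this; linarith
      · exact h
    · have hsub : Icc x R ⊆ Icc 0 R := Icc_subset_Icc hx.1 le_rfl
      have hmem : α * M u ∈ Icc (f R - u * R) (f x - u * x) :=
        ⟨by rw [hfR]; nlinarith [mul_nonneg hu.1 hR.le], hgt.le⟩
      obtain ⟨y, hy, hyeq⟩ := intermediate_value_Icc' hx.2 ((hψcont u).mono hsub) hmem
      have hrge : y ≤ rh u := (hrhS u hu).2 y (hsub hy) hyeq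
      rcases (le_trans hy.1 hrge).eq_or_lt with h | h
      · exfalso; have := (hrhS u hu).1.2; rw [← h] at this; linarith
      · exact h
  have htang : ∀ u ∈ Icc (0:ℝ) V, u < V → α * M u < f (α * m u) - u * (α * m u) := by
    intro u hu huV
    have hm0 := hm_pos u hu huV
    have hmu := hmIcc u hu
    have hx1 : 0 < α * m u := mul_pos hα0 hm0
    have hx2 : α * m u < m u := by nlinarith
    obtain ⟨c1, hc11, hc12, e1⟩ := hMVT 0 (α * m u) le_rfl hx1 (by linarith [hmu.2])
    obtain ⟨c2, hc21, hc22, e2⟩ := hMVT (α * m u) (m u) hx1.le hx2 hmu.2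
    have hcc : f' c2 < f' c1 :=
      hf'anti ⟨by linarith, by linarith [hmu.2]⟩ ⟨by linarith, by linarith [hmu.2]⟩ (by linarith)
    rw [hf0] at e1
    rw [hM_def]
    nlinarith [mul_pos (mul_pos hm0 (sub_pos.2 hα1)) (sub_pos.2 hcc),
      mul_pos hα0 (mul_pos hm0 (sub_pos.2 hα1))]
  have hmV : m V = 0 := hf'inj _ (hmIcc V hVV) 0 h0R (by rw [hf'm V hVV, hf'0])
  have hMV : M V = 0 := by rw [hM_def, hmV, hf0]; ring
  have hψV : ∀ x ∈ Icc (0:ℝ) R, 0 < x → f x - V * x < 0 := by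
    intro x hx h0x
    have h1 : v x < v 0 := hvanti h0R hx h0x
    rw [← hV] at h1
    rw [hfv x hx]
    nlinarith
  have hrcV : rc V = 0 :=
    le_antisymm ((hrcS V hVV).2 0 h0R (by rw [hf0, hMV]; ring)) (hrcS V hVV).1.1.1
  have hrhV : rh V = 0 := by
    have h := (hrhS V hVV).1
    by_contra hne
    have hpos : 0 < rh V := h.1.1.lt_of_ne (Ne.symm hne)
    have h2 := hψV (rh V) h.1 hpos
    rw [h.2, hMV] at h2
    linarith
  have hrc_lt : ∀ u ∈ Icc (0:ℝ) V, u < V → rc u < α * m u ∧ α * m u < rh u := by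
    intro u hu huV
    have hm0 := hm_pos u hu huV
    have hmu := hmIcc u hu
    exact hIn u hu (α * m u) ⟨(mul_pos hα0 hm0).le, by nlinarith [hmu.2]⟩ (htang u hu huV)
  have hm_in : ∀ u ∈ Icc (0:ℝ) V, u < V → rc u < m u ∧ m u < rh u := by
    intro u hu huV
    apply hIn u hu (m u) (hmIcc u hu)
    have h1 := hMpos u hu huV
    have h2 : f (m u) - u * m u = M u := (hM_def u).symm
    nlinarith
  have hrc_pos : ∀ u ∈ Icc (0:ℝ) V, u < V → 0 < rc u := by
    intro u hu huV
    have h := (hrcS u hu).1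
    rcases h.1.1.eq_or_lt with h0 | h0
    · exfalso
      have := h.2
      rw [← h0, hf0] at this
      have := hMpos u hu huV
      nlinarith
    · exact h0
  have hm_anti : ∀ u1 ∈ Icc (0:ℝ) V, ∀ u2 ∈ Icc (0:ℝ) V, u1 < u2 → m u2 < m u1 := by
    intro u1 h1 u2 h2 h12
    by_contra hle
    push_neg at hle
    rcases hle.eq_or_lt with h | h
    · have e := hf'm u1 h1
      rw [h, hf'm u2 h2] at e
      linarith
    · have := hf'anti (hmIcc u1 h1) (hmIcc u2 h2) h
      rw [hf'm u1 h1, hf'm u2 h2] at this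
      linarith
  have hrc_anti : StrictAntiOn rc (Icc (0:ℝ) V) := by
    intro u1 h1 u2 h2 h12
    rcases h2.2.eq_or_lt with hV2 | hV2
    · rw [hV2, hrcV]
      exact hrc_pos u1 h1 (by linarith)
    · have hV1 : u1 < V := lt_of_lt_of_le h12 h2.2
      have hkey1 := (hrc_lt u2 h2 hV2).1
      have hrcu2 := (hrcS u2 h2).1
      have step1 : f (rc u2) - u1 * rc u2 < α * M u1 := by
        have e := hrcu2.2
        have hle2 : f (m u2) - u1 * m u2 ≤ M u1 := hMle u1 h1 (m u2) (hmIcc u2 h2)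
        have t2 : α * (f (m u2) - u1 * m u2) ≤ α * M u1 :=
          mul_le_mul_of_nonneg_left hle2 hα0.le
        have s1 : (u2 - u1) * rc u2 < (u2 - u1) * (α * m u2) :=
          mul_lt_mul_of_pos_left hkey1 (sub_pos.2 h12)
        have s2 : α * M u2 + (u2 - u1) * (α * m u2) = α * (f (m u2) - u1 * m u2) := by
          rw [hM_def]; ring
        linarith [e, s1, s2, t2]
      have hchain : rc u2 ≤ rh u1 := by
        have hmin := (hm_in u1 h1 hV1).2
        have hm21 : m u2 < m u1 := hm_anti u1 h1 u2 h2 h12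
        have : α * m u2 ≤ m u2 := by nlinarith [(hmIcc u2 h2).1]
        linarith
      by_contra hle
      push_neg at hle
      have := hOut u1 h1 (rc u2) hle hchain
      linarith
  have hrh_anti : StrictAntiOn rh (Icc (0:ℝ) V) := by
    intro u1 h1 u2 h2 h12
    have hV1 : u1 < V := lt_of_lt_of_le h12 h2.2
    by_contra hle
    push_neg at hle
    have hrhu2 := (hrhS u2 h2).1
    have hαm1 := (hrc_lt u1 h1 hV1).2
    have step : α * M u1 < f (rh u2) - u1 * rh u2 := by
      have e := hrhu2.2
      have hle2 : f (m u1) - u2 * m u1 ≤ M u2 := hMle u2 h2 (m u1) (hmIcc u1 h1)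
      have t2 : α * (f (m u1) - u2 * m u1) ≤ α * M u2 :=
        mul_le_mul_of_nonneg_left hle2 hα0.le
      have s1 : (u2 - u1) * (α * m u1) < (u2 - u1) * rh u2 :=
        mul_lt_mul_of_pos_left (by linarith) (sub_pos.2 h12)
      have s2 : α * M u1 = α * (f (m u1) - u2 * m u1) + (u2 - u1) * (α * m u1) := by
        rw [hM_def]; ring
      linarith [e, s1, s2, t2]
    have := (hIn u1 h1 (rh u2) hrhu2.1 step).2
    linarith
  have hMcont : ContinuousOn M (Icc (0:ℝ) V) := by
    have key : ∀ a ∈ Icc (0:ℝ) V, ∀ b ∈ Icc (0:ℝ) V, M a - M b ≤ R * |a - b| := by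
      intro a ha b hb
      have h1' : f (m a) - b * m a ≤ M b := hMle b hb (m a) (hmIcc a ha)
      have hma := hmIcc a ha
      have h2 : (b - a) * m a ≤ R * |a - b| := by
        calc (b - a) * m a ≤ |(b - a) * m a| := le_abs_self _
          _ = |a - b| * |m a| := by rw [abs_mul, abs_sub_comm]
          _ = |m a| * |a - b| := mul_comm _ _
          _ ≤ R * |a - b| := by
              apply mul_le_mul_of_nonneg_right _ (abs_nonneg _)
              rw [abs_of_nonneg hma.1]; exact hma.2
      have h3 : M a = (f (m a) - b * m a) + (b - a) * m a := by rw [hM_def]; ring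
      linarith
    have hlip : LipschitzOnWith (Real.toNNReal R) M (Icc (0:ℝ) V) := by
      apply LipschitzOnWith.of_dist_le_mul
      intro u1 h1 u2 h2
      rw [Real.dist_eq, Real.dist_eq, Real.coe_toNNReal R hR.le]
      rw [abs_sub_le_iff]
      exact ⟨key u1 h1 u2 h2, by rw [abs_sub_comm]; exact key u2 h2 u1 h1⟩
    exact hlip.continuousOn
  have hIsRc : ∀ u ∈ Icc (0:ℝ) V, u < V → ∀ x ∈ Icc (0:ℝ) R,
      f x - u * x = α * M u → x < α * m u → rc u = x := by
    intro u hu huV x hxI hxS hlt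
    have h1 : rc u ≤ x := (hrcS u hu).2 x hxI hxS
    rcases h1.eq_or_lt with h | h
    · exact h
    · exfalso
      have h2 : x < rh u := lt_trans hlt (hrc_lt u hu huV).2
      have := hMid u hu x h h2
      linarith
  have hIsRh : ∀ u ∈ Icc (0:ℝ) V, u < V → ∀ x ∈ Icc (0:ℝ) R,
      f x - u * x = α * M u → α * m u < x → rh u = x := by
    intro u hu huV x hxI hxS hgt
    have h1 : x ≤ rh u := (hrhS u hu).2 x hxI hxS
    rcases h1.eq_or_lt with h | h
    · exact h.symm
    · exfalso
      have h2 : rc u < x := lt_trans (hrc_lt u hu huV).1 hgt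
      have := hMid u hu x h2 h
      linarith
  have hVcase : ∀ u ∈ Icc (0:ℝ) V, ∀ x ∈ Icc (0:ℝ) R, u = V → f x - u * x = α * M u →
      x = 0 := by
    intro u hu x hxI huV hxS
    rw [huV, hMV] at hxS
    by_contra hne
    have hpos : 0 < x := hxI.1.lt_of_ne (Ne.symm hne)
    have := hψV x hxI hpos
    rw [hxS] at this
    simp at this
  have hmle : ∀ u1 ∈ Icc (0:ℝ) V, ∀ u2 ∈ Icc (0:ℝ) V, u1 ≤ u2 → m u2 ≤ m u1 := by
    intro u1 h1 u2 h2 h12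
    rcases h12.eq_or_lt with h | h
    · rw [h]
    · exact (hm_anti u1 h1 u2 h2 h).le
  have hGcont : ∀ x : ℝ, ContinuousOn (fun w => f x - w * x - α * M w) (Icc (0:ℝ) V) := by
    intro x
    exact (continuousOn_const.sub ((continuous_mul_right x).continuousOn)).sub
      (continuousOn_const.mul hMcont)
  have hGV : ∀ x ∈ Icc (0:ℝ) R, f x - V * x - α * M V ≤ 0 := by
    intro x hx
    rw [hMV]
    rcases hx.1.eq_or_lt with h | h
    · rw [← h, hf0]; simp
    · have := hψV x hx h
      linarith
  -- the u' construction: x/α with x < α * m 0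
  have hu'pack : ∀ x : ℝ, 0 ≤ x → x < α * m 0 →
      f' (x / α) ∈ Icc (0:ℝ) V ∧ m (f' (x / α)) = x / α ∧
        0 ≤ f x - f' (x / α) * x - α * M (f' (x / α)) := by
    intro x hx0 hxlt
    have hm0pos : 0 < m 0 := hm_pos 0 h0V hV0
    have hxam : x / α < m 0 := by rw [div_lt_iff₀ hα0]; linarith [mul_comm α (m 0)]
    have hxa : x / α ∈ Icc (0:ℝ) R :=
      ⟨div_nonneg hx0 hα0.le, le_trans hxam.le (hmIcc 0 h0V).2⟩
    have hu'le : f' (x / α) ≤ V := by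
      rw [← hf'0]
      rcases hxa.1.eq_or_lt with h | h
      · rw [← h]
      · exact (hf'anti h0R hxa h).le
    have hu'ge : 0 ≤ f' (x / α) := by
      have h2 := hf'anti hxa (hmIcc 0 h0V) hxam
      rw [hf'm 0 h0V] at h2
      linarith
    have hu'mem : f' (x / α) ∈ Icc (0:ℝ) V := ⟨hu'ge, hu'le⟩
    have hmu' : m (f' (x / α)) = x / α :=
      hf'inj _ (hmIcc _ hu'mem) _ hxa (by rw [hf'm _ hu'mem])
    refine ⟨hu'mem, hmu', ?_⟩
    rcases hu'le.lt_or_eq with h | h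
    · have ht := htang _ hu'mem h
      rw [hmu'] at ht
      have hax : α * (x / α) = x := by field_simp
      rw [hax] at ht
      linarith
    · have hx0' : x / α = 0 := hf'inj _ hxa 0 h0R (by rw [hf'0]; exact h)
      have hxz : x = 0 := by
        have := div_eq_zero_iff.1 hx0'
        rcases this with h' | h'
        · exact h'
        · exact absurd h' hα0.ne'
      rw [h, hMV, hxz, hf0]
      simp
  have hrc_surj : SurjOn rc (Icc (0:ℝ) V) (Icc (0:ℝ) (rc 0)) := by
    intro x hx
    have hrc0lt : rc 0 < α * m 0 := (hrc_lt 0 h0V hV0).1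
    have hxlt : x < α * m 0 := lt_of_le_of_lt hx.2 hrc0lt
    obtain ⟨hu'mem, hmu', hGu'⟩ := hu'pack x hx.1 hxlt
    have hxIcc : x ∈ Icc (0:ℝ) R := by
      refine ⟨hx.1, ?_⟩
      have h1 := (hmIcc 0 h0V).2
      have h2 := hm_pos 0 h0V hV0
      nlinarith [hx.2, hrc0lt, mul_pos (sub_pos.2 hα1) h2]
    have hG0 : f x - 0 * x - α * M 0 ≤ 0 := by
      rcases hx.2.eq_or_lt with h | h
      · have h2 := (hrcS 0 h0V).1.2
        rw [h]
        linarith [h2]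
      · rcases hx.1.eq_or_lt with h0 | h0
        · rw [← h0, hf0]
          have := mul_nonneg hα0.le (hMnn 0 h0V)
          linarith
        · have h2 := (hrcS 0 h0V).1.2
          have h3 := hinc 0 h0V x (rc 0) hx.1 h (hm_in 0 h0V hV0).1.le
          linarith
    obtain ⟨u, hu, hGu⟩ := intermediate_value_Icc hu'mem.1
      ((hGcont x).mono (Icc_subset_Icc le_rfl hu'mem.2))
      (show (0:ℝ) ∈ Icc _ _ from ⟨hG0, hGu'⟩)
    have humem : u ∈ Icc (0:ℝ) V := ⟨hu.1, le_trans hu.2 hu'mem.2⟩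
    have hxS : f x - u * x = α * M u := by dsimp only at hGu; linarith
    refine ⟨u, humem, ?_⟩
    rcases humem.2.lt_or_eq with hV' | hV'
    · have hmum : m (f' (x / α)) ≤ m u := hmle u humem _ hu'mem hu.2
      rw [hmu'] at hmum
      have hxle : x ≤ α * m u := by
        rw [div_le_iff₀ hα0] at hmum
        linarith [mul_comm (m u) α]
      have hxlt' : x < α * m u := by
        rcases hxle.eq_or_lt with h | h
        · exfalso
          have := htang u humem hV'
          rw [← h] at this
          linarith
        · exact h
      exact hIsRc u humem hV' x hxIcc hxS hxlt'
    · have := hVcase u humem x hxIcc hV' hxS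
      rw [this, hV', hrcV]
  have hrh_surj : SurjOn rh (Icc (0:ℝ) V) (Icc (0:ℝ) (rh 0)) := by
    intro x hx
    have hxIcc : x ∈ Icc (0:ℝ) R := ⟨hx.1, le_trans hx.2 (hrhS 0 h0V).1.1.2⟩
    by_cases hcase : x < α * m 0
    · obtain ⟨hu'mem, hmu', hGu'⟩ := hu'pack x hx.1 hcase
      obtain ⟨u, hu, hGu⟩ := intermediate_value_Icc' hu'mem.2
        ((hGcont x).mono (Icc_subset_Icc hu'mem.1 le_rfl))
        (show (0:ℝ) ∈ Icc _ _ from ⟨hGV x hxIcc, hGu'⟩)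
      have humem : u ∈ Icc (0:ℝ) V := ⟨le_trans hu'mem.1 hu.1, hu.2⟩
      have hxS : f x - u * x = α * M u := by dsimp only at hGu; linarith
      refine ⟨u, humem, ?_⟩
      rcases humem.2.lt_or_eq with hV' | hV'
      · have hmum : m u ≤ m (f' (x / α)) := hmle _ hu'mem u humem hu.1
        rw [hmu'] at hmum
        have hxge : α * m u ≤ x := by
          rw [le_div_iff₀ hα0] at hmum
          linarith [mul_comm (m u) α]
        have hxgt : α * m u < x := by
          rcases hxge.eq_or_lt with h | h
          · exfalso
            have := htang u humem hV'
            rw [h] at this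
            linarith
          · exact h
        exact hIsRh u humem hV' x hxIcc hxS hxgt
      · have := hVcase u humem x hxIcc hV' hxS
        rw [this, hV', hrhV]
    · push_neg at hcase
      have hG0' : 0 ≤ f x - 0 * x - α * M 0 := by
        have h1 : rc 0 ≤ x := le_trans (hrc_lt 0 h0V hV0).1.le hcase
        have := hOut 0 h0V x h1 hx.2
        linarith
      obtain ⟨u, hu, hGu⟩ := intermediate_value_Icc' hV0.le
        ((hGcont x).mono (Icc_subset_Icc le_rfl le_rfl))
        (show (0:ℝ) ∈ Icc _ _ from ⟨hGV x hxIcc, hG0'⟩)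
      have humem : u ∈ Icc (0:ℝ) V := hu
      have hxS : f x - u * x = α * M u := by dsimp only at hGu; linarith
      refine ⟨u, humem, ?_⟩
      rcases humem.2.lt_or_eq with hV' | hV'
      · have hmum : m u ≤ m 0 := hmle 0 h0V u humem hu.1
        have hxgt : α * m u < x := by
          have h1 : α * m u ≤ α * m 0 := mul_le_mul_of_nonneg_left hmum hα0.le
          have h2 : 0 < α * m 0 := mul_pos hα0 (hm_pos 0 h0V hV0)
          rcases (le_trans h1 hcase).eq_or_lt with h | h
          · exfalso
            have := htang u humem hV'
            rw [h] at this
            linarith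
          · exact h
        exact hIsRh u humem hV' x hxIcc hxS hxgt
      · exfalso
        have hx0 := hVcase u humem x hxIcc hV' hxS
        have h2 : 0 < α * m 0 := mul_pos hα0 (hm_pos 0 h0V hV0)
        rw [hx0] at hcase
        linarith
  have hrc_maps : MapsTo rc (Icc (0:ℝ) V) (Icc (0:ℝ) (rc 0)) := by
    intro u hu
    refine ⟨(hrcS u hu).1.1.1, ?_⟩
    rcases hu.1.eq_or_lt with h | h
    · rw [← h]
    · exact (hrc_anti h0V hu h).le
  have hrh_maps : MapsTo rh (Icc (0:ℝ) V) (Icc (0:ℝ) (rh 0)) := by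
    intro u hu
    refine ⟨(hrhS u hu).1.1.1, ?_⟩
    rcases hu.1.eq_or_lt with h | h
    · rw [← h]
    · exact (hrh_anti h0V hu h).le
  have hnegmaps : ∀ t ∈ Icc (-V) (0:ℝ), -t ∈ Icc (0:ℝ) V := by
    intro t ht; exact ⟨by linarith [ht.2], by linarith [ht.1]⟩
  have hcontOf : ∀ (r : ℝ → ℝ), StrictAntiOn r (Icc (0:ℝ) V) → r V = 0 →
      SurjOn r (Icc (0:ℝ) V) (Icc (0:ℝ) (r 0)) → ContinuousOn r (Icc (0:ℝ) V) := by
    intro r hanti hrV hsurj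
    have hmono : StrictMonoOn (fun t => r (-t)) (Icc (-V) 0) := by
      intro t1 h1 t2 h2 h12
      exact hanti (hnegmaps t2 h2) (hnegmaps t1 h1) (by linarith)
    have hsurj' : SurjOn (fun t => r (-t)) (Icc (-V) 0)
        (Icc ((fun t => r (-t)) (-V)) ((fun t => r (-t)) 0)) := by
      intro y hy
      simp only [neg_neg, neg_zero] at hy
      rw [hrV] at hy
      obtain ⟨u, hu, hu2⟩ := hsurj hy
      exact ⟨-u, ⟨by linarith [hu.2], by linarith [hu.1]⟩, by simp only [neg_neg]; exact hu2⟩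
    have hc := auxContinuity (by linarith : -V ≤ 0) hmono hsurj'
    have h2 : ContinuousOn (fun u : ℝ => r (- -u)) (Icc (0:ℝ) V) :=
      hc.comp (continuous_neg.continuousOn)
        (fun u hu => ⟨by linarith [hu.2], by linarith [hu.1]⟩)
    have h3 : (fun u : ℝ => r (- -u)) = r := funext fun u => by rw [neg_neg]
    rw [← h3]
    exact h2
  have hrc_cont : ContinuousOn rc (Icc (0:ℝ) V) := hcontOf rc hrc_anti hrcV hrc_surj
  have hrh_cont : ContinuousOn rh (Icc (0:ℝ) V) := hcontOf rh hrh_anti hrhV hrh_surj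
  have hinvOf : ∀ (r : ℝ → ℝ), StrictAntiOn r (Icc (0:ℝ) V) →
      SurjOn r (Icc (0:ℝ) V) (Icc (0:ℝ) (r 0)) →
      ∃ g : ℝ → ℝ,
        (∀ x ∈ Icc (0:ℝ) (r 0), g x ∈ Icc (0:ℝ) V ∧ r (g x) = x) ∧
        (∀ u ∈ Icc (0:ℝ) V, g (r u) = u) ∧
        StrictAntiOn g (Icc (0:ℝ) (r 0)) := by
    intro r hanti hsurj
    refine ⟨Function.invFunOn r (Icc (0:ℝ) V), ?_, ?_, ?_⟩
    · intro x hxm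
      obtain ⟨u, hu, hux⟩ := hsurj hxm
      exact ⟨Function.invFunOn_mem ⟨u, hu, hux⟩, Function.invFunOn_eq ⟨u, hu, hux⟩⟩
    · intro u hu
      exact hanti.injOn (Function.invFunOn_mem ⟨u, hu, rfl⟩) hu
        (Function.invFunOn_eq ⟨u, hu, rfl⟩)
    · intro x1 hx1 x2 hx2 h12
      obtain ⟨u1, hu1, he1⟩ := hsurj hx1
      obtain ⟨u2, hu2, he2⟩ := hsurj hx2
      have p1 : Function.invFunOn r (Icc (0:ℝ) V) x1 ∈ Icc (0:ℝ) V :=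
        Function.invFunOn_mem ⟨u1, hu1, he1⟩
      have q1 : r (Function.invFunOn r (Icc (0:ℝ) V) x1) = x1 :=
        Function.invFunOn_eq ⟨u1, hu1, he1⟩
      have p2 : Function.invFunOn r (Icc (0:ℝ) V) x2 ∈ Icc (0:ℝ) V :=
        Function.invFunOn_mem ⟨u2, hu2, he2⟩
      have q2 : r (Function.invFunOn r (Icc (0:ℝ) V) x2) = x2 :=
        Function.invFunOn_eq ⟨u2, hu2, he2⟩
      rcases lt_trichotomy (Function.invFunOn r (Icc (0:ℝ) V) x2)
        (Function.invFunOn r (Icc (0:ℝ) V) x1) with h | h | h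
      · exact h
      · exfalso; rw [h, q1] at q2; exact absurd q2 (ne_of_lt h12)
      · exfalso
        have := hanti p1 p2 h
        rw [q1, q2] at this
        linarith
  exact ⟨hrc_cont, hrc_anti, ⟨hrc_maps, hrc_anti.injOn, hrc_surj⟩,
    hrh_cont, hrh_anti, ⟨hrh_maps, hrh_anti.injOn, hrh_surj⟩,
    hinvOf rc hrc_anti hrc_surj, hinvOf rh hrh_anti hrh_surj⟩
end

section
/- The sequence (ω_n) defined by ω_0 = 0 and ω_{n+1} = ρ̂⁻¹( ρ̌(ω_n) ) for all n ∈ ℕ is well defined (i.e. ω_n ∈ [0,V] and ρ̌(ω_n) lies in the range of ρ̂ for every n), strictly increasing, satisfies ω_n < V for every n ∈ ℕ, and converges to V as n → +∞. -/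
open Set

set_option maxHeartbeats 1000000 in
theorem stmt_12
    (R β B α V : ℝ) (f v f' f'' v' : ℝ → ℝ)
    (hR : 0 < R) (hβ : 0 < β) (hB : 0 < B) (hα : α ∈ Set.Ioo (0:ℝ) 1)
    (hf0 : f 0 = 0) (hfR : f R = 0)
    (hfv : ∀ ρ ∈ Set.Icc (0:ℝ) R, f ρ = ρ * v ρ)
    (hfd1 : ∀ ρ ∈ Set.Icc (0:ℝ) R, HasDerivAt f (f' ρ) ρ)
    (hfd2 : ∀ ρ ∈ Set.Icc (0:ℝ) R, HasDerivAt f' (f'' ρ) ρ)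
    (hfc : ContinuousOn f'' (Set.Icc (0:ℝ) R))
    (hconc : ∀ ρ ∈ Set.Icc (0:ℝ) R, -B ≤ f'' ρ ∧ f'' ρ ≤ -β)
    (hvd : ∀ ρ ∈ Set.Icc (0:ℝ) R, HasDerivAt v (v' ρ) ρ)
    (hv'neg : ∀ ρ ∈ Set.Ioo (0:ℝ) R, v' ρ < 0)
    (hvnn : ∀ ρ ∈ Set.Icc (0:ℝ) R, 0 ≤ v ρ)
    (hV : V = v 0)
    (rt : ℝ → ℝ)
    (hrt : ∀ u ∈ Set.Icc (0:ℝ) V, rt u ∈ Set.Icc (0:ℝ) (α * R) ∧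
      HasDerivAt (fun x => α * f (x / α)) u (rt u))
    (rc rh : ℝ → ℝ)
    (hrc : ∀ u ∈ Set.Icc (0:ℝ) V, IsLeast
      {ρ : ℝ | ρ ∈ Set.Icc (0:ℝ) R ∧ f ρ = α * f (rt u / α) + u * (ρ - rt u)} (rc u))
    (hrh : ∀ u ∈ Set.Icc (0:ℝ) V, IsGreatest
      {ρ : ℝ | ρ ∈ Set.Icc (0:ℝ) R ∧ f ρ = α * f (rt u / α) + u * (ρ - rt u)} (rh u))
    :
    ∃ ω : ℕ → ℝ, ω 0 = 0 ∧
      (∀ n : ℕ, ω n ∈ Set.Icc (0:ℝ) V ∧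
        ω (n + 1) ∈ Set.Icc (0:ℝ) V ∧ rh (ω (n + 1)) = rc (ω n)) ∧
      StrictMono ω ∧ (∀ n : ℕ, ω n < V) ∧
      Filter.Tendsto ω Filter.atTop (nhds V) := by
  obtain ⟨hα0, hα1⟩ := hα
  have h0R : (0:ℝ) ∈ Set.Icc (0:ℝ) R := ⟨le_refl 0, hR.le⟩
  have hRR : R ∈ Set.Icc (0:ℝ) R := ⟨hR.le, le_refl R⟩
  -- continuity
  have hfC : ContinuousOn f (Set.Icc 0 R) := fun x hx =>
    (hfd1 x hx).continuousAt.continuousWithinAt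
  have hf'C : ContinuousOn f' (Set.Icc 0 R) := fun x hx =>
    (hfd2 x hx).continuousAt.continuousWithinAt
  -- mean value theorems
  have hMVT : ∀ a b : ℝ, a ∈ Set.Icc (0:ℝ) R → b ∈ Set.Icc (0:ℝ) R → a < b →
      ∃ c ∈ Set.Ioo a b, f b - f a = f' c * (b - a) := by
    intro a b ha hb hab
    have hsub : Set.Icc a b ⊆ Set.Icc 0 R := Set.Icc_subset_Icc ha.1 hb.2
    obtain ⟨c, hc, hc'⟩ := exists_hasDerivAt_eq_slope f f' hab (hfC.mono hsub)
      (fun x hx => hfd1 x (hsub ⟨hx.1.le, hx.2.le⟩))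
    refine ⟨c, hc, ?_⟩
    rw [hc', div_mul_cancel₀ _ (sub_ne_zero.2 hab.ne')]
  have hMVT' : ∀ a b : ℝ, a ∈ Set.Icc (0:ℝ) R → b ∈ Set.Icc (0:ℝ) R → a < b →
      ∃ c ∈ Set.Ioo a b, f' b - f' a = f'' c * (b - a) := by
    intro a b ha hb hab
    have hsub : Set.Icc a b ⊆ Set.Icc 0 R := Set.Icc_subset_Icc ha.1 hb.2
    obtain ⟨c, hc, hc'⟩ := exists_hasDerivAt_eq_slope f' f'' hab (hf'C.mono hsub)
      (fun x hx => hfd2 x (hsub ⟨hx.1.le, hx.2.le⟩))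
    refine ⟨c, hc, ?_⟩
    rw [hc', div_mul_cancel₀ _ (sub_ne_zero.2 hab.ne')]
  -- f' is strictly decreasing
  have hanti : StrictAntiOn f' (Set.Icc (0:ℝ) R) := by
    intro x hx y hy hxy
    obtain ⟨c, hc, hc'⟩ := hMVT' x y hx hy hxy
    have hcI : c ∈ Set.Icc (0:ℝ) R := ⟨hx.1.trans hc.1.le, hc.2.le.trans hy.2⟩
    have hneg : f'' c ≤ -β := (hconc c hcI).2
    nlinarith [hc.1, hc.2]
  have hantimono : AntitoneOn f' (Set.Icc (0:ℝ) R) := hanti.antitoneOn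
  -- strict tangent line inequality
  have htang : ∀ a ∈ Set.Icc (0:ℝ) R, ∀ b ∈ Set.Icc (0:ℝ) R, a ≠ b →
      f b < f a + f' a * (b - a) := by
    intro a ha b hb hab
    rcases lt_or_gt_of_ne hab with h | h
    · obtain ⟨c, hc, hc'⟩ := hMVT a b ha hb h
      have hcI : c ∈ Set.Icc (0:ℝ) R := ⟨ha.1.trans hc.1.le, hc.2.le.trans hb.2⟩
      have : f' c < f' a := hanti ha hcI hc.1
      nlinarith
    · obtain ⟨c, hc, hc'⟩ := hMVT b a hb ha h
      have hcI : c ∈ Set.Icc (0:ℝ) R := ⟨hb.1.trans hc.1.le, hc.2.le.trans ha.2⟩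
      have : f' a < f' c := hanti hcI ha hc.2
      nlinarith
  -- f' 0 = V
  have hf'0 : f' 0 = V := by
    have h1 : HasDerivWithinAt f (f' 0) (Set.Icc 0 R) 0 := (hfd1 0 h0R).hasDerivWithinAt
    have h2 : HasDerivAt (fun x : ℝ => x * v x) (1 * v 0 + 0 * v' 0) 0 :=
      (hasDerivAt_id 0).mul (hvd 0 h0R)
    have h3 : HasDerivWithinAt f (1 * v 0 + 0 * v' 0) (Set.Icc 0 R) 0 :=
      (h2.hasDerivWithinAt).congr (fun y hy => hfv y hy) (hfv 0 h0R)
    have := (uniqueDiffOn_Icc hR 0 h0R).eq_deriv _ h1 h3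
    rw [this, hV]; ring
  -- V > 0
  have hVpos : 0 < V := by
    obtain ⟨c, hc, hc'⟩ := hMVT 0 R h0R hRR hR
    have hcI : c ∈ Set.Icc (0:ℝ) R := ⟨hc.1.le, hc.2.le⟩
    have h4 : f' c < f' 0 := hanti h0R hcI hc.1
    rw [hf0, hfR] at hc'
    have h5 : f' c = 0 := by
      have h6 : f' c * (R - 0) = 0 := by linarith
      rcases mul_eq_zero.1 h6 with h | h
      · exact h
      · linarith
    rw [hf'0] at h4; linarith
  have h0V : (0:ℝ) ∈ Set.Icc (0:ℝ) V := ⟨le_refl 0, hVpos.le⟩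
  -- the tangency point S u = rt u / α
  have hSmem : ∀ u ∈ Set.Icc (0:ℝ) V, rt u / α ∈ Set.Icc (0:ℝ) R := by
    intro u hu
    obtain ⟨⟨h1, h2⟩, _⟩ := hrt u hu
    constructor
    · positivity
    · rw [div_le_iff₀ hα0]; linarith [h2]
  have hf'S : ∀ u ∈ Set.Icc (0:ℝ) V, f' (rt u / α) = u := by
    intro u hu
    have hd := (hrt u hu).2
    have hmem := hSmem u hu
    have hdiv : HasDerivAt (fun x : ℝ => x / α) (1 / α) (rt u) := by
      simpa using (hasDerivAt_id (rt u)).div_const α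
    have hcomp : HasDerivAt (fun x : ℝ => f (x / α)) (f' (rt u / α) * (1 / α)) (rt u) :=
      HasDerivAt.comp (rt u) (hfd1 _ hmem) hdiv
    have hcomp2 : HasDerivAt (fun x : ℝ => α * f (x / α))
        (α * (f' (rt u / α) * (1 / α))) (rt u) := hcomp.const_mul α
    have h5 := hd.unique hcomp2
    field_simp at h5
    linarith
  have hrtS : ∀ u : ℝ, rt u = α * (rt u / α) := by
    intro u; field_simp
  -- f' R < 0
  have hf'Rneg : f' R < 0 := by
    have := htang R hRR 0 h0R hR.ne'
    rw [hf0, hfR] at this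
    nlinarith
  -- line algebra helper
  have hline : ∀ u x : ℝ, u * (x - rt u) = u * x - α * (u * (rt u / α)) := by
    intro u x; field_simp
  have hrteq : ∀ u : ℝ, rt u = α * (rt u / α) := by
    intro u; field_simp
  -- positivity of the tangency point for u < V
  have hSpos : ∀ u ∈ Set.Icc (0:ℝ) V, u < V → 0 < rt u / α := by
    intro u hu huV
    rcases (hSmem u hu).1.lt_or_eq with h | h
    · exact h
    · have h2 := hf'S u hu
      rw [← h, hf'0] at h2
      linarith
  have hSltR : ∀ u ∈ Set.Icc (0:ℝ) V, rt u / α < R := by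
    intro u hu
    rcases (hSmem u hu).2.lt_or_eq with h | h
    · exact h
    · exfalso
      have h2 := hf'S u hu
      rw [h] at h2
      linarith [hf'Rneg, hu.1]
  -- value at the tangency point lies above the secant through the origin
  have htangS : ∀ u ∈ Set.Icc (0:ℝ) V, u < V → u * (rt u / α) < f (rt u / α) := by
    intro u hu huV
    have hs := hSmem u hu
    have h2 := htang (rt u / α) hs 0 h0R (ne_of_gt (hSpos u hu huV))
    rw [hf0, hf'S u hu] at h2
    nlinarith
  -- position of rc u
  have hrcfacts : ∀ u ∈ Set.Icc (0:ℝ) V, u < V → 0 < rc u ∧ rc u < rt u / α := by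
    intro u hu huV
    have hs := hSmem u hu
    have hspos := hSpos u hu huV
    have htv := htangS u hu huV
    have hgC : ContinuousOn (fun ρ => f ρ - (α * f (rt u / α) + u * (ρ - rt u)))
        (Set.Icc 0 (rt u / α)) := by
      apply ContinuousOn.sub (hfC.mono (Set.Icc_subset_Icc le_rfl hs.2))
      fun_prop
    have hg0 : f 0 - (α * f (rt u / α) + u * (0 - rt u)) < 0 := by
      rw [hf0, hline]
      nlinarith [mul_pos hα0 (sub_pos.2 htv)]
    have hgs : 0 < f (rt u / α) - (α * f (rt u / α) + u * (rt u / α - rt u)) := by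
      rw [hline]
      nlinarith [mul_pos (sub_pos.2 hα1) (sub_pos.2 htv)]
    obtain ⟨c, hcmem, hgc⟩ := intermediate_value_Ioo hspos.le hgC ⟨hg0, hgs⟩
    have hcI : c ∈ Set.Icc (0:ℝ) R := ⟨hcmem.1.le, hcmem.2.le.trans hs.2⟩
    have hcZ : c ∈ {ρ : ℝ | ρ ∈ Set.Icc (0:ℝ) R ∧ f ρ = α * f (rt u / α) + u * (ρ - rt u)} := by
      refine ⟨hcI, ?_⟩
      simp only at hgc
      linarith [hgc]
    have hle := (hrc u hu).2 hcZ
    refine ⟨?_, lt_of_le_of_lt hle hcmem.2⟩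
    rcases ((hrc u hu).1.1.1).lt_or_eq with h | h
    · exact h
    · exfalso
      have hz := (hrc u hu).1.2
      rw [← h, hf0, hline] at hz
      nlinarith [mul_pos hα0 (sub_pos.2 htv)]
  -- position of rh u
  have hrh_gt : ∀ u ∈ Set.Icc (0:ℝ) V, u < V → rt u / α < rh u := by
    intro u hu huV
    have hs := hSmem u hu
    have hspos := hSpos u hu huV
    have htv := htangS u hu huV
    have hsR : rt u / α < R := hSltR u hu
    have hfs_pos : 0 < f (rt u / α) :=
      lt_of_le_of_lt (mul_nonneg hu.1 hspos.le) htv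
    have hgR : f R - (α * f (rt u / α) + u * (R - rt u)) < 0 := by
      rw [hfR, hline]
      nlinarith [mul_pos hα0 hfs_pos, mul_nonneg hu.1 (sub_nonneg.2 hsR.le),
        mul_nonneg (mul_nonneg (sub_nonneg.2 hα1.le) hu.1) hs.1]
    have hgs : 0 < f (rt u / α) - (α * f (rt u / α) + u * (rt u / α - rt u)) := by
      rw [hline]
      nlinarith [mul_pos (sub_pos.2 hα1) (sub_pos.2 htv)]
    have hgC : ContinuousOn (fun ρ => f ρ - (α * f (rt u / α) + u * (ρ - rt u)))
        (Set.Icc (rt u / α) R) := by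
      apply ContinuousOn.sub (hfC.mono (Set.Icc_subset_Icc hs.1 le_rfl))
      fun_prop
    obtain ⟨c, hcmem, hgc⟩ := intermediate_value_Ioo' hsR.le hgC ⟨hgR, hgs⟩
    have hcI : c ∈ Set.Icc (0:ℝ) R := ⟨hs.1.trans hcmem.1.le, hcmem.2.le⟩
    have hcZ : c ∈ {ρ : ℝ | ρ ∈ Set.Icc (0:ℝ) R ∧ f ρ = α * f (rt u / α) + u * (ρ - rt u)} := by
      refine ⟨hcI, ?_⟩
      simp only at hgc
      linarith [hgc]
    exact lt_of_lt_of_le hcmem.1 ((hrh u hu).2 hcZ)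
  -- the gap function is strictly decreasing beyond the tangency point
  have hdec : ∀ u ∈ Set.Icc (0:ℝ) V, ∀ x1 x2 : ℝ, rt u / α ≤ x1 → x1 < x2 → x2 ≤ R →
      f x2 - (α * f (rt u / α) + u * (x2 - rt u)) <
        f x1 - (α * f (rt u / α) + u * (x1 - rt u)) := by
    intro u hu x1 x2 hx1 h12 hx2
    have hs := hSmem u hu
    have hx1I : x1 ∈ Set.Icc (0:ℝ) R := ⟨hs.1.trans hx1, h12.le.trans hx2⟩
    have hx2I : x2 ∈ Set.Icc (0:ℝ) R := ⟨hx1I.1.trans h12.le, hx2⟩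
    obtain ⟨c, hc, hc'⟩ := hMVT x1 x2 hx1I hx2I h12
    have hcI : c ∈ Set.Icc (0:ℝ) R := ⟨hx1I.1.trans hc.1.le, hc.2.le.trans hx2⟩
    have hf'c : f' c < u := by
      rw [← hf'S u hu]
      exact hanti hs hcI (lt_of_le_of_lt hx1 hc.1)
    nlinarith [mul_pos (sub_pos.2 h12) (sub_pos.2 hf'c)]
  -- the step map: given u, produce w with rh w = rc u
  have hstep : ∀ u ∈ Set.Icc (0:ℝ) V, u < V → ∃ w, (u < w ∧ w < V) ∧ rh w = rc u := by
    intro u hu huV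
    obtain ⟨hrc0, hrcS⟩ := hrcfacts u hu huV
    have hs := hSmem u hu
    have htR : rc u < R := hrcS.trans_le hs.2
    have htI : rc u ∈ Set.Icc (0:ℝ) R := ⟨hrc0.le, htR.le⟩
    have hsub : Set.Icc (0:ℝ) (rc u) ⊆ Set.Icc 0 R := Set.Icc_subset_Icc le_rfl htR.le
    have hFC : ContinuousOn (fun s => α * f s + f' s * (rc u - α * s) - f (rc u))
        (Set.Icc 0 (rc u)) := by
      apply ContinuousOn.sub _ continuousOn_const
      apply ContinuousOn.add (continuousOn_const.mul (hfC.mono hsub))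
      exact (hf'C.mono hsub).mul (by fun_prop)
    have hF0 : (0:ℝ) < α * f 0 + f' 0 * (rc u - α * 0) - f (rc u) := by
      have h2 := htang 0 h0R (rc u) htI (ne_of_lt hrc0)
      rw [hf0] at h2 ⊢
      rw [hf'0] at h2 ⊢
      nlinarith
    have hFt : α * f (rc u) + f' (rc u) * (rc u - α * rc u) - f (rc u) < 0 := by
      have h2 := htang (rc u) htI 0 h0R (ne_of_gt hrc0)
      rw [hf0] at h2
      have h3 : f' (rc u) * rc u < f (rc u) := by nlinarith
      nlinarith [mul_pos (sub_pos.2 hα1) (sub_pos.2 h3)]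
    obtain ⟨s, hsmem, hFs⟩ := intermediate_value_Ioo' hrc0.le hFC ⟨hFt, hF0⟩
    simp only at hFs
    have hsI : s ∈ Set.Icc (0:ℝ) R := ⟨hsmem.1.le, hsmem.2.le.trans htR.le⟩
    have hwu : u < f' s := by
      rw [← hf'S u hu]
      exact hanti hsI hs (hsmem.2.trans hrcS)
    have hwV : f' s < V := by
      rw [← hf'0]
      exact hanti h0R hsI hsmem.1
    have hwI : f' s ∈ Set.Icc (0:ℝ) V := ⟨hu.1.trans hwu.le, hwV.le⟩
    have hSw : rt (f' s) / α = s := by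
      apply hanti.injOn (hSmem (f' s) hwI) hsI
      rw [hf'S (f' s) hwI]
    have hrtw : rt (f' s) = α * s := by rw [hrteq (f' s), hSw]
    have htZ : rc u ∈ {ρ : ℝ | ρ ∈ Set.Icc (0:ℝ) R ∧
        f ρ = α * f (rt (f' s) / α) + f' s * (ρ - rt (f' s))} := by
      refine ⟨htI, ?_⟩
      rw [hSw, hrtw]
      linarith [hFs]
    have hge := (hrh (f' s) hwI).2 htZ
    have hrhwZ := (hrh (f' s) hwI).1
    refine ⟨f' s, ⟨hwu, hwV⟩, ?_⟩
    rcases hge.lt_or_eq with h | h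
    · exfalso
      have hd := hdec (f' s) hwI (rc u) (rh (f' s))
        (by rw [hSw]; exact hsmem.2.le) h hrhwZ.1.2
      have he1 := hrhwZ.2
      have he2 := htZ.2
      linarith [hd, he1, he2]
    · exact h.symm
  -- strict monotonicity of the tangent-line functional in the tangency point
  have hFanti : ∀ x ∈ Set.Icc (0:ℝ) R, ∀ s1 s2 : ℝ, 0 ≤ s1 → s1 < s2 → s2 < x →
      α * f s2 + f' s2 * (x - α * s2) < α * f s1 + f' s1 * (x - α * s1) := by
    intro x hx s1 s2 hs1 h12 h2x
    have hs1I : s1 ∈ Set.Icc (0:ℝ) R := ⟨hs1, (h12.le.trans h2x.le).trans hx.2⟩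
    have hs2I : s2 ∈ Set.Icc (0:ℝ) R := ⟨hs1.trans h12.le, h2x.le.trans hx.2⟩
    have hder : ∀ y ∈ Set.Ioo s1 s2, HasDerivAt (fun s => α * f s + f' s * (x - α * s))
        (f'' y * (x - α * y)) y := by
      intro y hy
      have hyI : y ∈ Set.Icc (0:ℝ) R := ⟨hs1.trans hy.1.le, hy.2.le.trans hs2I.2⟩
      have hd := ((hfd1 y hyI).const_mul α).add
        ((hfd2 y hyI).mul (HasDerivAt.const_sub x ((hasDerivAt_id y).const_mul α)))
      simp only [id_eq] at hd
      exact hd.congr_deriv (by ring)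
    have hGC : ContinuousOn (fun s => α * f s + f' s * (x - α * s)) (Set.Icc s1 s2) := by
      have hsub : Set.Icc s1 s2 ⊆ Set.Icc (0:ℝ) R := Set.Icc_subset_Icc hs1I.1 hs2I.2
      exact (continuousOn_const.mul (hfC.mono hsub)).add
        ((hf'C.mono hsub).mul (by fun_prop))
    obtain ⟨c, hc, hc'⟩ := exists_hasDerivAt_eq_slope _ (fun y => f'' y * (x - α * y))
      h12 hGC hder
    have hcI : c ∈ Set.Icc (0:ℝ) R := ⟨hs1.trans hc.1.le, hc.2.le.trans hs2I.2⟩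
    have hf''c : f'' c ≤ -β := (hconc c hcI).2
    have hxc : 0 < x - α * c := by
      nlinarith [mul_nonneg (sub_nonneg.2 hα1.le) (hs1.trans hc.1.le), hc.2, h2x]
    have h6 : (α * f s2 + f' s2 * (x - α * s2)) - (α * f s1 + f' s1 * (x - α * s1))
        = f'' c * (x - α * c) * (s2 - s1) := by
      have h7 := hc'
      rw [h7, div_mul_cancel₀ _ (sub_ne_zero.2 h12.ne')]
    nlinarith [mul_pos hxc (sub_pos.2 h12), hf''c, h6, hβ]
  -- build the sequence
  choose! W hW using hstep
  set ω : ℕ → ℝ := fun n => W^[n] 0 with hωdef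
  have hω0 : ω 0 = 0 := rfl
  have hωs : ∀ n, ω (n + 1) = W (ω n) := fun n => Function.iterate_succ_apply' W n 0
  have hinv : ∀ n, 0 ≤ ω n ∧ ω n < V := by
    intro n
    induction n with
    | zero => exact ⟨le_refl 0, hVpos⟩
    | succ n ih =>
      have h := hW (ω n) ⟨ih.1, ih.2.le⟩ ih.2
      rw [hωs]
      exact ⟨ih.1.trans h.1.1.le, h.1.2⟩
  have hlt : ∀ n, ω n < ω (n + 1) := by
    intro n
    rw [hωs]
    exact (hW (ω n) ⟨(hinv n).1, (hinv n).2.le⟩ (hinv n).2).1.1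
  have hmono : StrictMono ω := strictMono_nat_of_lt_succ hlt
  have hbdd : BddAbove (Set.range ω) := ⟨V, by rintro x ⟨n, rfl⟩; exact (hinv n).2.le⟩
  set L := ⨆ n, ω n with hLdef
  have htend : Filter.Tendsto ω Filter.atTop (nhds L) :=
    tendsto_atTop_ciSup hmono.monotone hbdd
  have hLle : L ≤ V := ciSup_le fun n => (hinv n).2.le
  have hL0 : 0 ≤ L := hω0 ▸ le_ciSup hbdd 0
  have hLV : L = V := by
    by_contra hne
    have hLltV : L < V := lt_of_le_of_ne hLle hne
    have hLI : L ∈ Set.Icc (0:ℝ) V := ⟨hL0, hLle⟩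
    have hx2 : rt L / α < rh L := hrh_gt L hLI hLltV
    have hrhLI : rh L ∈ Set.Icc (0:ℝ) R := ((hrh L hLI).1).1
    have hq : f' (rh L) < L := by
      conv_rhs => rw [← hf'S L hLI]
      exact hanti (hSmem L hLI) hrhLI hx2
    rw [hLdef] at hq
    obtain ⟨n, hn⟩ := exists_lt_of_lt_ciSup hq
    have hωnI : ω n ∈ Set.Icc (0:ℝ) V := ⟨(hinv n).1, (hinv n).2.le⟩
    have hsn : rt (ω n) / α < rh L := by
      by_contra hcon
      push_neg at hcon
      have h2 := hantimono hrhLI (hSmem (ω n) hωnI) hcon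
      rw [hf'S (ω n) hωnI] at h2
      linarith
    have hrcn : rc (ω n) < rh L := lt_trans (hrcfacts (ω n) hωnI (hinv n).2).2 hsn
    have hx1eq : rh (ω (n + 1)) = rc (ω n) := by
      rw [hωs]
      exact (hW (ω n) hωnI (hinv n).2).2
    have hx12 : rh (ω (n + 1)) < rh L := by rw [hx1eq]; exact hrcn
    have hwI : ω (n + 1) ∈ Set.Icc (0:ℝ) V := ⟨(hinv (n + 1)).1, (hinv (n + 1)).2.le⟩
    have hwV := (hinv (n + 1)).2
    have hwleL : ω (n + 1) ≤ L := le_ciSup hbdd (n + 1)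
    have hwltL : ω (n + 1) < L := by
      rcases hwleL.lt_or_eq with h | h
      · exact h
      · exfalso; rw [h] at hx12; exact lt_irrefl _ hx12
    have hsw := hSmem (ω (n + 1)) hwI
    have hsL := hSmem L hLI
    have hswL : rt L / α < rt (ω (n + 1)) / α := by
      by_contra hcon
      push_neg at hcon
      have h2 := hantimono hsw hsL hcon
      rw [hf'S (ω (n + 1)) hwI, hf'S L hLI] at h2
      linarith
    have hx1 : rt (ω (n + 1)) / α < rh (ω (n + 1)) := hrh_gt _ hwI hwV
    have hrhwI : rh (ω (n + 1)) ∈ Set.Icc (0:ℝ) R := ((hrh (ω (n + 1)) hwI).1).1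
    have hc1 := hFanti (rh (ω (n + 1))) hrhwI (rt L / α) (rt (ω (n + 1)) / α)
      hsL.1 hswL hx1
    have he1 : f (rh (ω (n + 1))) = α * f (rt (ω (n + 1)) / α) +
        f' (rt (ω (n + 1)) / α) * (rh (ω (n + 1)) - α * (rt (ω (n + 1)) / α)) := by
      rw [hf'S _ hwI, ← hrteq]
      exact ((hrh (ω (n + 1)) hwI).1).2
    have hc1' : 0 < α * f (rt L / α) + f' (rt L / α) *
        (rh (ω (n + 1)) - α * (rt L / α)) - f (rh (ω (n + 1))) := by
      linarith [hc1, he1]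
    obtain ⟨c, hc, hc'⟩ := hMVT (rh (ω (n + 1))) (rh L) hrhwI hrhLI hx12
    have hcI : c ∈ Set.Icc (0:ℝ) R := ⟨hrhwI.1.trans hc.1.le, hc.2.le.trans hrhLI.2⟩
    have hf'c : f' c < f' (rt L / α) :=
      hanti hsL hcI (lt_trans (lt_trans hswL hx1) hc.1)
    have he2 : f (rh L) = α * f (rt L / α) +
        f' (rt L / α) * (rh L - α * (rt L / α)) := by
      rw [hf'S _ hLI, ← hrteq]
      exact ((hrh L hLI).1).2
    nlinarith [mul_pos (sub_pos.2 hf'c) (sub_pos.2 hx12), hc', hc1', he2]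
  refine ⟨ω, hω0, ?_, hmono, fun n => (hinv n).2, ?_⟩
  · intro n
    refine ⟨⟨(hinv n).1, (hinv n).2.le⟩, ⟨(hinv (n + 1)).1, (hinv (n + 1)).2.le⟩, ?_⟩
    rw [hωs]
    exact (hW (ω n) ⟨(hinv n).1, (hinv n).2.le⟩ (hinv n).2).2
  · rw [← hLV]
    exact htend
end

section
/- Let u⁻, u⁺ ∈ [0,V] with u⁻ < u⁺. If ρ̂(u⁺) ≤ ρ̌(u⁻), then u⁺ − u⁻ ≥ (β/2) · ( ρ̂(u⁻) − ρ̌(u⁻) ). -/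
theorem stmt_14
    (R β B α V : ℝ) (f v f' f'' v' : ℝ → ℝ)
    (hR : 0 < R) (hβ : 0 < β) (hB : 0 < B) (hα : α ∈ Set.Ioo (0:ℝ) 1)
    (hf0 : f 0 = 0) (hfR : f R = 0)
    (hfv : ∀ ρ ∈ Set.Icc (0:ℝ) R, f ρ = ρ * v ρ)
    (hfd1 : ∀ ρ ∈ Set.Icc (0:ℝ) R, HasDerivAt f (f' ρ) ρ)
    (hfd2 : ∀ ρ ∈ Set.Icc (0:ℝ) R, HasDerivAt f' (f'' ρ) ρ)
    (hfc : ContinuousOn f'' (Set.Icc (0:ℝ) R))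
    (hconc : ∀ ρ ∈ Set.Icc (0:ℝ) R, -B ≤ f'' ρ ∧ f'' ρ ≤ -β)
    (hvd : ∀ ρ ∈ Set.Icc (0:ℝ) R, HasDerivAt v (v' ρ) ρ)
    (hv'neg : ∀ ρ ∈ Set.Ioo (0:ℝ) R, v' ρ < 0)
    (hvnn : ∀ ρ ∈ Set.Icc (0:ℝ) R, 0 ≤ v ρ)
    (hV : V = v 0)
    (rt : ℝ → ℝ)
    (hrt : ∀ u ∈ Set.Icc (0:ℝ) V, rt u ∈ Set.Icc (0:ℝ) (α * R) ∧
      HasDerivAt (fun x => α * f (x / α)) u (rt u))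
    (rc rh : ℝ → ℝ)
    (hrc : ∀ u ∈ Set.Icc (0:ℝ) V, IsLeast
      {ρ : ℝ | ρ ∈ Set.Icc (0:ℝ) R ∧ f ρ = α * f (rt u / α) + u * (ρ - rt u)} (rc u))
    (hrh : ∀ u ∈ Set.Icc (0:ℝ) V, IsGreatest
      {ρ : ℝ | ρ ∈ Set.Icc (0:ℝ) R ∧ f ρ = α * f (rt u / α) + u * (ρ - rt u)} (rh u))
    :
    ∀ um ∈ Set.Icc (0:ℝ) V, ∀ up ∈ Set.Icc (0:ℝ) V,
      um < up → rh up ≤ rc um → up - um ≥ (β / 2) * (rh um - rc um) := by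
  have hfC : ContinuousOn f (Set.Icc (0:ℝ) R) :=
    fun x hx => (hfd1 x hx).continuousAt.continuousWithinAt
  have hf'C : ContinuousOn f' (Set.Icc (0:ℝ) R) :=
    fun x hx => (hfd2 x hx).continuousAt.continuousWithinAt
  have hfnn : ∀ ρ ∈ Set.Icc (0:ℝ) R, 0 ≤ f ρ := by
    intro ρ hρ
    rw [hfv ρ hρ]
    exact mul_nonneg hρ.1 (hvnn ρ hρ)
  -- f' is antitone on [0,R]
  have hf'anti : AntitoneOn f' (Set.Icc (0:ℝ) R) := by
    apply antitoneOn_of_deriv_nonpos (convex_Icc 0 R) hf'C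
    · intro x hx
      rw [interior_Icc] at hx
      exact ((hfd2 x ⟨hx.1.le, hx.2.le⟩).differentiableAt).differentiableWithinAt
    · intro x hx
      rw [interior_Icc] at hx
      rw [(hfd2 x ⟨hx.1.le, hx.2.le⟩).deriv]
      linarith [(hconc x ⟨hx.1.le, hx.2.le⟩).2]
  intro um hum up hup hlt hle
  obtain ⟨⟨haI, hfa⟩, hamin⟩ := hrc um hum
  obtain ⟨⟨hbI, hfb⟩, hbmax⟩ := hrh um hum
  obtain ⟨⟨hcI, hfcc⟩, hcmax⟩ := hrh up hup
  set a := rc um with ha_def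
  set b := rh um with hb_def
  set c := rh up with hc_def
  have hab : a ≤ b := hamin ⟨hbI, hfb⟩
  rcases eq_or_lt_of_le hab with heq | hab'
  · rw [← heq]
    nlinarith
  -- now a < b
  have hca : c ≤ a := hle
  have hcR : c < R := lt_of_le_of_lt hca (lt_of_lt_of_le hab' hbI.2)
  -- Step 1: up ≥ f' c
  set g : ℝ → ℝ := fun x => f x - (α * f (rt up / α) + up * (x - rt up)) with hg_def
  have hgder : ∀ x ∈ Set.Icc (0:ℝ) R, HasDerivAt g (f' x - up) x := by
    intro x hx
    have h1 : HasDerivAt (fun y : ℝ => α * f (rt up / α) + up * (y - rt up)) (up * 1) x :=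
      (((hasDerivAt_id x).sub_const (rt up)).const_mul up).const_add (α * f (rt up / α))
    have h2 := (hfd1 x hx).sub h1
    rw [mul_one] at h2
    exact h2
  have hgc : g c = 0 := by simp [hg_def, hfcc]
  have hrtup := (hrt up hup).1
  have hdivmem : rt up / α ∈ Set.Icc (0:ℝ) R := by
    constructor
    · exact div_nonneg hrtup.1 hα.1.le
    · rw [div_le_iff₀ hα.1]
      linarith [hrtup.2]
  have hgR : g R ≤ 0 := by
    have h1 : 0 ≤ α * f (rt up / α) := mul_nonneg hα.1.le (hfnn _ hdivmem)
    have h2 : 0 ≤ up * (R - rt up) := by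
      apply mul_nonneg hup.1
      nlinarith [hrtup.2, hα.2]
    simp only [hg_def, hfR]
    linarith
  have hgle : ∀ x ∈ Set.Ioc c R, g x ≤ 0 := by
    intro x hx
    by_contra hpos
    push_neg at hpos
    have hx0 : (0:ℝ) ≤ x := le_trans hcI.1 hx.1.le
    have hsub : Set.Icc x R ⊆ Set.Icc (0:ℝ) R := Set.Icc_subset_Icc hx0 le_rfl
    have hgcont : ContinuousOn g (Set.Icc x R) := by
      apply ContinuousOn.sub (hfC.mono hsub)
      exact (continuous_const.add (continuous_const.mul (continuous_id.sub continuous_const))).continuousOn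
    obtain ⟨y, hyI, hgy⟩ := intermediate_value_Icc' hx.2 hgcont ⟨hgR, hpos.le⟩
    have hymem : y ∈ {ρ : ℝ | ρ ∈ Set.Icc (0:ℝ) R ∧
        f ρ = α * f (rt up / α) + up * (ρ - rt up)} := by
      refine ⟨⟨le_trans hx0 hyI.1, hyI.2⟩, ?_⟩
      have : f y - (α * f (rt up / α) + up * (y - rt up)) = 0 := hgy
      linarith
    have : y ≤ c := hcmax hymem
    linarith [hx.1, hyI.1]
  have hupge : f' c ≤ up := by
    have hder := (hgder c hcI).hasDerivWithinAt (s := Set.Ioi c)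
    rw [hasDerivWithinAt_iff_tendsto_slope] at hder
    have hIoi : Set.Ioi c \ {c} = Set.Ioi c := by
      apply Set.diff_singleton_eq_self
      simp
    rw [hIoi] at hder
    have hev : ∀ᶠ x in nhdsWithin c (Set.Ioi c), slope g c x ≤ 0 := by
      filter_upwards [Ioc_mem_nhdsGT_of_mem ⟨le_refl c, hcR⟩] with x hx
      rw [slope_def_field, hgc]
      apply div_nonpos_of_nonpos_of_nonneg
      · simpa using hgle x hx
      · linarith [hx.1]
    have := le_of_tendsto hder hev
    linarith
  -- Step 2: f' a ≤ f' c
  have hf'ac : f' a ≤ f' c := hf'anti hcI haI hca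
  -- Step 3: q := f' a - f' x - β(x-a) is nonneg on [a, R]
  set q : ℝ → ℝ := fun x => f' a - f' x - β * (x - a) with hq_def
  have hqder : ∀ x ∈ Set.Icc (0:ℝ) R, HasDerivAt q (-f'' x - β) x := by
    intro x hx
    have h1 : HasDerivAt (fun y : ℝ => β * (y - a)) (β * 1) x :=
      ((hasDerivAt_id x).sub_const a).const_mul β
    have h2 := ((hasDerivAt_const x (f' a)).sub (hfd2 x hx)).sub h1
    simp only [zero_sub, mul_one] at h2
    exact h2
  have haR : a ∈ Set.Icc (0:ℝ) R := haI
  have hsubaR : Set.Icc a R ⊆ Set.Icc (0:ℝ) R := Set.Icc_subset_Icc haI.1 le_rfl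
  have hqmono : MonotoneOn q (Set.Icc a R) := by
    apply monotoneOn_of_deriv_nonneg (convex_Icc a R)
    · apply ContinuousOn.sub (ContinuousOn.sub continuousOn_const (hf'C.mono hsubaR))
      exact (continuous_const.mul (continuous_id.sub continuous_const)).continuousOn
    · intro x hx
      rw [interior_Icc] at hx
      exact ((hqder x (hsubaR ⟨hx.1.le, hx.2.le⟩)).differentiableAt).differentiableWithinAt
    · intro x hx
      rw [interior_Icc] at hx
      have hx' : x ∈ Set.Icc (0:ℝ) R := hsubaR ⟨hx.1.le, hx.2.le⟩
      rw [(hqder x hx').deriv]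
      linarith [(hconc x hx').2]
  have hqnn : ∀ x ∈ Set.Icc a R, 0 ≤ q x := by
    intro x hx
    have : q a ≤ q x := hqmono ⟨le_rfl, haI.2⟩ hx hx.1
    simp only [hq_def] at this ⊢
    linarith [this]
  -- Step 4: h := f a + f' a (x-a) - β/2 (x-a)^2 - f x is monotone on [a,b], h a = 0
  set h : ℝ → ℝ := fun x => f a + f' a * (x - a) - β / 2 * (x - a) ^ 2 - f x with hh_def
  have hhder : ∀ x ∈ Set.Icc (0:ℝ) R, HasDerivAt h (q x) x := by
    intro x hx
    have h1 : HasDerivAt (fun y : ℝ => f a + f' a * (y - a)) (f' a * 1) x :=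
      (((hasDerivAt_id x).sub_const a).const_mul (f' a)).const_add (f a)
    have h2 : HasDerivAt (fun y : ℝ => β / 2 * (y - a) ^ 2)
        (β / 2 * (2 * (x - a) ^ 1 * 1)) x :=
      (((hasDerivAt_id x).sub_const a).pow 2).const_mul (β / 2)
    have h3 := (h1.sub h2).sub (hfd1 x hx)
    refine h3.congr_deriv ?_
    simp only [hq_def]
    ring
  have hsubab : Set.Icc a b ⊆ Set.Icc (0:ℝ) R := Set.Icc_subset_Icc haI.1 hbI.2
  have hhmono : MonotoneOn h (Set.Icc a b) := by
    apply monotoneOn_of_deriv_nonneg (convex_Icc a b)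
    · apply ContinuousOn.sub _ (hfC.mono hsubab)
      exact ((continuous_const.add (continuous_const.mul (continuous_id.sub continuous_const))).sub (continuous_const.mul ((continuous_id.sub continuous_const).pow 2))).continuousOn
    · intro x hx
      rw [interior_Icc] at hx
      exact ((hhder x (hsubab ⟨hx.1.le, hx.2.le⟩)).differentiableAt).differentiableWithinAt
    · intro x hx
      rw [interior_Icc] at hx
      rw [(hhder x (hsubab ⟨hx.1.le, hx.2.le⟩)).deriv]
      exact hqnn x ⟨hx.1.le, le_trans hx.2.le hbI.2⟩
  have hhb : 0 ≤ h b := by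
    have := hhmono ⟨le_rfl, hab⟩ ⟨hab, le_rfl⟩ hab
    simp only [hh_def] at this ⊢
    have ha0 : f a + f' a * (a - a) - β / 2 * (a - a) ^ 2 - f a = 0 := by ring
    linarith [this]
  -- conclude
  have hfab : f b - f a = um * (b - a) := by rw [hfa, hfb]; ring
  have hba : 0 < b - a := by linarith
  simp only [hh_def] at hhb
  nlinarith [mul_pos hβ hba, hhb, hfab]
end

section
/- Let u⁻, u⁺ ∈ [0,V] with u⁺ < u⁻ < V. If ρ̂(u⁻) ≤ ρ̌(u⁺), then u⁻ − u⁺ ≥ (β/2) · ( ρ̂(u⁻) − ρ̌(u⁻) ). -/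
open Set

-- Lemma A: gradient gap
lemma lemA (R β : ℝ) (f' f'' : ℝ → ℝ)
    (hfd2 : ∀ ρ ∈ Set.Icc (0:ℝ) R, HasDerivAt f' (f'' ρ) ρ)
    (hconc : ∀ ρ ∈ Set.Icc (0:ℝ) R, f'' ρ ≤ -β)
    {x y : ℝ} (hx : x ∈ Set.Icc (0:ℝ) R) (hy : y ∈ Set.Icc (0:ℝ) R) (hxy : x ≤ y) :
    f' y + β * (y - x) ≤ f' x := by
  have hanti : AntitoneOn (fun t => f' t + β * t) (Set.Icc (0:ℝ) R) := by
    apply antitoneOn_of_hasDerivWithinAt_nonpos (f' := fun t => f'' t + β)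
      (convex_Icc 0 R)
    · intro t ht
      exact ((hfd2 t ht).continuousAt.continuousWithinAt).add
        ((continuous_const.mul continuous_id).continuousOn t ht)
    · intro t ht
      have ht' : t ∈ Set.Icc (0:ℝ) R := interior_subset ht
      have : HasDerivAt (fun t => f' t + β * t) (f'' t + β) t := by
        exact ((hfd2 t ht').add ((hasDerivAt_id t).const_mul β)).congr_deriv (by ring)
      exact this.hasDerivWithinAt
    · intro t ht
      have ht' : t ∈ Set.Icc (0:ℝ) R := interior_subset ht
      linarith [hconc t ht']
  have := hanti hx hy hxy
  simp only at this
  linarith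

-- Lemma B: Taylor bound for concave-type functions
lemma lemB (R β : ℝ) (f f' f'' : ℝ → ℝ)
    (hfd1 : ∀ ρ ∈ Set.Icc (0:ℝ) R, HasDerivAt f (f' ρ) ρ)
    (hfd2 : ∀ ρ ∈ Set.Icc (0:ℝ) R, HasDerivAt f' (f'' ρ) ρ)
    (hconc : ∀ ρ ∈ Set.Icc (0:ℝ) R, f'' ρ ≤ -β)
    {x y : ℝ} (hx : x ∈ Set.Icc (0:ℝ) R) (hy : y ∈ Set.Icc (0:ℝ) R) (hxy : x ≤ y) :
    f x ≤ f y + f' y * (x - y) - (β/2) * (x - y)^2 := by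
  set h : ℝ → ℝ := fun ρ => f y + f' y * (ρ - y) - (β/2) * (ρ - y)^2 - f ρ with hh
  have hsub : Set.Icc (0:ℝ) y ⊆ Set.Icc (0:ℝ) R :=
    Set.Icc_subset_Icc le_rfl hy.2
  have hanti : AntitoneOn h (Set.Icc (0:ℝ) y) := by
    apply antitoneOn_of_hasDerivWithinAt_nonpos
      (f' := fun ρ => f' y - β * (ρ - y) - f' ρ) (convex_Icc 0 y)
    · intro t ht
      have ht' := hsub ht
      exact (((continuousOn_const.add (continuousOn_const.mul (by fun_prop))).sub
        (continuousOn_const.mul (by fun_prop))).sub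
        (fun s hs => (hfd1 s (hsub hs)).continuousAt.continuousWithinAt)) t ht
    · intro t ht
      have ht' : t ∈ Set.Icc (0:ℝ) R := hsub (interior_subset ht)
      have hd : HasDerivAt h (f' y - β * (t - y) - f' t) t := by
        have h1 : HasDerivAt (fun ρ : ℝ => f y + f' y * (ρ - y)) (f' y) t := by
          simpa using (((hasDerivAt_id t).sub_const y).const_mul (f' y)).const_add (f y)
        have h2 : HasDerivAt (fun ρ : ℝ => (β/2) * (ρ - y)^2) (β * (t - y)) t := by
          have := (((hasDerivAt_id t).sub_const y).pow 2).const_mul (β/2)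
          refine this.congr_deriv ?_
          simp
          ring
        exact (h1.sub h2).sub (hfd1 t ht')
      exact hd.hasDerivWithinAt
    · intro t ht
      have htle : t ≤ y := (interior_subset ht).2
      have ht' : t ∈ Set.Icc (0:ℝ) R := hsub (interior_subset ht)
      have := lemA R β f' f'' hfd2 hconc ht' hy htle
      linarith
  have hx' : x ∈ Set.Icc (0:ℝ) y := ⟨hx.1, hxy⟩
  have hy' : y ∈ Set.Icc (0:ℝ) y := ⟨le_trans hx.1 hxy, le_rfl⟩
  have hmono := hanti hx' hy' hxy
  have hhy : h y = 0 := by simp [hh]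
  rw [hhy] at hmono
  simp only [hh] at hmono
  linarith [hmono]

theorem stmt_15
    (R β B α V : ℝ) (f v f' f'' v' : ℝ → ℝ)
    (hR : 0 < R) (hβ : 0 < β) (hB : 0 < B) (hα : α ∈ Set.Ioo (0:ℝ) 1)
    (hf0 : f 0 = 0) (hfR : f R = 0)
    (hfv : ∀ ρ ∈ Set.Icc (0:ℝ) R, f ρ = ρ * v ρ)
    (hfd1 : ∀ ρ ∈ Set.Icc (0:ℝ) R, HasDerivAt f (f' ρ) ρ)
    (hfd2 : ∀ ρ ∈ Set.Icc (0:ℝ) R, HasDerivAt f' (f'' ρ) ρ)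
    (hfc : ContinuousOn f'' (Set.Icc (0:ℝ) R))
    (hconc : ∀ ρ ∈ Set.Icc (0:ℝ) R, -B ≤ f'' ρ ∧ f'' ρ ≤ -β)
    (hvd : ∀ ρ ∈ Set.Icc (0:ℝ) R, HasDerivAt v (v' ρ) ρ)
    (hv'neg : ∀ ρ ∈ Set.Ioo (0:ℝ) R, v' ρ < 0)
    (hvnn : ∀ ρ ∈ Set.Icc (0:ℝ) R, 0 ≤ v ρ)
    (hV : V = v 0)
    (rt : ℝ → ℝ)
    (hrt : ∀ u ∈ Set.Icc (0:ℝ) V, rt u ∈ Set.Icc (0:ℝ) (α * R) ∧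
      HasDerivAt (fun x => α * f (x / α)) u (rt u))
    (rc rh : ℝ → ℝ)
    (hrc : ∀ u ∈ Set.Icc (0:ℝ) V, IsLeast
      {ρ : ℝ | ρ ∈ Set.Icc (0:ℝ) R ∧ f ρ = α * f (rt u / α) + u * (ρ - rt u)} (rc u))
    (hrh : ∀ u ∈ Set.Icc (0:ℝ) V, IsGreatest
      {ρ : ℝ | ρ ∈ Set.Icc (0:ℝ) R ∧ f ρ = α * f (rt u / α) + u * (ρ - rt u)} (rh u))
    :
    ∀ um ∈ Set.Icc (0:ℝ) V, ∀ up ∈ Set.Icc (0:ℝ) V,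
      up < um → um < V → rh um ≤ rc up → um - up ≥ (β / 2) * (rh um - rc um) := by
  intro um hum up hup hltu humV hle
  have hconc' : ∀ ρ ∈ Set.Icc (0:ℝ) R, f'' ρ ≤ -β := fun ρ hρ => (hconc ρ hρ).2
  have hα0 : (0:ℝ) < α := hα.1
  have hAm := hrc um hum
  have hBm := hrh um hum
  have hCp := hrc up hup
  set a := rc um with ha
  set b := rh um with hb
  set c := rc up with hc
  have haS := hAm.1
  have hbS := hBm.1
  have hcS := hCp.1
  have haI : a ∈ Set.Icc (0:ℝ) R := haS.1
  have hbI : b ∈ Set.Icc (0:ℝ) R := hbS.1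
  have hcI : c ∈ Set.Icc (0:ℝ) R := hcS.1
  have hab : a ≤ b := hBm.2 hAm.1
  rcases eq_or_lt_of_le hab with heq | hlt
  · rw [← heq]; simp; linarith
  -- main case a < b
  have hc0 : 0 < c := lt_of_lt_of_le (lt_of_le_of_lt haI.1 hlt) hle
  -- um ≥ f' b + β/2 (b - a)
  have hfab : f b - f a = um * (b - a) := by
    have h1 := haS.2
    have h2 := hbS.2
    rw [h1, h2]; ring
  have htaylor := lemB R β f f' f'' hfd1 hfd2 hconc' haI hbI hab
  have hum_ge : um ≥ f' b + (β/2) * (b - a) := by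
    have hba : 0 < b - a := by linarith
    rw [ge_iff_le, ← sub_nonneg]
    have key : (um - (f' b + (β/2) * (b - a))) * (b - a) ≥ 0 := by
      nlinarith [htaylor, hfab, sq_nonneg (a - b)]
    by_contra hcon
    push_neg at hcon
    nlinarith [key, hba]
  -- up ≤ f' c
  have hup_le : up ≤ f' c := by
    set r := rt up with hr
    obtain ⟨hrI, hrd⟩ := hrt up hup
    set y := r / α with hy
    have hyI : y ∈ Set.Icc (0:ℝ) R := by
      constructor
      · exact div_nonneg hrI.1 hα0.le
      · rw [hy, div_le_iff₀ hα0]; linarith [hrI.2]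
    -- up = f' y
    have hchain : HasDerivAt (fun x => α * f (x / α)) (f' y) r := by
      have h1 : HasDerivAt (fun x : ℝ => x / α) (1 / α) r := by
        simpa using (hasDerivAt_id r).div_const α
      have h2 : HasDerivAt (fun x : ℝ => f (x / α)) (f' y * (1 / α)) r :=
        HasDerivAt.comp r (hfd1 y hyI) h1
      have h3 := h2.const_mul α
      refine h3.congr_deriv ?_
      field_simp
    have hupy : up = f' y := hrd.unique hchain
    -- g := line minus f, nonneg on [0, c]
    set g : ℝ → ℝ := fun ρ => α * f y + up * (ρ - r) - f ρ with hg
    have hgc : g c = 0 := by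
      have := hcS.2
      simp only [hg]
      linarith [this]
    have hg0 : 0 < g 0 := by
      have htan := lemB R β f f' f'' hfd1 hfd2 hconc' (Set.left_mem_Icc.mpr hR.le) hyI hyI.1
      have hzero : f 0 = 0 := hf0
      have hray : α * y = r := by rw [hy]; field_simp
      have hg0' : 0 ≤ g 0 := by
        simp only [hg, hzero]
        have h1 : 0 ≤ f y - f' y * y := by nlinarith [sq_nonneg y, htan]
        have h2 : 0 ≤ α * (f y - f' y * y) := mul_nonneg hα0.le h1
        have h3 : α * f y - up * r = α * (f y - f' y * y) := by
          rw [← hray, hupy]; ring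
        linarith [h2, h3]
      rcases eq_or_lt_of_le hg0' with he | hl
      · exfalso
        have h0S : (0:ℝ) ∈ {ρ : ℝ | ρ ∈ Set.Icc (0:ℝ) R ∧
            f ρ = α * f (rt up / α) + up * (ρ - rt up)} := by
          constructor
          · exact Set.left_mem_Icc.mpr hR.le
          · rw [hf0]
            simp only [hg] at he
            rw [← hr, ← hy]
            linarith [he, hf0]
        have := hCp.2 h0S
        linarith [hc0]
      · exact hl
    have hfcont : ContinuousOn f (Set.Icc (0:ℝ) R) :=
      fun s hs => (hfd1 s hs).continuousAt.continuousWithinAt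
    have hgcont : ContinuousOn g (Set.Icc (0:ℝ) R) := by
      apply ContinuousOn.sub _ hfcont
      fun_prop
    have hgnn : ∀ ρ ∈ Set.Icc (0:ℝ) c, 0 ≤ g ρ := by
      intro ρ hρ
      by_contra hneg
      push_neg at hneg
      have hρI : ρ ∈ Set.Icc (0:ℝ) R := ⟨hρ.1, le_trans hρ.2 hcI.2⟩
      have hsub2 : Set.Icc (0:ℝ) ρ ⊆ Set.Icc (0:ℝ) R := Set.Icc_subset_Icc le_rfl hρI.2
      have hIVT := intermediate_value_Icc' hρ.1 (hgcont.mono hsub2)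
      have h0mem : (0:ℝ) ∈ Set.Icc (g ρ) (g 0) := ⟨hneg.le, hg0.le⟩
      obtain ⟨z, hzmem, hz0⟩ := hIVT h0mem
      have hzS : z ∈ {ρ : ℝ | ρ ∈ Set.Icc (0:ℝ) R ∧
          f ρ = α * f (rt up / α) + up * (ρ - rt up)} := by
        constructor
        · exact hsub2 hzmem
        · simp only [hg] at hz0
          rw [← hr, ← hy]
          linarith [hz0]
      have hcz := hCp.2 hzS
      have : z ≤ ρ := hzmem.2
      have hzc : z = c := le_antisymm (le_trans this hρ.2) hcz
      -- then ρ between z = c and c, so ρ = c, but g ρ < 0 = g c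
      have : ρ = c := le_antisymm hρ.2 (hzc ▸ this)
      rw [this, hgc] at hneg
      exact lt_irrefl 0 hneg
    -- derivative of g at c
    have hgd : HasDerivAt g (up - f' c) c := by
      have hL : HasDerivAt (fun ρ : ℝ => α * f y + up * (ρ - r)) up c := by
        simpa using (((hasDerivAt_id c).sub_const r).const_mul up).const_add (α * f y)
      exact hL.sub (hfd1 c hcI)
    -- one-sided derivative at right endpoint min
    have hdiff : Set.Iio c \ {c} = Set.Iio c := Set.diff_singleton_eq_self (by simp)
    have hslope : Filter.Tendsto (slope g c) (nhdsWithin c (Set.Iio c))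
        (nhds (up - f' c)) := by
      have := (hgd.hasDerivWithinAt (s := Set.Iio c))
      rw [hasDerivWithinAt_iff_tendsto_slope, hdiff] at this
      exact this
    have hev : ∀ᶠ ρ in nhdsWithin c (Set.Iio c), slope g c ρ ≤ 0 := by
      have hmem : Set.Ioi (0:ℝ) ∈ nhdsWithin c (Set.Iio c) :=
        nhdsWithin_le_nhds (Ioi_mem_nhds hc0)
      filter_upwards [hmem, self_mem_nhdsWithin] with ρ hρ1 hρ2
      have hρc : ρ < c := hρ2
      have hgρ : 0 ≤ g ρ := hgnn ρ ⟨le_of_lt hρ1, hρc.le⟩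
      rw [slope_def_field]
      exact div_nonpos_of_nonneg_of_nonpos (by rw [hgc]; linarith) (by linarith)
    have hfinal : up - f' c ≤ 0 := le_of_tendsto hslope hev
    linarith
  -- f' c ≤ f' b
  have hfcb : f' c ≤ f' b := by
    have := lemA R β f' f'' hfd2 hconc' hbI hcI hle
    nlinarith [this, mul_nonneg hβ.le (sub_nonneg.mpr hle)]
  linarith [hum_ge, hup_le, hfcb]
end
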